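/- arXiv:1508.07515 — 4 statements merged into one kernel-verified Lean document; each statement's English description precedes it below -/
import Mathlib

section
/- The number of centrosymmetric 321-avoiding involutions in the symmetric group S_{2n} is exactly 2^n. -/
open Finset Polynomial
open scoped Classical

/-- 1-based value of a permutation of `Fin m`: `pval π i = π(i)` for `1 ≤ i ≤ m`. -/
def pval {m : ℕ} (π : Equiv.Perm (Fin m)) (i : ℕ) : ℕ :=
  if h : i - 1 < m then (π ⟨i - 1, h⟩ : ℕ) + 1 else 0

/-- `π` is centrosymmetric: `π(i) + π(m+1-i) = m+1` for all `1 ≤ i ≤ m`. -/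
def Centro {m : ℕ} (π : Equiv.Perm (Fin m)) : Prop :=
  ∀ i ∈ Finset.Icc 1 m, pval π i + pval π (m + 1 - i) = m + 1

/-- `π` avoids the pattern 321: no decreasing subsequence of length 3. -/
def Avoids321 {m : ℕ} (π : Equiv.Perm (Fin m)) : Prop :=
  ¬ ∃ i j k : Fin m, i < j ∧ j < k ∧ π k < π j ∧ π j < π i

/-- The descent set of `π`: positions `1 ≤ i < m` with `π(i) > π(i+1)`. -/
def DesSet {m : ℕ} (π : Equiv.Perm (Fin m)) : Finset ℕ :=
  (Finset.Ico 1 m).filter (fun i => pval π (i + 1) < pval π i)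

/-- The number of descents of `π`. -/
def desNum {m : ℕ} (π : Equiv.Perm (Fin m)) : ℕ := (DesSet π).card

/-- The major index of `π`: the sum of the descent positions. -/
def majStat {m : ℕ} (π : Equiv.Perm (Fin m)) : ℕ := ∑ i ∈ DesSet π, i

/-- The excedances of `π ∈ S_{2n}` among positions `1,…,n`. -/
def Epi {n : ℕ} (π : Equiv.Perm (Fin (2 * n))) : Finset ℕ :=
  (Finset.Icc 1 n).filter (fun i => i < pval π i)

/-- The set `I^C_{2n}(321)` of 321-avoiding centrosymmetric involutions of `S_{2n}`. -/
noncomputable def ICset (n : ℕ) : Finset (Equiv.Perm (Fin (2 * n))) :=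
  Finset.univ.filter (fun π => Function.Involutive π ∧ Centro π ∧ Avoids321 π)


/-- Balance of the first `x` positions of the word determined by `S`. -/
def bal (S : Finset ℕ) : ℕ → ℕ
  | 0 => 0
  | x+1 => if x+1 ∈ S then bal S x + 1 else bal S x - 1

/-- Position `x` (0-based) is an opener. -/
def uPos (n : ℕ) (S : Finset ℕ) (x : ℕ) : Prop :=
  if x < n then x+1 ∈ S else 2*n-x ∉ S ∧ 0 < bal S (2*n-1-x)

/-- Position `x` (0-based) is a closer. -/
def dPos (n : ℕ) (S : Finset ℕ) (x : ℕ) : Prop :=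
  if x < n then x+1 ∉ S ∧ 0 < bal S x else 2*n-x ∈ S

noncomputable def oc (n : ℕ) (S : Finset ℕ) (p : ℕ) : ℕ :=
  ((Finset.range p).filter (uPos n S)).card

noncomputable def dc (n : ℕ) (S : Finset ℕ) (p : ℕ) : ℕ :=
  ((Finset.range p).filter (dPos n S)).card

def B (n : ℕ) (S : Finset ℕ) (p : ℕ) : ℕ := if p ≤ n then bal S p else bal S (2*n - p)

lemma cnt_succ (P : ℕ → Prop) (p : ℕ) :
    ((Finset.range (p+1)).filter P).card
      = ((Finset.range p).filter P).card + if P p then 1 else 0 := by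
  rw [Finset.range_add_one, Finset.filter_insert]
  split
  · rw [Finset.card_insert_of_notMem (by simp)]
  · simp

lemma B_eq_of_le {n p : ℕ} (S : Finset ℕ) (h : n ≤ p) : B n S p = bal S (2*n - p) := by
  unfold B
  split
  · have : p = n := le_antisymm ‹p ≤ n› h
    subst this; congr 1; omega
  · rfl

lemma not_uPos_dPos {n : ℕ} {S : Finset ℕ} {x : ℕ} (hu : uPos n S x) (hd : dPos n S x) :
    False := by
  simp only [uPos, dPos] at hu hd
  rcases lt_or_ge x n with h | h
  · rw [if_pos h] at hu hd; exact hd.1 hu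
  · rw [if_neg (by omega)] at hu hd; exact hu.1 hd

lemma uPos_flip {n : ℕ} {S : Finset ℕ} {x : ℕ} (hx : x < 2*n) :
    uPos n S (2*n-1-x) ↔ dPos n S x := by
  simp only [uPos, dPos]
  rcases lt_or_ge x n with h | h
  · rw [if_neg (by omega), if_pos h]
    have h1 : 2*n - (2*n-1-x) = x + 1 := by omega
    have h2 : 2*n - 1 - (2*n-1-x) = x := by omega
    rw [h1, h2]
  · rw [if_pos (by omega), if_neg (by omega)]
    have h1 : 2*n - 1 - x + 1 = 2*n - x := by omega
    rw [h1]

lemma count_eq (n : ℕ) (S : Finset ℕ) : ∀ p, p ≤ 2*n → oc n S p = dc n S p + B n S p := by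
  intro p
  induction p with
  | zero => intro _; simp [oc, dc, B, bal]
  | succ p ih =>
    intro hp
    have hp' : p ≤ 2*n := by omega
    have IH := ih hp'
    have ho : oc n S (p+1) = oc n S p + if uPos n S p then 1 else 0 := cnt_succ _ p
    have hd : dc n S (p+1) = dc n S p + if dPos n S p then 1 else 0 := cnt_succ _ p
    rcases lt_or_ge p n with h | h
    · -- first half
      have hBp : B n S p = bal S p := by unfold B; rw [if_pos (by omega)]
      have hBp1 : B n S (p+1) = bal S (p+1) := by unfold B; rw [if_pos (by omega)]
      have hbal : bal S (p+1) = if p+1 ∈ S then bal S p + 1 else bal S p - 1 := rfl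
      by_cases hs : p+1 ∈ S
      · have hu : uPos n S p := by unfold uPos; rw [if_pos h]; exact hs
        have hdn : ¬ dPos n S p := by unfold dPos; rw [if_pos h]; tauto
        rw [ho, hd, if_pos hu, if_neg hdn, hBp1, hbal, if_pos hs]
        omega
      · by_cases hb : 0 < bal S p
        · have hu : ¬ uPos n S p := by unfold uPos; rw [if_pos h]; exact hs
          have hdn : dPos n S p := by unfold dPos; rw [if_pos h]; exact ⟨hs, hb⟩
          rw [ho, hd, if_neg hu, if_pos hdn, hBp1, hbal, if_neg hs]
          omega
        · have hu : ¬ uPos n S p := by unfold uPos; rw [if_pos h]; exact hs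
          have hdn : ¬ dPos n S p := by unfold dPos; rw [if_pos h]; tauto
          rw [ho, hd, if_neg hu, if_neg hdn, hBp1, hbal, if_neg hs]
          omega
    · -- second half
      set q := 2*n - 1 - p with hq
      have hq1 : 2*n - p = q + 1 := by omega
      have hq2 : 2*n - (p+1) = q := by omega
      have hBp : B n S p = bal S (q+1) := by rw [B_eq_of_le S h, hq1]
      have hBp1 : B n S (p+1) = bal S q := by rw [B_eq_of_le S (by omega), hq2]
      have hbal : bal S (q+1) = if q+1 ∈ S then bal S q + 1 else bal S q - 1 := rfl
      have hup : uPos n S p ↔ (q+1 ∉ S ∧ 0 < bal S q) := by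
        unfold uPos; rw [if_neg (by omega), hq1]
      have hdp : dPos n S p ↔ q+1 ∈ S := by
        unfold dPos; rw [if_neg (by omega), hq1]
      by_cases hs : q+1 ∈ S
      · rw [ho, hd, if_neg (by rw [hup]; tauto), if_pos (hdp.2 hs), hBp1]
        rw [hBp, hbal, if_pos hs] at IH
        omega
      · by_cases hb : 0 < bal S q
        · rw [ho, hd, if_pos (hup.2 ⟨hs, hb⟩), if_neg (by rw [hdp]; exact hs), hBp1]
          rw [hBp, hbal, if_neg hs] at IH
          omega
        · rw [ho, hd, if_neg (by rw [hup]; tauto), if_neg (by rw [hdp]; exact hs), hBp1]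
          rw [hBp, hbal, if_neg hs] at IH
          omega

lemma B_pos_of_dPos {n : ℕ} {S : Finset ℕ} {x : ℕ} (hx : x < 2*n) (hd : dPos n S x) :
    0 < B n S x := by
  unfold dPos at hd
  rcases lt_or_ge x n with h | h
  · rw [if_pos h] at hd
    unfold B; rw [if_pos (by omega)]; exact hd.2
  · rw [if_neg (by omega)] at hd
    rw [B_eq_of_le S h]
    have h1 : 2*n - x = (2*n - 1 - x) + 1 := by omega
    rw [h1]
    show 0 < bal S _
    rw [show bal S ((2*n-1-x)+1) = if (2*n-1-x)+1 ∈ S then bal S (2*n-1-x) + 1 else bal S (2*n-1-x) - 1 from rfl]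
    rw [if_pos (by rwa [← h1])]
    omega

lemma B_eq_zero_of_fPos {n : ℕ} {S : Finset ℕ} {x : ℕ} (hx : x < 2*n)
    (hu : ¬ uPos n S x) (hd : ¬ dPos n S x) : B n S x = 0 := by
  unfold uPos at hu; unfold dPos at hd
  rcases lt_or_ge x n with h | h
  · rw [if_pos h] at hu hd
    unfold B; rw [if_pos (by omega)]
    by_cases hs : x+1 ∈ S
    · exact absurd hs hu
    · rcases Nat.eq_zero_or_pos (bal S x) with h0 | h0
      · exact h0
      · exact absurd ⟨hs, h0⟩ hd
  · rw [if_neg (by omega)] at hu hd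
    rw [B_eq_of_le S h]
    have h1 : 2*n - x = (2*n - 1 - x) + 1 := by omega
    rw [h1]
    show bal S _ = 0
    rw [show bal S ((2*n-1-x)+1) = if (2*n-1-x)+1 ∈ S then bal S (2*n-1-x) + 1 else bal S (2*n-1-x) - 1 from rfl]
    rw [if_neg (by rwa [← h1])]
    rcases Nat.eq_zero_or_pos (bal S (2*n-1-x)) with h0 | h0
    · omega
    · exact absurd ⟨hd, h0⟩ hu

section Matching

variable {m k : ℕ}

/-- rank of `x` in `A`: number of elements of `A` below `x`. -/
noncomputable def rk (A : Finset (Fin m)) (x : Fin m) : ℕ := (A.filter (· < x)).card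

lemma rk_mono (A : Finset (Fin m)) {x y : Fin m} (h : x ≤ y) : rk A x ≤ rk A y := by
  apply Finset.card_le_card
  intro a ha
  simp only [Finset.mem_filter] at ha ⊢
  exact ⟨ha.1, lt_of_lt_of_le ha.2 h⟩

lemma rk_lt_of_mem {A : Finset (Fin m)} {x y : Fin m} (hx : x ∈ A) (h : x < y) :
    rk A x < rk A y := by
  apply Finset.card_lt_card
  constructor
  · intro a ha
    simp only [Finset.mem_filter] at ha ⊢
    exact ⟨ha.1, lt_trans ha.2 h⟩
  · intro hsub
    have : x ∈ A.filter (· < y) := by simp [hx, h]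
    have := hsub this
    simp at this

lemma rk_orderIso (A : Finset (Fin m)) (hA : A.card = k) (j : Fin k) :
    rk A ((A.orderIsoOfFin hA j : Fin m)) = j := by
  unfold rk
  have himg : A.filter (· < (A.orderIsoOfFin hA j : Fin m))
      = (Finset.univ.filter (fun t : Fin k => t < j)).image
          (fun t => (A.orderIsoOfFin hA t : Fin m)) := by
    ext x
    simp only [Finset.mem_filter, Finset.mem_image, Finset.mem_univ, true_and]
    constructor
    · rintro ⟨hxA, hlt⟩
      refine ⟨(A.orderIsoOfFin hA).symm ⟨x, hxA⟩, ?_, by simp⟩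
      have : ((A.orderIsoOfFin hA) ((A.orderIsoOfFin hA).symm ⟨x, hxA⟩) : Fin m) < ((A.orderIsoOfFin hA) j : Fin m) := by
        simpa using hlt
      rw [← (A.orderIsoOfFin hA).lt_iff_lt]
      exact_mod_cast this
    · rintro ⟨t, ht, rfl⟩
      refine ⟨(A.orderIsoOfFin hA t).2, ?_⟩
      exact_mod_cast (A.orderIsoOfFin hA).lt_iff_lt.2 ht
  rw [himg, Finset.card_image_of_injective _ (fun a b hab => by
    have : (A.orderIsoOfFin hA a) = (A.orderIsoOfFin hA b) := Subtype.ext hab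
    exact (A.orderIsoOfFin hA).injective this)]
  have : Finset.univ.filter (fun t : Fin k => t < j) = Finset.Iio j := by
    ext t; simp
  rw [this, Fin.card_Iio]

lemma rk_eq_symm (A : Finset (Fin m)) (hA : A.card = k) {x : Fin m} (hx : x ∈ A) :
    rk A x = ((A.orderIsoOfFin hA).symm ⟨x, hx⟩ : Fin k) := by
  have := rk_orderIso A hA ((A.orderIsoOfFin hA).symm ⟨x, hx⟩)
  simpa using this

lemma rk_inj (A : Finset (Fin m)) (hA : A.card = k) {x y : Fin m}
    (hx : x ∈ A) (hy : y ∈ A) (h : rk A x = rk A y) : x = y := by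
  rw [rk_eq_symm A hA hx, rk_eq_symm A hA hy] at h
  have h2 : (A.orderIsoOfFin hA).symm ⟨x, hx⟩ = (A.orderIsoOfFin hA).symm ⟨y, hy⟩ :=
    Fin.ext h
  have := (A.orderIsoOfFin hA).symm.injective h2
  exact congrArg Subtype.val this

/-- The involution matching `O` to `C` order-preservingly. -/
noncomputable def pairFun (O C : Finset (Fin m)) (hO : O.card = k) (hC : C.card = k) :
    Fin m → Fin m := fun i =>
  if h : i ∈ O then ((C.orderIsoOfFin hC ((O.orderIsoOfFin hO).symm ⟨i, h⟩)) : Fin m)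
  else if h : i ∈ C then ((O.orderIsoOfFin hO ((C.orderIsoOfFin hC).symm ⟨i, h⟩)) : Fin m)
  else i

variable {O C : Finset (Fin m)} {hO : O.card = k} {hC : C.card = k}

lemma pairFun_of_mem_O {i : Fin m} (h : i ∈ O) :
    pairFun O C hO hC i = ((C.orderIsoOfFin hC ((O.orderIsoOfFin hO).symm ⟨i, h⟩)) : Fin m) :=
  dif_pos h

lemma pairFun_of_mem_C (hdisj : ∀ x, ¬(x ∈ O ∧ x ∈ C)) {i : Fin m} (h : i ∈ C) :
    pairFun O C hO hC i = ((O.orderIsoOfFin hO ((C.orderIsoOfFin hC).symm ⟨i, h⟩)) : Fin m) := by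
  unfold pairFun
  rw [dif_neg (fun hO' => hdisj i ⟨hO', h⟩), dif_pos h]

lemma pairFun_of_not_mem {i : Fin m} (h1 : i ∉ O) (h2 : i ∉ C) :
    pairFun O C hO hC i = i := by
  unfold pairFun
  rw [dif_neg h1, dif_neg h2]

lemma pairFun_mem_C_of_mem_O {i : Fin m} (h : i ∈ O) :
    pairFun O C hO hC i ∈ C := by
  rw [pairFun_of_mem_O h]
  exact (C.orderIsoOfFin hC _).2

lemma pairFun_mem_O_of_mem_C (hdisj : ∀ x, ¬(x ∈ O ∧ x ∈ C)) {i : Fin m} (h : i ∈ C) :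
    pairFun O C hO hC i ∈ O := by
  rw [pairFun_of_mem_C hdisj h]
  exact (O.orderIsoOfFin hO _).2

lemma pairFun_involutive (hdisj : ∀ x, ¬(x ∈ O ∧ x ∈ C)) :
    Function.Involutive (pairFun O C hO hC) := by
  intro i
  by_cases h : i ∈ O
  · have hc : pairFun O C hO hC i ∈ C := pairFun_mem_C_of_mem_O h
    rw [pairFun_of_mem_C hdisj hc]
    have : (⟨pairFun O C hO hC i, hc⟩ : {x // x ∈ C}) = C.orderIsoOfFin hC ((O.orderIsoOfFin hO).symm ⟨i, h⟩) := by
      apply Subtype.ext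
      simp [pairFun_of_mem_O h]
    rw [this]
    simp
  · by_cases h2 : i ∈ C
    · have ho : pairFun O C hO hC i ∈ O := pairFun_mem_O_of_mem_C hdisj h2
      rw [pairFun_of_mem_O ho]
      have : (⟨pairFun O C hO hC i, ho⟩ : {x // x ∈ O}) = O.orderIsoOfFin hO ((C.orderIsoOfFin hC).symm ⟨i, h2⟩) := by
        apply Subtype.ext
        simp [pairFun_of_mem_C hdisj h2]
      rw [this]
      simp
    · rw [pairFun_of_not_mem h h2, pairFun_of_not_mem h h2]

lemma rk_pairFun_O {i : Fin m} (h : i ∈ O) :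
    rk C (pairFun O C hO hC i) = rk O i := by
  rw [pairFun_of_mem_O h, rk_orderIso C hC, rk_eq_symm O hO h]

lemma rk_pairFun_C (hdisj : ∀ x, ¬(x ∈ O ∧ x ∈ C)) {i : Fin m} (h : i ∈ C) :
    rk O (pairFun O C hO hC i) = rk C i := by
  rw [pairFun_of_mem_C hdisj h, rk_orderIso O hO, rk_eq_symm C hC h]

lemma pairFun_strictMonoOn {i j : Fin m} (hi : i ∈ O) (hj : j ∈ O) (h : i < j) :
    pairFun O C hO hC i < pairFun O C hO hC j := by
  rw [pairFun_of_mem_O hi, pairFun_of_mem_O hj]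
  have h1 : (O.orderIsoOfFin hO).symm ⟨i, hi⟩ < (O.orderIsoOfFin hO).symm ⟨j, hj⟩ := by
    rw [(O.orderIsoOfFin hO).symm.lt_iff_lt]
    exact h
  exact_mod_cast (C.orderIsoOfFin hC).lt_iff_lt.2 h1

/-- Uniqueness: an involution fixing everything outside `O ∪ C`, mapping `O` into `C`
strictly monotonically, is unique. -/
lemma perm_unique (hO : O.card = k) (hC : C.card = k) (hdisj : ∀ x, ¬(x ∈ O ∧ x ∈ C))
    (π σ : Equiv.Perm (Fin m))
    (hπ1 : Function.Involutive π) (hσ1 : Function.Involutive σ)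
    (hπ2 : ∀ i, i ∉ O → i ∉ C → π i = i) (hσ2 : ∀ i, i ∉ O → i ∉ C → σ i = i)
    (hπ3 : ∀ i ∈ O, π i ∈ C) (hσ3 : ∀ i ∈ O, σ i ∈ C)
    (hπ4 : ∀ i j, i ∈ O → j ∈ O → i < j → π i < π j)
    (hσ4 : ∀ i j, i ∈ O → j ∈ O → i < j → σ i < σ j) :
    π = σ := by
  -- the images of O under π and σ are both C
  have key : ∀ (τ : Equiv.Perm (Fin m)), (∀ i ∈ O, τ i ∈ C) →
      O.image (fun i => τ i) = C := by
    intro τ hτ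
    apply Finset.eq_of_subset_of_card_le
    · intro x hx
      simp only [Finset.mem_image] at hx
      obtain ⟨i, hi, rfl⟩ := hx
      exact hτ i hi
    · rw [Finset.card_image_of_injective _ τ.injective, hO, hC]
  have hπO : O.image (fun i => π i) = C := key π hπ3
  have hσO : O.image (fun i => σ i) = C := key σ hσ3
  -- equality on O via strict monotone uniqueness
  have eqO : ∀ i ∈ O, π i = σ i := by
    set eO := O.orderIsoOfFin hO with heO
    have hf : StrictMono (fun j : Fin k => π (eO j : Fin m)) := by
      intro a b hab
      exact hπ4 _ _ (eO a).2 (eO b).2 (by exact_mod_cast eO.lt_iff_lt.2 hab)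
    have hg : StrictMono (fun j : Fin k => σ (eO j : Fin m)) := by
      intro a b hab
      exact hσ4 _ _ (eO a).2 (eO b).2 (by exact_mod_cast eO.lt_iff_lt.2 hab)
    have hrange : Set.range (fun j : Fin k => π (eO j : Fin m))
        = Set.range (fun j : Fin k => σ (eO j : Fin m)) := by
      have h1 : ∀ (τ : Equiv.Perm (Fin m)), (∀ i ∈ O, τ i ∈ C) →
          Set.range (fun j : Fin k => τ (eO j : Fin m)) = (C : Set (Fin m)) := by
        intro τ hτ
        apply Set.Subset.antisymm
        · rintro x ⟨j, rfl⟩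
          exact hτ _ (eO j).2
        · intro x hx
          have : x ∈ O.image (fun i => τ i) := by rw [key τ hτ]; exact_mod_cast hx
          simp only [Finset.mem_image] at this
          obtain ⟨i, hi, rfl⟩ := this
          exact ⟨eO.symm ⟨i, hi⟩, by simp⟩
      rw [h1 π hπ3, h1 σ hσ3]
    have := (hf.range_inj hg).1 hrange
    intro i hi
    have h2 := congrFun this (eO.symm ⟨i, hi⟩)
    simpa using h2
  -- equality everywhere
  apply Equiv.ext
  intro i
  by_cases hi : i ∈ O
  · exact eqO i hi
  · by_cases hi2 : i ∈ C
    · -- i ∈ C : write i = π o for some o ∈ O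
      have : i ∈ O.image (fun x => π x) := by rw [hπO]; exact hi2
      simp only [Finset.mem_image] at this
      obtain ⟨o, ho, hoi⟩ := this
      have hπi : π i = o := by rw [← hoi, hπ1 o]
      have hσo : σ o = i := by rw [← eqO o ho, hoi]
      rw [hπi, ← hσ1 o, hσo]
    · rw [hπ2 i hi hi2, hσ2 i hi hi2]

/-- counting lemma relating Fin-level rank to ℕ-level counts -/
lemma rk_eq_cnt (P : ℕ → Prop) (x : Fin m) :
    rk (Finset.univ.filter (fun i : Fin m => P i.val)) x
      = ((Finset.range x.val).filter P).card := by
  unfold rk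
  apply Finset.card_bij (fun i _ => i.val)
  · intro a ha
    simp only [Finset.mem_filter, Finset.mem_univ, true_and, Finset.mem_range] at ha ⊢
    exact ⟨ha.2, ha.1⟩
  · intro a _ b _ hab
    exact Fin.ext hab
  · intro b hb
    simp only [Finset.mem_filter, Finset.mem_range] at hb
    have hbm : b < m := lt_trans hb.1 x.isLt
    refine ⟨⟨b, hbm⟩, ?_, rfl⟩
    simp only [Finset.mem_filter, Finset.mem_univ, true_and]
    exact ⟨hb.2, by simpa [Fin.lt_def] using hb.1⟩

/-- counting: elements of `A` below `rev y` vs elements of `B` below `y`, when `rev`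
swaps `A` and `B`. -/
lemma rk_rev (A Bs : Finset (Fin m)) (hAB : ∀ x : Fin m, x ∈ A ↔ x.rev ∈ Bs)
    (hA : A.card = k) (hB : Bs.card = k) {y : Fin m} (hy : y ∈ Bs) :
    rk A y.rev = k - 1 - rk Bs y := by
  have h1 : A.filter (· < y.rev) = (Bs.filter (fun z => y < z)).image Fin.rev := by
    ext x
    simp only [Finset.mem_filter, Finset.mem_image]
    constructor
    · rintro ⟨hxA, hlt⟩
      refine ⟨x.rev, ⟨(hAB x).1 hxA, ?_⟩, by simp⟩
      rw [← Fin.rev_lt_rev, Fin.rev_rev]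
      exact hlt
    · rintro ⟨z, ⟨hz, hyz⟩, rfl⟩
      constructor
      · exact (hAB _).2 (by rw [Fin.rev_rev]; exact hz)
      · exact Fin.rev_lt_rev.mpr hyz
  unfold rk
  rw [h1, Finset.card_image_of_injective _ Fin.rev_injective]
  -- partition of Bs by comparison with y
  have hd1 : Disjoint (Bs.filter (· < y)) (Bs.filter (fun z => y < z)) := by
    rw [Finset.disjoint_left]
    intro a ha hb
    simp only [Finset.mem_filter] at ha hb
    exact absurd hb.2 (not_lt.2 (le_of_lt ha.2))
  have hd2 : Disjoint (Bs.filter (· < y) ∪ Bs.filter (fun z => y < z)) ({y} : Finset (Fin m)) := by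
    rw [Finset.disjoint_right]
    intro a ha
    simp only [Finset.mem_singleton] at ha
    subst ha
    simp only [Finset.mem_union, Finset.mem_filter]
    rintro (⟨_, h⟩ | ⟨_, h⟩) <;> exact lt_irrefl _ h
  have hpart : Bs = (Bs.filter (· < y) ∪ Bs.filter (fun z => y < z)) ∪ {y} := by
    ext z
    simp only [Finset.mem_union, Finset.mem_filter, Finset.mem_singleton]
    constructor
    · intro hz
      rcases lt_trichotomy z y with h | h | h
      · exact Or.inl (Or.inl ⟨hz, h⟩)
      · exact Or.inr h
      · exact Or.inl (Or.inr ⟨hz, h⟩)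
    · rintro ((⟨hz, _⟩ | ⟨hz, _⟩) | rfl)
      · exact hz
      · exact hz
      · exact hy
  have h2 : (Bs.filter (· < y)).card + (Bs.filter (fun z => y < z)).card + 1 = k := by
    have hc := congrArg Finset.card hpart
    rw [Finset.card_union_of_disjoint hd2, Finset.card_union_of_disjoint hd1,
      Finset.card_singleton, hB] at hc
    omega
  omega

end Matching

section Construction

variable (n : ℕ) (S : Finset ℕ)

noncomputable def Oset : Finset (Fin (2*n)) :=
  Finset.univ.filter (fun i : Fin (2*n) => uPos n S i.val)

noncomputable def Cset : Finset (Fin (2*n)) :=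
  Finset.univ.filter (fun i : Fin (2*n) => dPos n S i.val)

lemma cardBridge {M : ℕ} (P : ℕ → Prop) :
    (Finset.univ.filter (fun i : Fin M => P i.val)).card = ((Finset.range M).filter P).card := by
  apply Finset.card_bij (fun i _ => i.val)
  · intro a ha
    simp only [Finset.mem_filter, Finset.mem_univ, true_and, Finset.mem_range] at ha ⊢
    exact ⟨a.isLt, ha⟩
  · intro a _ b _ hab
    exact Fin.ext hab
  · intro b hb
    simp only [Finset.mem_filter, Finset.mem_range] at hb
    refine ⟨⟨b, hb.1⟩, ?_, rfl⟩
    simp only [Finset.mem_filter, Finset.mem_univ, true_and]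
    exact hb.2

lemma cnt_mono (P : ℕ → Prop) {p q : ℕ} (h : p ≤ q) :
    ((Finset.range p).filter P).card ≤ ((Finset.range q).filter P).card :=
  Finset.card_le_card (Finset.filter_subset_filter _ (Finset.range_subset_range.2 h))

lemma B_two_n : B n S (2*n) = 0 := by
  unfold B
  split
  · have hn : n = 0 := by omega
    subst hn; rfl
  · have : 2*n - 2*n = 0 := by omega
    rw [this]; rfl

lemma card_Cset : (Cset n S).card = (Oset n S).card := by
  unfold Oset Cset
  rw [cardBridge, cardBridge]
  have := count_eq n S (2*n) le_rfl
  rw [B_two_n] at this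
  unfold oc dc at this
  omega

lemma OC_disj : ∀ x : Fin (2*n), ¬(x ∈ Oset n S ∧ x ∈ Cset n S) := by
  rintro x ⟨h1, h2⟩
  simp only [Oset, Cset, Finset.mem_filter, Finset.mem_univ, true_and] at h1 h2
  exact not_uPos_dPos h1 h2

lemma mem_Oset {x : Fin (2*n)} : x ∈ Oset n S ↔ uPos n S x.val := by
  simp [Oset]

lemma mem_Cset {x : Fin (2*n)} : x ∈ Cset n S ↔ dPos n S x.val := by
  simp [Cset]

/-- The candidate permutation determined by `S`. -/
noncomputable def gPerm : Equiv.Perm (Fin (2*n)) :=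
  Function.Involutive.toPerm _ (pairFun_involutive (hO := rfl) (hC := card_Cset n S) (OC_disj n S))

lemma gPerm_apply (x : Fin (2*n)) :
    gPerm n S x = pairFun (Oset n S) (Cset n S) rfl (card_Cset n S) x := rfl

lemma gPerm_involutive : Function.Involutive (gPerm n S) :=
  pairFun_involutive (OC_disj n S)

lemma rk_Oset (x : Fin (2*n)) : rk (Oset n S) x = oc n S x.val := by
  unfold Oset oc
  exact rk_eq_cnt _ x

lemma rk_Cset (x : Fin (2*n)) : rk (Cset n S) x = dc n S x.val := by
  unfold Cset dc
  exact rk_eq_cnt _ x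

lemma oc_succ_of_uPos {x : ℕ} (h : uPos n S x) : oc n S (x+1) = oc n S x + 1 := by
  unfold oc
  rw [cnt_succ, if_pos h]

/-- openers map up -/
lemma gPerm_lt_of_O {x : Fin (2*n)} (hx : x ∈ Oset n S) : x < gPerm n S x := by
  by_contra hcon
  push_neg at hcon
  set q := gPerm n S x with hq
  have hqC : q ∈ Cset n S := pairFun_mem_C_of_mem_O hx
  have hne : q ≠ x := fun h => OC_disj n S x ⟨hx, h ▸ hqC⟩
  have hlt : q < x := lt_of_le_of_ne hcon hne
  have h1 : rk (Cset n S) q = rk (Oset n S) x := rk_pairFun_O hx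
  rw [rk_Cset, rk_Oset] at h1
  have h2 := count_eq n S q.val (le_of_lt (by exact_mod_cast q.isLt))
  have h3 : 0 < B n S q.val := B_pos_of_dPos q.isLt ((mem_Cset n S).1 hqC)
  have h4 : oc n S q.val ≤ oc n S x.val := cnt_mono _ (le_of_lt hlt)
  omega

/-- closers map down -/
lemma gPerm_gt_of_C {x : Fin (2*n)} (hx : x ∈ Cset n S) : gPerm n S x < x := by
  by_contra hcon
  push_neg at hcon
  set p := gPerm n S x with hp
  have hpO : p ∈ Oset n S := pairFun_mem_O_of_mem_C (OC_disj n S) hx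
  have hne : p ≠ x := fun h => OC_disj n S x ⟨h ▸ hpO, hx⟩
  have hlt : x < p := lt_of_le_of_ne hcon (Ne.symm hne)
  have h1 : rk (Oset n S) p = rk (Cset n S) x := rk_pairFun_C (OC_disj n S) hx
  rw [rk_Cset, rk_Oset] at h1
  have h2 := count_eq n S x.val (le_of_lt (by exact_mod_cast x.isLt))
  have h3 : 0 < B n S x.val := B_pos_of_dPos x.isLt ((mem_Cset n S).1 hx)
  have h4 : oc n S x.val ≤ oc n S p.val := cnt_mono _ (le_of_lt hlt)
  omega

/-- no arc passes over a fixed position: opener side -/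
lemma gPerm_lt_fixed {x f : Fin (2*n)} (hx : x ∈ Oset n S)
    (hf1 : f ∉ Oset n S) (hf2 : f ∉ Cset n S) (hlt : x < f) : gPerm n S x < f := by
  by_contra hcon
  push_neg at hcon
  set q := gPerm n S x with hq
  have hqC : q ∈ Cset n S := pairFun_mem_C_of_mem_O hx
  have hne : q ≠ f := fun h => hf2 (h ▸ hqC)
  have hgt : f < q := lt_of_le_of_ne hcon (Ne.symm hne)
  have h1 : rk (Cset n S) q = rk (Oset n S) x := rk_pairFun_O hx
  rw [rk_Cset, rk_Oset] at h1
  have hBf : B n S f.val = 0 := B_eq_zero_of_fPos f.isLt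
    (fun h => hf1 ((mem_Oset n S).2 h)) (fun h => hf2 ((mem_Cset n S).2 h))
  have h2 := count_eq n S f.val (le_of_lt (by exact_mod_cast f.isLt))
  rw [hBf] at h2
  have h3 : dc n S f.val ≤ dc n S q.val := cnt_mono _ (le_of_lt hgt)
  have h4 : oc n S (x.val+1) ≤ oc n S f.val := cnt_mono _ (by exact_mod_cast hlt)
  have h5 : oc n S (x.val+1) = oc n S x.val + 1 :=
    oc_succ_of_uPos n S ((mem_Oset n S).1 hx)
  omega

/-- no arc passes over a fixed position: closer side -/
lemma gPerm_gt_fixed {f x : Fin (2*n)} (hx : x ∈ Cset n S)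
    (hf1 : f ∉ Oset n S) (hf2 : f ∉ Cset n S) (hlt : f < x) : f < gPerm n S x := by
  by_contra hcon
  push_neg at hcon
  set p := gPerm n S x with hp
  have hpO : p ∈ Oset n S := pairFun_mem_O_of_mem_C (OC_disj n S) hx
  have hne : p ≠ f := fun h => hf1 (h ▸ hpO)
  have hgt : p < f := lt_of_le_of_ne hcon hne
  have h1 : rk (Oset n S) p = rk (Cset n S) x := rk_pairFun_C (OC_disj n S) hx
  rw [rk_Cset, rk_Oset] at h1
  have hBf : B n S f.val = 0 := B_eq_zero_of_fPos f.isLt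
    (fun h => hf1 ((mem_Oset n S).2 h)) (fun h => hf2 ((mem_Cset n S).2 h))
  have h2 := count_eq n S f.val (le_of_lt (by exact_mod_cast f.isLt))
  rw [hBf] at h2
  have h3 : dc n S f.val ≤ dc n S x.val := cnt_mono _ (by exact_mod_cast hlt.le)
  have h4 : oc n S (p.val+1) ≤ oc n S f.val := cnt_mono _ (by exact_mod_cast hgt)
  have h5 : oc n S (p.val+1) = oc n S p.val + 1 :=
    oc_succ_of_uPos n S ((mem_Oset n S).1 hpO)
  omega

lemma rev_val {M : ℕ} (x : Fin M) : (x.rev : ℕ) = M - 1 - x.val := by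
  rw [Fin.val_rev]; omega

lemma mem_O_iff_rev_C (x : Fin (2*n)) : x ∈ Oset n S ↔ x.rev ∈ Cset n S := by
  rw [mem_Oset, mem_Cset]
  have h1 : (x.rev : ℕ) = 2*n - 1 - x.val := rev_val x
  rw [h1]
  constructor
  · intro h
    rw [← uPos_flip (show (2*n - 1 - x.val) < 2*n by omega)]
    have : 2*n - 1 - (2*n - 1 - x.val) = x.val := by
      have := x.isLt; omega
    rwa [this]
  · intro h
    have := (uPos_flip (show (2*n - 1 - x.val) < 2*n by have := x.isLt; omega)).2 h
    have heq : 2*n - 1 - (2*n - 1 - x.val) = x.val := by have := x.isLt; omega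
    rwa [heq] at this

lemma mem_C_iff_rev_O (x : Fin (2*n)) : x ∈ Cset n S ↔ x.rev ∈ Oset n S := by
  rw [mem_O_iff_rev_C n S x.rev, Fin.rev_rev]

/-- centrosymmetry of gPerm, 0-indexed -/
lemma gPerm_rev (x : Fin (2*n)) : gPerm n S x.rev = (gPerm n S x).rev := by
  have main : ∀ y : Fin (2*n), y ∈ Oset n S → gPerm n S y.rev = (gPerm n S y).rev := by
    intro y hy
    have hyC : y.rev ∈ Cset n S := (mem_O_iff_rev_C n S y).1 hy
    have h1 : gPerm n S y.rev ∈ Oset n S := pairFun_mem_O_of_mem_C (OC_disj n S) hyC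
    have h2 : (gPerm n S y).rev ∈ Oset n S := by
      rw [← mem_C_iff_rev_O]
      exact pairFun_mem_C_of_mem_O hy
    apply rk_inj (Oset n S) rfl h1 h2
    have e1 : rk (Oset n S) (gPerm n S y.rev) = rk (Cset n S) y.rev :=
      rk_pairFun_C (OC_disj n S) hyC
    have e2 : rk (Cset n S) y.rev = (Oset n S).card - 1 - rk (Oset n S) y :=
      rk_rev (Cset n S) (Oset n S) (fun z => mem_C_iff_rev_O n S z) (card_Cset n S) rfl hy
    have e3 : rk (Oset n S) ((gPerm n S y).rev)
        = (Oset n S).card - 1 - rk (Cset n S) (gPerm n S y) :=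
      rk_rev (Oset n S) (Cset n S) (fun z => mem_O_iff_rev_C n S z) rfl (card_Cset n S)
        (pairFun_mem_C_of_mem_O hy)
    have e4 : rk (Cset n S) (gPerm n S y) = rk (Oset n S) y := rk_pairFun_O hy
    rw [e1, e2, e3, e4]
  by_cases hx : x ∈ Oset n S
  · exact main x hx
  · by_cases hx2 : x ∈ Cset n S
    · have hrev : x.rev ∈ Oset n S := (mem_C_iff_rev_O n S x).1 hx2
      have := main x.rev hrev
      rw [Fin.rev_rev] at this
      rw [this, Fin.rev_rev]
    · have hr1 : x.rev ∉ Oset n S := fun h => hx2 ((mem_C_iff_rev_O n S x).2 h)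
      have hr2 : x.rev ∉ Cset n S := fun h => hx ((mem_O_iff_rev_C n S x).2 h)
      show pairFun (Oset n S) (Cset n S) rfl (card_Cset n S) x.rev = _
      rw [pairFun_of_not_mem hr1 hr2]
      have : gPerm n S x = x := pairFun_of_not_mem hx hx2
      rw [this]

/-- classification of positions for gPerm -/
lemma gPerm_fixed {x : Fin (2*n)} (h1 : x ∉ Oset n S) (h2 : x ∉ Cset n S) :
    gPerm n S x = x := pairFun_of_not_mem h1 h2

/-- any descent of gPerm goes from an opener to a closer -/
lemma gPerm_descent {a b : Fin (2*n)} (hab : a < b) (hd : gPerm n S b < gPerm n S a) :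
    a ∈ Oset n S ∧ b ∈ Cset n S := by
  by_cases haO : a ∈ Oset n S
  · refine ⟨haO, ?_⟩
    by_cases hbO : b ∈ Oset n S
    · exact absurd (pairFun_strictMonoOn haO hbO hab) (by
        intro h; exact absurd hd (not_lt.2 (le_of_lt h)))
    · by_cases hbC : b ∈ Cset n S
      · exact hbC
      · exfalso
        have := gPerm_lt_fixed n S haO hbO hbC hab
        rw [gPerm_fixed n S hbO hbC] at hd
        exact absurd hd (not_lt.2 (le_of_lt this))
  · exfalso
    by_cases haC : a ∈ Cset n S
    · have h1 : gPerm n S a < a := gPerm_gt_of_C n S haC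
      by_cases hbO : b ∈ Oset n S
      · have h2 : b < gPerm n S b := gPerm_lt_of_O n S hbO
        exact absurd hd (not_lt.2 (le_of_lt (lt_trans (lt_trans h1 hab) h2)))
      · by_cases hbC : b ∈ Cset n S
        · have h2 : rk (Cset n S) a < rk (Cset n S) b := rk_lt_of_mem haC hab
          have e1 : rk (Oset n S) (gPerm n S a) = rk (Cset n S) a :=
            rk_pairFun_C (OC_disj n S) haC
          have e2 : rk (Oset n S) (gPerm n S b) = rk (Cset n S) b :=
            rk_pairFun_C (OC_disj n S) hbC
          have h3 : rk (Oset n S) (gPerm n S b) ≤ rk (Oset n S) (gPerm n S a) :=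
            rk_mono _ (le_of_lt hd)
          omega
        · rw [gPerm_fixed n S hbO hbC] at hd
          exact absurd hd (not_lt.2 (le_of_lt (lt_trans h1 hab)))
    · -- a fixed
      have h1 : gPerm n S a = a := gPerm_fixed n S haO haC
      rw [h1] at hd
      by_cases hbO : b ∈ Oset n S
      · have h2 : b < gPerm n S b := gPerm_lt_of_O n S hbO
        exact absurd hd (not_lt.2 (le_of_lt (lt_trans hab h2)))
      · by_cases hbC : b ∈ Cset n S
        · have h2 : a < gPerm n S b := gPerm_gt_fixed n S hbC haO haC hab
          exact absurd hd (not_lt.2 (le_of_lt h2))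
        · rw [gPerm_fixed n S hbO hbC] at hd
          exact absurd hd (not_lt.2 (le_of_lt hab))

lemma gPerm_avoids : Avoids321 (gPerm n S) := by
  rintro ⟨i, j, k, h1, h2, h3, h4⟩
  have d1 := gPerm_descent n S h1 h4
  have d2 := gPerm_descent n S h2 h3
  exact OC_disj n S j ⟨d2.1, d1.2⟩

lemma gPerm_centro : Centro (gPerm n S) := by
  intro i hi
  simp only [Finset.mem_Icc] at hi
  have h1 : i - 1 < 2*n := by omega
  have h2 : 2*n + 1 - i - 1 < 2*n := by omega
  have hrev : (⟨2*n+1-i-1, h2⟩ : Fin (2*n)) = (⟨i-1, h1⟩ : Fin (2*n)).rev := by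
    apply Fin.ext
    rw [rev_val]
    show 2*n+1-i-1 = 2*n - 1 - (i-1)
    omega
  have p1 : pval (gPerm n S) i = (gPerm n S ⟨i-1, h1⟩ : ℕ) + 1 := by
    unfold pval; rw [dif_pos h1]
  have p2 : pval (gPerm n S) (2*n+1-i) = (gPerm n S (⟨i-1, h1⟩ : Fin (2*n)).rev : ℕ) + 1 := by
    unfold pval; rw [dif_pos h2]
    show (gPerm n S ⟨2*n+1-i-1, h2⟩ : ℕ) + 1 = _
    rw [hrev]
  have hlink : (gPerm n S ((⟨i-1, h1⟩ : Fin (2*n)).rev) : ℕ)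
      = 2*n - 1 - (gPerm n S ⟨i-1, h1⟩ : ℕ) := by
    rw [gPerm_rev, rev_val]
  have hb := (gPerm n S ⟨i-1, h1⟩).isLt
  rw [p1, p2]
  omega

lemma gPerm_mem_ICset : gPerm n S ∈ ICset n := by
  simp only [ICset, Finset.mem_filter, Finset.mem_univ, true_and]
  exact ⟨gPerm_involutive n S, gPerm_centro n S, gPerm_avoids n S⟩

lemma gPerm_Epi (hS : S ∈ (Finset.Icc 1 n).powerset) : Epi (gPerm n S) = S := by
  have hS' : S ⊆ Finset.Icc 1 n := Finset.mem_powerset.1 hS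
  ext i
  simp only [Epi, Finset.mem_filter]
  constructor
  · rintro ⟨hi, hlt⟩
    simp only [Finset.mem_Icc] at hi
    have h1 : i - 1 < 2*n := by omega
    have p1 : pval (gPerm n S) i = (gPerm n S ⟨i-1, h1⟩ : ℕ) + 1 := by
      unfold pval; rw [dif_pos h1]
    rw [p1] at hlt
    have hxlt : (⟨i-1, h1⟩ : Fin (2*n)) < gPerm n S ⟨i-1, h1⟩ := by
      rw [Fin.lt_def]
      show i - 1 < (gPerm n S ⟨i-1, h1⟩ : ℕ)
      omega
    have hxO : (⟨i-1, h1⟩ : Fin (2*n)) ∈ Oset n S := by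
      by_contra hxO
      by_cases hxC : (⟨i-1, h1⟩ : Fin (2*n)) ∈ Cset n S
      · exact absurd hxlt (not_lt.2 (le_of_lt (gPerm_gt_of_C n S hxC)))
      · rw [gPerm_fixed n S hxO hxC] at hxlt
        exact lt_irrefl _ hxlt
    have hu := (mem_Oset n S).1 hxO
    unfold uPos at hu
    rw [if_pos (show ((⟨i-1, h1⟩ : Fin (2*n)) : ℕ) < n from by show i - 1 < n; omega)] at hu
    have hu2 : i - 1 + 1 ∈ S := hu
    rwa [show i - 1 + 1 = i from by omega] at hu2
  · intro hiS
    have hi := hS' hiS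
    refine ⟨hi, ?_⟩
    simp only [Finset.mem_Icc] at hi
    have h1 : i - 1 < 2*n := by omega
    have hxO : (⟨i-1, h1⟩ : Fin (2*n)) ∈ Oset n S := by
      rw [mem_Oset]
      show uPos n S (i-1)
      unfold uPos
      rw [if_pos (show i - 1 < n from by omega)]
      rw [show i - 1 + 1 = i from by omega]
      exact hiS
    have hgt := gPerm_lt_of_O n S hxO
    have hgt' : i - 1 < (gPerm n S ⟨i-1, h1⟩ : ℕ) := hgt
    unfold pval
    rw [dif_pos h1]
    show i < (gPerm n S ⟨i-1, h1⟩ : ℕ) + 1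
    omega

end Construction

section Injectivity

variable {n : ℕ} (π : Equiv.Perm (Fin (2*n)))

noncomputable def OsetP : Finset (Fin (2*n)) :=
  Finset.univ.filter (fun x : Fin (2*n) => x < π x)

noncomputable def CsetP : Finset (Fin (2*n)) :=
  Finset.univ.filter (fun x : Fin (2*n) => π x < x)

lemma pi_rev (hcen : Centro π) (x : Fin (2*n)) : π x.rev = (π x).rev := by
  have hx := x.isLt
  have hi := hcen (x.val+1) (by simp only [Finset.mem_Icc]; omega)
  have h1 : x.val + 1 - 1 < 2*n := by omega
  have h2 : 2*n + 1 - (x.val+1) - 1 < 2*n := by omega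
  have e2 : (⟨2*n+1-(x.val+1)-1, h2⟩ : Fin (2*n)) = x.rev := by
    apply Fin.ext
    show 2*n+1-(x.val+1)-1 = (x.rev : ℕ)
    rw [rev_val]
    omega
  have e1 : (⟨x.val+1-1, h1⟩ : Fin (2*n)) = x := by
    apply Fin.ext
    show x.val+1-1 = x.val
    omega
  have p1 : pval π (x.val+1) = (π x : ℕ) + 1 := by
    unfold pval; rw [dif_pos h1]
    show (π ⟨x.val+1-1, h1⟩ : ℕ) + 1 = _
    rw [e1]
  have p2 : pval π (2*n+1-(x.val+1)) = (π x.rev : ℕ) + 1 := by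
    unfold pval; rw [dif_pos h2]
    show (π ⟨2*n+1-(x.val+1)-1, h2⟩ : ℕ) + 1 = _
    rw [e2]
  rw [p1, p2] at hi
  apply Fin.ext
  rw [rev_val]
  have hb1 := (π x).isLt
  have hb2 := (π x.rev).isLt
  omega

lemma mono_O (hinv : Function.Involutive π) (hav : Avoids321 π) {x y : Fin (2*n)} (hx : x < π x) (hy : y < π y) (hxy : x < y) : π x < π y := by
  by_contra h
  push_neg at h
  have hne : π y ≠ π x := fun he => absurd (π.injective he) (ne_of_gt hxy)
  have hlt : π y < π x := lt_of_le_of_ne h hne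
  exact hav ⟨x, y, π y, hxy, hy, by rw [hinv]; exact hy, hlt⟩

lemma mono_C (hinv : Function.Involutive π) (hav : Avoids321 π) {x y : Fin (2*n)} (hx : π x < x) (hy : π y < y) (hxy : x < y) : π x < π y := by
  by_contra h
  push_neg at h
  have hne : π y ≠ π x := fun he => absurd (π.injective he) (ne_of_gt hxy)
  have hlt : π y < π x := lt_of_le_of_ne h hne
  exact hav ⟨π y, x, y, lt_trans hlt hx, hxy, hlt, by rw [hinv]; exact lt_trans hx hxy⟩

lemma arc_fix_O (hinv : Function.Involutive π) (hav : Avoids321 π) {x f : Fin (2*n)} (hx : x < π x) (hf : π f = f) (hxf : x < f) : π x < f := by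
  by_contra h
  push_neg at h
  have hne : π x ≠ f := fun he => by
    have : x = π f := by rw [← he, hinv]
    rw [hf] at this
    exact absurd this (ne_of_lt hxf)
  have hlt : f < π x := lt_of_le_of_ne h (Ne.symm hne)
  exact hav ⟨x, f, π x, hxf, hlt, by rw [hinv, hf]; exact hxf, by rw [hf]; exact hlt⟩

lemma arc_fix_C (hinv : Function.Involutive π) (hav : Avoids321 π) {f x : Fin (2*n)} (hx : π x < x) (hf : π f = f) (hfx : f < x) : f < π x := by
  by_contra h
  push_neg at h
  have hne : π x ≠ f := fun he => by
    have : x = π f := by rw [← he, hinv]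
    rw [hf] at this
    exact absurd this (ne_of_gt hfx)
  have hlt : π x < f := lt_of_le_of_ne h hne
  exact hav ⟨π x, f, x, hlt, hfx, by rw [hf]; exact hlt, by rw [hinv, hf]; exact hfx⟩

lemma mem_OsetP {x : Fin (2*n)} : x ∈ OsetP π ↔ x < π x := by simp [OsetP]

lemma mem_CsetP {x : Fin (2*n)} : x ∈ CsetP π ↔ π x < x := by simp [CsetP]

lemma rk_bound_C (hinv : Function.Involutive π) {x : Fin (2*n)} (hx : π x < x) :
    rk (CsetP π) x + 1 ≤ rk (OsetP π) x := by
  have hkey : (insert x ((CsetP π).filter (· < x))).card ≤ ((OsetP π).filter (· < x)).card := by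
    apply Finset.card_le_card_of_injOn (fun c => π c)
    · intro c hc
      simp only [Finset.mem_coe, Finset.mem_insert, Finset.mem_filter, mem_CsetP] at hc
      simp only [Finset.mem_coe, Finset.mem_filter, mem_OsetP]
      rcases hc with rfl | ⟨hcC, hcx⟩
      · exact ⟨by rw [hinv]; exact hx, hx⟩
      · exact ⟨by rw [hinv]; exact hcC, lt_trans hcC hcx⟩
    · intro a _ b _ hab
      exact π.injective hab
  rw [Finset.card_insert_of_notMem (by
    simp only [Finset.mem_filter]
    rintro ⟨_, h⟩
    exact lt_irrefl x h)] at hkey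
  unfold rk
  omega

lemma rk_fix (hinv : Function.Involutive π) (hav : Avoids321 π) {f : Fin (2*n)} (hf : π f = f) :
    rk (OsetP π) f = rk (CsetP π) f := by
  apply le_antisymm
  · apply Finset.card_le_card_of_injOn (fun o => π o)
    · intro o ho
      simp only [Finset.mem_coe, Finset.mem_filter, mem_OsetP] at ho
      simp only [Finset.mem_coe, Finset.mem_filter, mem_CsetP]
      refine ⟨by rw [hinv]; exact ho.1, ?_⟩
      exact arc_fix_O π hinv hav ho.1 hf ho.2
    · intro a _ b _ hab
      exact π.injective hab
  · apply Finset.card_le_card_of_injOn (fun c => π c)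
    · intro c hc
      simp only [Finset.mem_coe, Finset.mem_filter, mem_CsetP] at hc
      simp only [Finset.mem_coe, Finset.mem_filter, mem_OsetP]
      exact ⟨by rw [hinv]; exact hc.1, lt_trans hc.1 hc.2⟩
    · intro a _ b _ hab
      exact π.injective hab

lemma mem_Epi_iff {x : Fin (2*n)} (hx : x.val < n) :
    x.val + 1 ∈ Epi π ↔ x < π x := by
  simp only [Epi, Finset.mem_filter, Finset.mem_Icc]
  have h1 : x.val + 1 - 1 < 2*n := by omega
  have e1 : (⟨x.val+1-1, h1⟩ : Fin (2*n)) = x := by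
    apply Fin.ext
    show x.val+1-1 = x.val
    omega
  have p1 : pval π (x.val+1) = (π x : ℕ) + 1 := by
    unfold pval; rw [dif_pos h1]
    show (π ⟨x.val+1-1, h1⟩ : ℕ) + 1 = _
    rw [e1]
  rw [p1, Fin.lt_def]
  omega

lemma B_first {S : Finset ℕ} {p : ℕ} (h : p ≤ n) : B n S p = bal S p := by
  unfold B; rw [if_pos h]

lemma agreeFirst (hinv : Function.Involutive π) (hav : Avoids321 π) : ∀ p, p ≤ n → ∀ x : Fin (2*n), x.val < p →
    ((x < π x ↔ uPos n (Epi π) x.val) ∧ (π x < x ↔ dPos n (Epi π) x.val)) := by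
  intro p
  induction p with
  | zero => intro _ x hx; omega
  | succ p ih =>
    intro hp x hxp
    rcases Nat.lt_or_ge x.val p with h | h
    · exact ih (by omega) x h
    have hxval : x.val = p := by omega
    have hpn : p < n := by omega
    set S := Epi π with hSdef
    -- counts below x agree
    have hOeq : (OsetP π).filter (· < x) = (Oset n S).filter (· < x) := by
      ext y
      simp only [Finset.mem_filter, mem_OsetP, Oset, Finset.mem_univ, true_and]
      constructor
      · rintro ⟨h1, h2⟩
        have hyp : y.val < p := by rw [← hxval]; exact h2
        exact ⟨((ih (by omega) y hyp).1).1 h1, h2⟩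
      · rintro ⟨h1, h2⟩
        have hyp : y.val < p := by rw [← hxval]; exact h2
        exact ⟨((ih (by omega) y hyp).1).2 h1, h2⟩
    have hCeq : (CsetP π).filter (· < x) = (Cset n S).filter (· < x) := by
      ext y
      simp only [Finset.mem_filter, mem_CsetP, Cset, Finset.mem_univ, true_and]
      constructor
      · rintro ⟨h1, h2⟩
        have hyp : y.val < p := by rw [← hxval]; exact h2
        exact ⟨((ih (by omega) y hyp).2).1 h1, h2⟩
      · rintro ⟨h1, h2⟩
        have hyp : y.val < p := by rw [← hxval]; exact h2
        exact ⟨((ih (by omega) y hyp).2).2 h1, h2⟩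
    have hrkO : rk (OsetP π) x = oc n S p := by
      have : rk (OsetP π) x = rk (Oset n S) x := by unfold rk; rw [hOeq]
      rw [this, rk_Oset, hxval]
    have hrkC : rk (CsetP π) x = dc n S p := by
      have : rk (CsetP π) x = rk (Cset n S) x := by unfold rk; rw [hCeq]
      rw [this, rk_Cset, hxval]
    have hcnt := count_eq n S p (by omega)
    rw [B_first (by omega)] at hcnt
    have hmem : x.val + 1 ∈ S ↔ x < π x := mem_Epi_iff π (by omega)
    rcases lt_trichotomy x (π x) with hlt | heq | hgt
    · have hu : uPos n S x.val := by
        unfold uPos; rw [hxval, if_pos hpn]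
        rw [← hxval]; exact hmem.2 hlt
      have hd : ¬ dPos n S x.val := by
        unfold dPos; rw [hxval, if_pos hpn]
        rintro ⟨hns, _⟩
        rw [← hxval] at hns
        exact hns (hmem.2 hlt)
      exact ⟨iff_of_true hlt hu, iff_of_false (asymm hlt) hd⟩
    · have hfix : π x = x := heq.symm
      have hu : ¬ uPos n S x.val := by
        unfold uPos; rw [hxval, if_pos hpn]
        intro hs
        rw [← hxval] at hs
        have := hmem.1 hs
        rw [hfix] at this
        exact lt_irrefl x this
      have hd : ¬ dPos n S x.val := by
        unfold dPos; rw [hxval, if_pos hpn]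
        rintro ⟨_, hb⟩
        have := rk_fix π hinv hav hfix
        rw [hrkO, hrkC] at this
        omega
      refine ⟨iff_of_false ?_ hu, iff_of_false ?_ hd⟩
      · rw [hfix]; exact lt_irrefl x
      · rw [hfix]; exact lt_irrefl x
    · have hd : dPos n S x.val := by
        unfold dPos; rw [hxval, if_pos hpn]
        constructor
        · rw [← hxval]
          intro hs
          exact absurd (hmem.1 hs) (asymm hgt)
        · have := rk_bound_C π hinv hgt
          rw [hrkO, hrkC] at this
          omega
      have hu : ¬ uPos n S x.val := by
        unfold uPos; rw [hxval, if_pos hpn]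
        rw [← hxval]
        intro hs
        exact absurd (hmem.1 hs) (asymm hgt)
      exact ⟨iff_of_false (asymm hgt) hu, iff_of_true hgt hd⟩

lemma agree (hinv : Function.Involutive π) (hcen : Centro π) (hav : Avoids321 π) (x : Fin (2*n)) :
    (x < π x ↔ uPos n (Epi π) x.val) ∧ (π x < x ↔ dPos n (Epi π) x.val) := by
  rcases Nat.lt_or_ge x.val n with h | h
  · exact agreeFirst π hinv hav n le_rfl x h
  · set y := x.rev with hy
    have hyval : y.val = 2*n - 1 - x.val := by rw [hy, rev_val]
    have hxlt := x.isLt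
    have hyn : y.val < n := by omega
    have hA := agreeFirst π hinv hav n le_rfl y hyn
    have hrevπ : π y = (π x).rev := by rw [hy]; exact pi_rev π hcen x
    have e1 : (x < π x) ↔ (π y < y) := by
      rw [hrevπ, hy]
      exact (Fin.rev_lt_rev).symm
    have e2 : (π x < x) ↔ (y < π y) := by
      rw [hrevπ, hy]
      exact (Fin.rev_lt_rev).symm
    have f1 : uPos n (Epi π) x.val ↔ dPos n (Epi π) y.val := by
      have := uPos_flip (n := n) (S := Epi π) (x := y.val) (by omega)
      rwa [show 2*n - 1 - y.val = x.val by omega] at this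
    have f2 : dPos n (Epi π) x.val ↔ uPos n (Epi π) y.val := by
      have h' := uPos_flip (n := n) (S := Epi π) (x := x.val) (by omega)
      rw [show 2*n - 1 - x.val = y.val by omega] at h'
      exact h'.symm
    constructor
    · rw [e1, f1]; exact hA.2
    · rw [e2, f2]; exact hA.1

lemma pi_eq_gPerm (hinv : Function.Involutive π) (hcen : Centro π) (hav : Avoids321 π) : π = gPerm n (Epi π) := by
  set S := Epi π with hS
  apply perm_unique (O := Oset n S) (C := Cset n S) rfl (card_Cset n S) (OC_disj n S)
    π (gPerm n S) hinv (gPerm_involutive n S)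
  · intro i h1 h2
    rw [mem_Oset] at h1
    rw [mem_Cset] at h2
    have ha := agree π hinv hcen hav i
    have g1 : ¬ i < π i := fun h => h1 (ha.1.1 h)
    have g2 : ¬ π i < i := fun h => h2 (ha.2.1 h)
    exact le_antisymm (not_lt.1 g1) (not_lt.1 g2)
  · intro i h1 h2
    exact gPerm_fixed n S h1 h2
  · intro i hi
    rw [mem_Oset] at hi
    have ha := agree π hinv hcen hav i
    have hlt : i < π i := ha.1.2 hi
    have hc : π (π i) < π i := by rw [hinv]; exact hlt
    have := (agree π hinv hcen hav (π i)).2.1 hc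
    rw [mem_Cset]
    exact this
  · intro i hi
    exact pairFun_mem_C_of_mem_O hi
  · intro i j hi hj hij
    rw [mem_Oset] at hi hj
    have hai := (agree π hinv hcen hav i).1.2 hi
    have haj := (agree π hinv hcen hav j).1.2 hj
    exact mono_O π hinv hav hai haj hij
  · intro i j hi hj hij
    exact pairFun_strictMonoOn hi hj hij

end Injectivity

/-- The number of 321-avoiding centrosymmetric involutions of `S_{2n}` is `2^n`. -/
theorem card_centro_involutions_avoiding_321 (n : ℕ) : (ICset n).card = 2 ^ n := by
  have hbij : (ICset n).card = ((Finset.Icc 1 n).powerset).card := by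
    apply Finset.card_bij (fun π _ => Epi π)
    · intro π hπ
      rw [Finset.mem_powerset]
      exact Finset.filter_subset _ _
    · intro π hπ σ hσ h
      simp only [ICset, Finset.mem_filter, Finset.mem_univ, true_and] at hπ hσ
      obtain ⟨hπ1, hπ2, hπ3⟩ := hπ
      obtain ⟨hσ1, hσ2, hσ3⟩ := hσ
      rw [pi_eq_gPerm π hπ1 hπ2 hπ3, pi_eq_gPerm σ hσ1 hσ2 hσ3, h]
    · intro S hS
      exact ⟨gPerm n S, gPerm_mem_ICset n S, gPerm_Epi n S hS⟩
  rw [hbij, Finset.card_powerset, Nat.card_Icc]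
  congr 1
end

section
/- The map sending π to E_π = {i ∈ [n] : π(i) > i} (the set of excedances of π among the first n positions) is a bijection from the set of 321-avoiding centrosymmetric involutions in S_{2n} to the power set of [n]. In particular, every 321-avoiding centrosymmetric involution of S_{2n} is uniquely determined by its excedances in positions 1 through n. -/
open Finset Polynomial
open scoped Classical

namespace CSB

variable {m : ℕ} (π : Equiv.Perm (Fin m))

lemma pval_fin (x : Fin m) : pval π ((x : ℕ) + 1) = (π x : ℕ) + 1 := by
  have h : (x : ℕ) + 1 - 1 < m := by simpa using x.2
  rw [pval, dif_pos h]
  congr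

lemma pval_eq {i : ℕ} (h1 : 1 ≤ i) (h2 : i ≤ m) :
    pval π i = (π ⟨i - 1, by omega⟩ : ℕ) + 1 := by
  have := pval_fin π ⟨i - 1, by omega⟩
  simpa [Nat.sub_add_cancel h1] using this

lemma pval_mem {i : ℕ} (h1 : 1 ≤ i) (h2 : i ≤ m) :
    1 ≤ pval π i ∧ pval π i ≤ m := by
  rw [pval_eq π h1 h2]
  exact ⟨by omega, by have := (π ⟨i - 1, by omega⟩).2; omega⟩

lemma pval_pval (hπ : Function.Involutive π) {i : ℕ} (h1 : 1 ≤ i) (h2 : i ≤ m) :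
    pval π (pval π i) = i := by
  rw [pval_eq π h1 h2]
  rw [pval_fin π (π ⟨i - 1, by omega⟩), hπ]
  simp
  omega

lemma pval_injOn {i j : ℕ} (h1 : 1 ≤ i) (h2 : i ≤ m) (h3 : 1 ≤ j) (h4 : j ≤ m)
    (h : pval π i = pval π j) : i = j := by
  rw [pval_eq π h1 h2, pval_eq π h3 h4] at h
  have h' : π ⟨i - 1, by omega⟩ = π ⟨j - 1, by omega⟩ := Fin.ext (by omega)
  have := π.injective h'
  have : i - 1 = j - 1 := congrArg Fin.val this
  omega

lemma pval_val {i : ℕ} (h1 : 1 ≤ i) (h2 : i ≤ m) (x : Fin m) (hx : (x : ℕ) = i - 1) :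
    pval π i = (π x : ℕ) + 1 := by
  have hx' : x = ⟨i - 1, by omega⟩ := Fin.ext hx
  rw [pval_eq π h1 h2, hx']

/-- 1-based excedance set. -/
def XS (π : Equiv.Perm (Fin m)) : Finset ℕ := (Finset.Icc 1 m).filter fun i => i < pval π i

/-- 1-based (strict) deficiency set. -/
def YS (π : Equiv.Perm (Fin m)) : Finset ℕ := (Finset.Icc 1 m).filter fun i => pval π i < i

lemma mono_exc (hA : Avoids321 π) {x y : Fin m} (hx : x < π x) (hy : y < π y)
    (hxy : x < y) : π x < π y := by
  by_contra hc
  push_neg at hc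
  have hne : π y ≠ π x := fun h => (hxy.ne (π.injective h.symm)).elim
  have hyx : π y < π x := lt_of_le_of_ne hc hne
  -- find k > y with π k < π y
  have hk : ∃ k, y < k ∧ π k < π y := by
    by_contra hno
    push_neg at hno
    have hsub : Finset.Ioi y ∪ {x, y} ⊆ Finset.univ.filter (fun k => π y ≤ π k) := by
      intro k hk
      simp only [Finset.mem_union, Finset.mem_Ioi, Finset.mem_insert, Finset.mem_singleton] at hk
      simp only [Finset.mem_filter, Finset.mem_univ, true_and]
      rcases hk with h | h | h
      · exact hno k h
      · subst h; exact hyx.le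
      · subst h; exact le_rfl
    have hcard1 : (Finset.Ioi y ∪ ({x, y} : Finset (Fin m))).card = (m - 1 - (y : ℕ)) + 2 := by
      rw [Finset.card_union_of_disjoint, Fin.card_Ioi, Finset.card_pair hxy.ne]
      · simp only [Finset.disjoint_left]
        intro a ha
        simp only [Finset.mem_Ioi] at ha
        simp only [Finset.mem_insert, Finset.mem_singleton]
        push_neg
        exact ⟨fun h => absurd (h ▸ ha) (not_lt.mpr (hxy.le)), fun h => absurd (h ▸ ha) (lt_irrefl y)⟩
    have hcard2 : (Finset.univ.filter (fun k => π y ≤ π k)).card = m - (π y : ℕ) := by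
      rw [← Fin.card_Ici (π y)]
      apply Finset.card_bij (fun a _ => π a)
      · intro a ha; simp only [Finset.mem_filter] at ha; simpa using ha.2
      · intro a ha b hb h; exact π.injective h
      · intro b hb
        refine ⟨π.symm b, ?_, by simp⟩
        simp only [Finset.mem_filter, Finset.mem_univ, true_and, Equiv.apply_symm_apply]
        simpa using hb
    have hle := Finset.card_le_card hsub
    rw [hcard1, hcard2] at hle
    have h1 : (y : ℕ) < (π y : ℕ) := hy
    have h2 : (y : ℕ) < m := y.2
    have h3 : (π y : ℕ) < m := (π y).2
    omega
  obtain ⟨k, hk1, hk2⟩ := hk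
  exact hA ⟨x, y, k, hxy, hk1, hk2, hyx⟩

lemma mono_nonexc (hA : Avoids321 π) {x y : Fin m} (hx : π x ≤ x) (hy : π y ≤ y)
    (hxy : x < y) : π x < π y := by
  by_contra hc
  push_neg at hc
  have hne : π y ≠ π x := fun h => (hxy.ne (π.injective h.symm)).elim
  have hyx : π y < π x := lt_of_le_of_ne hc hne
  -- find k < x with π x < π k
  have hk : ∃ k, k < x ∧ π x < π k := by
    by_contra hno
    push_neg at hno
    have hsub : Finset.Iio x ∪ {x, y} ⊆ Finset.univ.filter (fun k => π k ≤ π x) := by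
      intro k hk
      simp only [Finset.mem_union, Finset.mem_Iio, Finset.mem_insert, Finset.mem_singleton] at hk
      simp only [Finset.mem_filter, Finset.mem_univ, true_and]
      rcases hk with h | h | h
      · exact hno k h
      · subst h; exact le_rfl
      · subst h; exact hyx.le
    have hcard1 : (Finset.Iio x ∪ ({x, y} : Finset (Fin m))).card = (x : ℕ) + 2 := by
      rw [Finset.card_union_of_disjoint, Fin.card_Iio, Finset.card_pair hxy.ne]
      · simp only [Finset.disjoint_left]
        intro a ha
        simp only [Finset.mem_Iio] at ha
        simp only [Finset.mem_insert, Finset.mem_singleton]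
        push_neg
        exact ⟨fun h => absurd (h ▸ ha) (lt_irrefl x), fun h => absurd (h ▸ ha) (not_lt.mpr hxy.le)⟩
    have hcard2 : (Finset.univ.filter (fun k => π k ≤ π x)).card = (π x : ℕ) + 1 := by
      rw [← Fin.card_Iic (π x)]
      apply Finset.card_bij (fun a _ => π a)
      · intro a ha; simp only [Finset.mem_filter] at ha; simpa using ha.2
      · intro a ha b hb h; exact π.injective h
      · intro b hb
        refine ⟨π.symm b, ?_, by simp⟩
        simp only [Finset.mem_filter, Finset.mem_univ, true_and, Equiv.apply_symm_apply]
        simpa using hb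
    have hle := Finset.card_le_card hsub
    rw [hcard1, hcard2] at hle
    have h1 : (π x : ℕ) ≤ (x : ℕ) := hx
    omega
  obtain ⟨k, hk1, hk2⟩ := hk
  exact hA ⟨k, x, y, hk1, hxy, hyx, hk2⟩

lemma avoids_of_mono
    (h1 : ∀ x y : Fin m, x < π x → y < π y → x < y → π x < π y)
    (h2 : ∀ x y : Fin m, π x ≤ x → π y ≤ y → x < y → π x < π y) : Avoids321 π := by
  rintro ⟨i, j, k, hij, hjk, h3, h4⟩
  by_cases hi : i < π i <;> by_cases hj : j < π j <;> by_cases hk : k < π k <;>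
  first
    | exact absurd (h1 i j hi hj hij) (not_lt.mpr h4.le)
    | exact absurd (h1 j k hj hk hjk) (not_lt.mpr h3.le)
    | exact absurd (h1 i k hi hk (hij.trans hjk)) (not_lt.mpr (h3.trans h4).le)
    | exact absurd (h2 i j (not_lt.mp hi) (not_lt.mp hj) hij) (not_lt.mpr h4.le)
    | exact absurd (h2 j k (not_lt.mp hj) (not_lt.mp hk) hjk) (not_lt.mpr h3.le)
    | exact absurd (h2 i k (not_lt.mp hi) (not_lt.mp hk) (hij.trans hjk)) (not_lt.mpr (h3.trans h4).le)

section SCAN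

/-- The scan counter: number of currently unmatched openers after position `i`. -/
def cnt (E : Finset ℕ) : ℕ → ℕ
  | 0 => 0
  | i + 1 => if i + 1 ∈ E then cnt E i + 1 else cnt E i - 1

def rv (n i : ℕ) : ℕ := 2 * n + 1 - i

/-- The closers in the lower half, determined by the scan. -/
def Dset (n : ℕ) (E : Finset ℕ) : Finset ℕ :=
  (Icc 1 n).filter fun i => i ∉ E ∧ 0 < cnt E (i - 1)

/-- The full (1-based) opener set. -/
def Aset (n : ℕ) (E : Finset ℕ) : Finset ℕ := E ∪ (Dset n E).image (rv n)

/-- The full (1-based) closer set. -/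
def Bset (n : ℕ) (E : Finset ℕ) : Finset ℕ := (Aset n E).image (rv n)

/-- prefix count -/
def pc (X : Finset ℕ) (p : ℕ) : ℕ := (X ∩ Icc 1 p).card

variable {n : ℕ} {E : Finset ℕ}

lemma rv_rv {i : ℕ} (h : i ≤ 2 * n + 1) : rv n (rv n i) = i := by unfold rv; omega

lemma rv_inj {i j : ℕ} (hi : i ≤ 2 * n + 1) (hj : j ≤ 2 * n + 1) (h : rv n i = rv n j) :
    i = j := by unfold rv at h; omega

lemma rv_mem_upper {i : ℕ} (h : i ∈ Icc 1 n) : rv n i ∈ Icc (n + 1) (2 * n) := by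
  simp only [mem_Icc] at *; unfold rv; omega

lemma Dset_subset : Dset n E ⊆ Icc 1 n := filter_subset _ _

lemma Dset_not_mem_E {i : ℕ} (h : i ∈ Dset n E) : i ∉ E := (mem_filter.mp h).2.1

section Esub
variable (hE : E ⊆ Icc 1 n)
include hE

lemma Aset_subset : Aset n E ⊆ Icc 1 (2 * n) := by
  intro x hx
  rcases mem_union.mp hx with h | h
  · have := hE h; simp only [mem_Icc] at *; omega
  · obtain ⟨d, hd, rfl⟩ := mem_image.mp h
    have := rv_mem_upper (Dset_subset hd)
    simp only [mem_Icc] at *; omega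

lemma Bset_subset : Bset n E ⊆ Icc 1 (2 * n) := by
  intro x hx
  obtain ⟨a, ha, rfl⟩ := mem_image.mp hx
  have := Aset_subset hE ha
  simp only [mem_Icc] at *; unfold rv; omega

lemma A_lower {i : ℕ} (h : i ≤ n) : i ∈ Aset n E ↔ i ∈ E := by
  constructor
  · intro hi
    rcases mem_union.mp hi with h' | h'
    · exact h'
    · obtain ⟨d, hd, rfl⟩ := mem_image.mp h'
      have := rv_mem_upper (Dset_subset hd)
      simp only [mem_Icc] at this; omega
  · intro hi; exact mem_union_left _ hi

lemma mem_B_iff {i : ℕ} (h : i ≤ 2 * n) : i ∈ Bset n E ↔ rv n i ∈ Aset n E := by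
  constructor
  · intro hi
    obtain ⟨a, ha, rfl⟩ := mem_image.mp hi
    have ha2 := Aset_subset hE ha
    simp only [mem_Icc] at ha2
    rwa [rv_rv (by omega)]
  · intro hi
    exact mem_image.mpr ⟨rv n i, hi, rv_rv (by omega)⟩

lemma B_lower {i : ℕ} (h : i ≤ n) (h1 : 1 ≤ i) : i ∈ Bset n E ↔ i ∈ Dset n E := by
  rw [mem_B_iff hE (by omega)]
  constructor
  · intro hi
    rcases mem_union.mp hi with h' | h'
    · have := hE h'; simp only [mem_Icc] at this; unfold rv at this; omega
    · obtain ⟨d, hd, hd2⟩ := mem_image.mp h'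
      have hd3 := Dset_subset hd
      simp only [mem_Icc] at hd3
      have : d = i := rv_inj (by omega) (by omega) hd2
      rwa [← this]
  · intro hi
    exact mem_union_right _ (mem_image.mpr ⟨i, hi, rfl⟩)

lemma AB_disjoint : Disjoint (Aset n E) (Bset n E) := by
  rw [disjoint_left]
  intro x hxA hxB
  have hx2 := Aset_subset hE hxA
  simp only [mem_Icc] at hx2
  by_cases h : x ≤ n
  · have h1 : x ∈ E := (A_lower hE h).mp hxA
    have h2 : x ∈ Dset n E := (B_lower hE h hx2.1).mp hxB
    exact Dset_not_mem_E h2 h1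
  · have h1 : rv n x ∈ Aset n E := (mem_B_iff hE hx2.2).mp hxB
    have hrx : rv n x ≤ n := by unfold rv; omega
    have hrx1 : 1 ≤ rv n x := by unfold rv; omega
    have h2 : rv n x ∈ E := (A_lower hE hrx).mp h1
    -- then x ∈ A upper means rv x ∈ D
    rcases mem_union.mp hxA with h' | h'
    · have := hE h'; simp only [mem_Icc] at this; omega
    · obtain ⟨d, hd, rfl⟩ := mem_image.mp h'
      have hd3 := Dset_subset hd
      simp only [mem_Icc] at hd3
      rw [rv_rv (by omega)] at h2
      exact Dset_not_mem_E hd h2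

lemma card_B_eq : (Bset n E).card = (Aset n E).card := by
  apply card_image_of_injOn
  intro x hx y hy hxy
  have h1 := Aset_subset hE hx
  have h2 := Aset_subset hE hy
  simp only [mem_Icc] at h1 h2
  exact rv_inj (by omega) (by omega) hxy

end Esub

lemma pc_succ (X : Finset ℕ) (i : ℕ) :
    pc X (i + 1) = pc X i + if i + 1 ∈ X then 1 else 0 := by
  unfold pc
  have h : Icc 1 (i + 1) = insert (i + 1) (Icc 1 i) := by
    ext x; simp only [mem_Icc, mem_insert]; omega
  rw [h]
  have hni : i + 1 ∉ X ∩ Icc 1 i := by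
    simp only [mem_inter, mem_Icc]; omega
  by_cases hm : i + 1 ∈ X
  · rw [inter_insert_of_mem hm, card_insert_of_notMem hni, if_pos hm]
  · rw [inter_insert_of_notMem hm, if_neg hm]
    omega

lemma pc_zero (X : Finset ℕ) : pc X 0 = 0 := by simp [pc]

lemma pc_mono (X : Finset ℕ) {p q : ℕ} (h : p ≤ q) : pc X p ≤ pc X q := by
  apply card_le_card
  exact inter_subset_inter (le_refl _) (Icc_subset_Icc le_rfl h)

lemma pc_le_card (X : Finset ℕ) (p : ℕ) : pc X p ≤ X.card :=
  card_le_card inter_subset_left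

lemma pc_of_subset {X : Finset ℕ} {p : ℕ} (h : X ⊆ Icc 1 p) : pc X p = X.card := by
  unfold pc
  congr 1
  exact inter_eq_left.mpr h

lemma pc_inter_eq {X Y : Finset ℕ} {p : ℕ} (h : ∀ i, 1 ≤ i → i ≤ p → (i ∈ X ↔ i ∈ Y)) :
    pc X p = pc Y p := by
  unfold pc
  congr 1
  ext x
  simp only [mem_inter, mem_Icc]
  constructor
  · rintro ⟨h1, h2, h3⟩; exact ⟨(h x h2 h3).mp h1, h2, h3⟩
  · rintro ⟨h1, h2, h3⟩; exact ⟨(h x h2 h3).mpr h1, h2, h3⟩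

lemma cnt_spec (hE : E ⊆ Icc 1 n) : ∀ i, i ≤ n →
    cnt E i + pc (Dset n E) i = pc E i := by
  intro i
  induction i with
  | zero => intro _; simp [cnt, pc_zero]
  | succ i ih =>
    intro hi
    have ih' := ih (by omega)
    rw [pc_succ, pc_succ]
    by_cases hm : i + 1 ∈ E
    · have hd : i + 1 ∉ Dset n E := fun h => Dset_not_mem_E h hm
      simp only [cnt, if_pos hm, if_neg hd]
      omega
    · by_cases hc : 0 < cnt E i
      · have hd : i + 1 ∈ Dset n E := by
          simp only [Dset, mem_filter, mem_Icc]
          exact ⟨⟨by omega, by omega⟩, hm, by simpa using hc⟩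
        simp only [cnt, if_neg hm, if_pos hd]
        omega
      · have hd : i + 1 ∉ Dset n E := by
          simp only [Dset, mem_filter, mem_Icc]
          intro hmem
          have := hmem.2.2
          simp only [Nat.add_sub_cancel] at this
          omega
        simp only [cnt, if_neg hm, if_neg hd]
        omega

end SCAN

end CSB

section PART3
open Finset
namespace CSB

variable {n : ℕ} {E : Finset ℕ}

lemma pc_rv (S : Finset ℕ) (hS : S ⊆ Icc 1 (2 * n)) {p : ℕ} (hp : p ≤ 2 * n) :
    pc S p + pc (S.image (rv n)) (2 * n - p) = S.card := by
  have hsplit : pc S p + (S \ Icc 1 p).card = S.card := by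
    rw [pc]; exact card_inter_add_card_sdiff S (Icc 1 p)
  have key : (S.image (rv n)) ∩ Icc 1 (2 * n - p) = (S \ Icc 1 p).image (rv n) := by
    ext x
    simp only [mem_inter, mem_image, mem_sdiff, mem_Icc]
    constructor
    · rintro ⟨⟨s, hs, rfl⟩, hx1, hx2⟩
      have hsb := hS hs
      simp only [mem_Icc] at hsb
      exact ⟨s, ⟨hs, by unfold rv at hx2; omega⟩, rfl⟩
    · rintro ⟨s, ⟨hs, hsp⟩, rfl⟩
      have hsb := hS hs
      simp only [mem_Icc] at hsb
      refine ⟨⟨s, hs, rfl⟩, by unfold rv; omega, by unfold rv; omega⟩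
  have hcard : pc (S.image (rv n)) (2 * n - p) = (S \ Icc 1 p).card := by
    rw [pc, key]
    apply card_image_of_injOn
    intro x hx y hy hxy
    have hx2 := hS (mem_sdiff.mp hx).1
    have hy2 := hS (mem_sdiff.mp hy).1
    simp only [mem_Icc] at hx2 hy2
    exact rv_inj (by omega) (by omega) hxy
  omega

section Esub
variable (hE : E ⊆ Icc 1 n)
include hE

lemma pcA_low {p : ℕ} (hp : p ≤ n) : pc (Aset n E) p = pc E p := by
  apply pc_inter_eq
  intro i h1 h2
  exact A_lower hE (by omega)

lemma pcB_low {p : ℕ} (hp : p ≤ n) : pc (Bset n E) p = pc (Dset n E) p := by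
  apply pc_inter_eq
  intro i h1 h2
  exact B_lower hE (by omega) h1

lemma B_image_rv : (Bset n E).image (rv n) = Aset n E := by
  ext x
  constructor
  · intro hx
    obtain ⟨b, hb, rfl⟩ := mem_image.mp hx
    have hb2 := Bset_subset hE hb
    simp only [mem_Icc] at hb2
    exact (mem_B_iff hE (by omega)).mp hb
  · intro hx
    have hx2 := Aset_subset hE hx
    simp only [mem_Icc] at hx2
    refine mem_image.mpr ⟨rv n x, ?_, rv_rv (by omega)⟩
    exact (mem_B_iff hE (by unfold rv; omega)).mpr (by rwa [rv_rv (by omega)])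

lemma pc_A_compl {p : ℕ} (hp : p ≤ 2 * n) :
    pc (Aset n E) p + pc (Bset n E) (2 * n - p) = (Aset n E).card :=
  pc_rv _ (Aset_subset hE) hp

lemma pc_B_compl {p : ℕ} (hp : p ≤ 2 * n) :
    pc (Bset n E) p + pc (Aset n E) (2 * n - p) = (Aset n E).card := by
  have := pc_rv (Bset n E) (Bset_subset hE) hp
  rwa [B_image_rv hE, card_B_eq hE] at this

lemma prefix_low {p : ℕ} (hp : p ≤ n) : pc (Bset n E) p ≤ pc (Aset n E) p := by
  rw [pcA_low hE hp, pcB_low hE hp]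
  have := cnt_spec hE p hp
  omega

lemma prefix_all (p : ℕ) : pc (Bset n E) p ≤ pc (Aset n E) p := by
  by_cases hp : p ≤ n
  · exact prefix_low hE hp
  · by_cases hp2 : p ≤ 2 * n
    · have h1 := pc_A_compl hE hp2
      have h2 := pc_B_compl hE hp2
      have h3 := prefix_low hE (show 2 * n - p ≤ n by omega)
      have h4 := pc_le_card (Aset n E) (2 * n - p)
      have h5 := pc_le_card (Bset n E) (2 * n - p)
      omega
    · have h1 : pc (Aset n E) p = (Aset n E).card :=
        pc_of_subset ((Aset_subset hE).trans (Icc_subset_Icc le_rfl (by omega)))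
      have h2 : pc (Bset n E) p = (Bset n E).card :=
        pc_of_subset ((Bset_subset hE).trans (Icc_subset_Icc le_rfl (by omega)))
      rw [h1, h2, card_B_eq hE]

lemma fixed_count_low {q : ℕ} (hq : q ≤ n) (hc : cnt E q = 0) :
    pc (Aset n E) q = pc (Bset n E) q := by
  rw [pcA_low hE hq, pcB_low hE hq]
  have := cnt_spec hE q hq
  omega

lemma fixed_count {x : ℕ} (hx1 : 1 ≤ x) (hx2 : x ≤ 2 * n)
    (hxA : x ∉ Aset n E) (hxB : x ∉ Bset n E) :
    pc (Aset n E) x = pc (Bset n E) x := by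
  by_cases hx : x ≤ n
  · have hxE : x ∉ E := fun h => hxA ((A_lower hE hx).mpr h)
    have hxD : x ∉ Dset n E := fun h => hxB ((B_lower hE hx hx1).mpr h)
    have hcnt1 : cnt E (x - 1) = 0 := by
      by_contra hc
      exact hxD (by
        simp only [Dset, mem_filter, mem_Icc]
        exact ⟨⟨hx1, hx⟩, hxE, by omega⟩)
    have hcnt : cnt E x = 0 := by
      obtain ⟨y, rfl⟩ : ∃ y, x = y + 1 := ⟨x - 1, by omega⟩
      simp only [Nat.add_sub_cancel] at hcnt1
      simp only [cnt, if_neg hxE, hcnt1]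
    exact fixed_count_low hE hx hcnt
  · set f := rv n x with hf
    have hfb : 1 ≤ f ∧ f ≤ n := by unfold f; unfold rv; omega
    have hfA : f ∉ Aset n E := fun h => hxB ((mem_B_iff hE hx2).mpr h)
    have hfB : f ∉ Bset n E := by
      intro h
      have := (mem_B_iff hE (by omega)).mp h
      rw [hf, rv_rv (by omega)] at this
      exact hxA this
    have hfE : f ∉ E := fun h => hfA ((A_lower hE hfb.2).mpr h)
    have hfD : f ∉ Dset n E := fun h => hfB ((B_lower hE hfb.2 hfb.1).mpr h)
    have hcnt1 : cnt E (f - 1) = 0 := by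
      by_contra hc
      exact hfD (by
        simp only [Dset, mem_filter, mem_Icc]
        exact ⟨⟨hfb.1, hfb.2⟩, hfE, by omega⟩)
    have hq : 2 * n - x = f - 1 := by unfold f; unfold rv; omega
    have h1 := pc_A_compl hE hx2
    have h2 := pc_B_compl hE hx2
    have h3 : pc (Aset n E) (2 * n - x) = pc (Bset n E) (2 * n - x) := by
      rw [hq]; exact fixed_count_low hE (by omega) hcnt1
    omega

end Esub

/-- Rank lemma: the `j`-th element of `s` is `≤ p` iff `j < #{x ∈ s | x ≤ p}`. -/
lemma rank_le_iff {s : Finset ℕ} {k : ℕ} (h : s.card = k) (j : Fin k) {p : ℕ} :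
    s.orderEmbOfFin h j ≤ p ↔ (j : ℕ) < (s.filter (· ≤ p)).card := by
  set f := s.orderEmbOfFin h with hf
  constructor
  · intro hj
    have hsub : (Finset.Iic j).image (fun j' => f j') ⊆ s.filter (· ≤ p) := by
      intro x hx
      obtain ⟨j', hj', rfl⟩ := mem_image.mp hx
      simp only [mem_Iic] at hj'
      exact mem_filter.mpr ⟨s.orderEmbOfFin_mem h j', le_trans (f.monotone hj') hj⟩
    have hc := card_le_card hsub
    rwa [card_image_of_injective _ f.injective, Fin.card_Iic] at hc
  · intro hj
    by_contra hc
    push_neg at hc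
    have hsub : s.filter (· ≤ p) ⊆ (Finset.Iio j).image (fun j' => f j') := by
      intro x hx
      have hx1 := (mem_filter.mp hx).1
      have hx2 := (mem_filter.mp hx).2
      have hr : x ∈ Set.range (s.orderEmbOfFin h) := by
        rw [range_orderEmbOfFin]
        exact hx1
      obtain ⟨i, hi⟩ := hr
      have hfi : f i = x := hi
      have hij : i < j := by
        rw [← f.lt_iff_lt]
        show (f i : ℕ) < f j
        omega
      exact mem_image.mpr ⟨i, by simpa using hij, hfi⟩
    have hcard := card_le_card hsub
    have := card_image_le (s := Finset.Iio j) (f := fun j' => f j')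
    rw [Fin.card_Iio] at this
    omega

/-- pc vs filter -/
lemma pc_eq_filter {s : Finset ℕ} (hpos : ∀ x ∈ s, 1 ≤ x) (p : ℕ) :
    pc s p = (s.filter (· ≤ p)).card := by
  unfold pc
  congr 1
  ext x
  simp only [mem_inter, mem_Icc, mem_filter]
  exact ⟨fun ⟨h1, _, h3⟩ => ⟨h1, h3⟩, fun ⟨h1, h2⟩ => ⟨h1, hpos x h1, h2⟩⟩

end CSB
end PART3
section PART4
open Finset
namespace CSB

variable (n : ℕ) (E : Finset ℕ)

/-- enumeration of the opener set -/
noncomputable def emb : Fin (Aset n E).card ↪o ℕ := (Aset n E).orderEmbOfFin rfl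

/-- enumeration of the closer set: `embB j = rv (emb (rev j))`. -/
noncomputable def embB : Fin (Aset n E).card → ℕ := fun j => rv n (emb n E j.rev)

/-- the opposite-rank opener -/
noncomputable def opp (x : ℕ) : ℕ :=
  if hx : x ∈ Aset n E then
    ((Aset n E).orderIsoOfFin rfl (((Aset n E).orderIsoOfFin rfl).symm ⟨x, hx⟩).rev : ℕ)
  else x

/-- the involution, as a function on 1-based positions -/
noncomputable def gfun (x : ℕ) : ℕ :=
  if x ∈ Aset n E then rv n (opp n E x)
  else if rv n x ∈ Aset n E then opp n E (rv n x) else x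

variable {n E}

lemma emb_mem (j) : emb n E j ∈ Aset n E := (Aset n E).orderEmbOfFin_mem rfl j

lemma exists_emb {x : ℕ} (hx : x ∈ Aset n E) : ∃ j, emb n E j = x := by
  have : x ∈ Set.range (emb n E) := by
    rw [emb, range_orderEmbOfFin]; exact hx
  exact this

lemma opp_emb (j) : opp n E (emb n E j) = emb n E j.rev := by
  rw [opp, dif_pos (emb_mem j)]
  have h1 : ((Aset n E).orderIsoOfFin rfl).symm ⟨emb n E j, emb_mem j⟩ = j := by
    apply ((Aset n E).orderIsoOfFin rfl).injective
    simp only [OrderIso.apply_symm_apply]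
    apply Subtype.ext
    rw [coe_orderIsoOfFin_apply]
    rfl
  rw [h1]
  rw [coe_orderIsoOfFin_apply]
  rfl

lemma embB_eq_rank (hE : E ⊆ Icc 1 n) (j) :
    embB n E j = (Bset n E).orderEmbOfFin (card_B_eq hE) j := by
  have hmono : StrictMono (embB n E) := by
    intro a b hab
    have h1 : (emb n E b.rev : ℕ) < emb n E a.rev := by
      exact_mod_cast (emb n E).strictMono (by
        rw [Fin.rev_lt_rev]; exact hab)
    have h2 := Aset_subset hE (emb_mem (n := n) (E := E) a.rev)
    have h3 := Aset_subset hE (emb_mem (n := n) (E := E) b.rev)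
    simp only [mem_Icc] at h2 h3
    unfold embB rv
    omega
  have hmem : ∀ j, embB n E j ∈ Bset n E := fun j =>
    mem_image.mpr ⟨emb n E j.rev, emb_mem _, rfl⟩
  have := orderEmbOfFin_unique (card_B_eq hE) hmem hmono
  exact congrFun this j

lemma exists_embB (hE : E ⊆ Icc 1 n) {x : ℕ} (hx : x ∈ Bset n E) : ∃ j, embB n E j = x := by
  have : x ∈ Set.range ((Bset n E).orderEmbOfFin (card_B_eq hE)) := by
    rw [range_orderEmbOfFin]; exact hx
  obtain ⟨j, hj⟩ := this
  exact ⟨j, by rw [embB_eq_rank hE]; exact hj⟩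

/-- key inequality: each opener is below its matched closer -/
lemma emb_lt_embB (hE : E ⊆ Icc 1 n) (j) : emb n E j < embB n E j := by
  set b := embB n E j with hb
  have hbB : b ∈ Bset n E := by
    rw [hb]; exact mem_image.mpr ⟨emb n E j.rev, emb_mem _, rfl⟩
  have hbpos : ∀ x ∈ Bset n E, 1 ≤ x := by
    intro x hx; have := Bset_subset hE hx; simp only [mem_Icc] at this; omega
  have hapos : ∀ x ∈ Aset n E, 1 ≤ x := by
    intro x hx; have := Aset_subset hE hx; simp only [mem_Icc] at this; omega
  have h1 : (j : ℕ) < ((Bset n E).filter (· ≤ b)).card := by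
    rw [← rank_le_iff (card_B_eq hE) j, ← embB_eq_rank hE]
  have h2 : ((Bset n E).filter (· ≤ b)).card ≤ ((Aset n E).filter (· ≤ b)).card := by
    rw [← pc_eq_filter hbpos, ← pc_eq_filter hapos]
    exact prefix_all hE b
  have h3 : emb n E j ≤ b := (rank_le_iff rfl j).mpr (by omega)
  have hne : emb n E j ≠ b := by
    intro h
    have := AB_disjoint hE
    rw [disjoint_left] at this
    exact this (emb_mem j) (h ▸ hbB)
  omega

lemma gfun_emb (j) : gfun n E (emb n E j) = embB n E j := by
  rw [gfun, if_pos (emb_mem j), opp_emb]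
  rfl

lemma gfun_embB (hE : E ⊆ Icc 1 n) (j) : gfun n E (embB n E j) = emb n E j := by
  have hbB : embB n E j ∈ Bset n E := mem_image.mpr ⟨emb n E j.rev, emb_mem _, rfl⟩
  have hnA : embB n E j ∉ Aset n E := by
    intro h
    have := AB_disjoint hE
    rw [disjoint_left] at this
    exact this h hbB
  have h2 := Aset_subset hE (emb_mem (n := n) (E := E) j.rev)
  simp only [mem_Icc] at h2
  have hrv : rv n (embB n E j) = emb n E j.rev := by
    unfold embB; exact rv_rv (by omega)
  rw [gfun, if_neg hnA, hrv, if_pos (emb_mem j.rev), opp_emb, Fin.rev_rev]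

lemma gfun_fix (hE : E ⊆ Icc 1 n) {x : ℕ} (hxA : x ∉ Aset n E) (hxB : x ∉ Bset n E) :
    gfun n E x = x := by
  rw [gfun, if_neg hxA, if_neg ?_]
  intro h
  by_cases hx : 1 ≤ x ∧ x ≤ 2 * n
  · exact hxB ((mem_B_iff hE hx.2).mpr h)
  · have := Aset_subset hE h
    simp only [mem_Icc] at this
    unfold rv at this
    omega

lemma gfun_lt_of_A (hE : E ⊆ Icc 1 n) {x : ℕ} (hx : x ∈ Aset n E) : x < gfun n E x := by
  obtain ⟨j, rfl⟩ := exists_emb hx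
  rw [gfun_emb]
  exact emb_lt_embB hE j

lemma gfun_lt_of_B (hE : E ⊆ Icc 1 n) {x : ℕ} (hx : x ∈ Bset n E) : gfun n E x < x := by
  obtain ⟨j, rfl⟩ := exists_embB hE hx
  rw [gfun_embB hE]
  exact emb_lt_embB hE j

lemma gfun_invol (hE : E ⊆ Icc 1 n) (x : ℕ) : gfun n E (gfun n E x) = x := by
  by_cases hxA : x ∈ Aset n E
  · obtain ⟨j, rfl⟩ := exists_emb hxA
    rw [gfun_emb, gfun_embB hE]
  · by_cases hxB : x ∈ Bset n E
    · obtain ⟨j, rfl⟩ := exists_embB hE hxB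
      rw [gfun_embB hE, gfun_emb]
    · rw [gfun_fix hE hxA hxB, gfun_fix hE hxA hxB]

lemma gfun_mem (hE : E ⊆ Icc 1 n) {x : ℕ} (hx : x ∈ Icc 1 (2 * n)) :
    gfun n E x ∈ Icc 1 (2 * n) := by
  by_cases hxA : x ∈ Aset n E
  · obtain ⟨j, rfl⟩ := exists_emb hxA
    rw [gfun_emb]
    exact Bset_subset hE (mem_image.mpr ⟨emb n E j.rev, emb_mem _, rfl⟩)
  · by_cases hxB : x ∈ Bset n E
    · obtain ⟨j, rfl⟩ := exists_embB hE hxB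
      rw [gfun_embB hE]
      exact Aset_subset hE (emb_mem j)
    · rwa [gfun_fix hE hxA hxB]

lemma gfun_rv (hE : E ⊆ Icc 1 n) {x : ℕ} (hx1 : 1 ≤ x) (hx2 : x ≤ 2 * n) :
    gfun n E (rv n x) = rv n (gfun n E x) := by
  by_cases hxA : x ∈ Aset n E
  · -- rv x ∈ B; gfun x = rv (opp x); gfun (rv x) = opp x
    have hrvB : rv n x ∈ Bset n E := by
      rw [mem_B_iff hE (by unfold rv; omega), rv_rv (by omega)]
      exact hxA
    obtain ⟨j, rfl⟩ := exists_emb hxA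
    have hrv : rv n (emb n E j) = embB n E j.rev := by
      unfold embB; rw [Fin.rev_rev]
    rw [hrv, gfun_embB hE, gfun_emb]
    have h3 := Aset_subset hE (emb_mem (n := n) (E := E) j.rev)
    simp only [mem_Icc] at h3
    unfold embB
    rw [rv_rv (by omega)]
  · by_cases hxB : x ∈ Bset n E
    · obtain ⟨j, rfl⟩ := exists_embB hE hxB
      have h2 := Aset_subset hE (emb_mem (n := n) (E := E) j.rev)
      simp only [mem_Icc] at h2
      have hrv : rv n (embB n E j) = emb n E j.rev := by
        unfold embB; exact rv_rv (by omega)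
      rw [hrv, gfun_emb, gfun_embB hE]
      unfold embB; rw [Fin.rev_rev]
    · have h1 : rv n x ∉ Aset n E := by
        intro h
        exact hxB ((mem_B_iff hE hx2).mpr h)
      have h2 : rv n x ∉ Bset n E := by
        intro h
        rw [mem_B_iff hE (by unfold rv; omega), rv_rv (by omega)] at h
        exact hxA h
      rw [gfun_fix hE h1 h2, gfun_fix hE hxA hxB]

lemma gfun_monoA (hE : E ⊆ Icc 1 n) {x y : ℕ} (hx : x ∈ Aset n E) (hy : y ∈ Aset n E)
    (hxy : x < y) : gfun n E x < gfun n E y := by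
  obtain ⟨j, rfl⟩ := exists_emb hx
  obtain ⟨j', rfl⟩ := exists_emb hy
  rw [gfun_emb, gfun_emb]
  have hj : j < j' := (emb n E).strictMono.lt_iff_lt.mp hxy
  rw [embB_eq_rank hE, embB_eq_rank hE]
  exact ((Bset n E).orderEmbOfFin (card_B_eq hE)).strictMono hj

lemma gfun_monoC (hE : E ⊆ Icc 1 n) {x y : ℕ} (hx : x ∈ Icc 1 (2 * n)) (hy : y ∈ Icc 1 (2 * n))
    (hxA : x ∉ Aset n E) (hyA : y ∉ Aset n E) (hxy : x < y) : gfun n E x < gfun n E y := by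
  simp only [mem_Icc] at hx hy
  by_cases hxB : x ∈ Bset n E
  · by_cases hyB : y ∈ Bset n E
    · obtain ⟨j, rfl⟩ := exists_embB hE hxB
      obtain ⟨j', rfl⟩ := exists_embB hE hyB
      rw [gfun_embB hE, gfun_embB hE]
      have hj : j < j' := by
        rw [embB_eq_rank hE, embB_eq_rank hE] at hxy
        exact ((Bset n E).orderEmbOfFin (card_B_eq hE)).strictMono.lt_iff_lt.mp hxy
      exact (emb n E).strictMono hj
    · calc gfun n E x < x := gfun_lt_of_B hE hxB
        _ < y := hxy
        _ = gfun n E y := (gfun_fix hE hyA hyB).symm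
  · by_cases hyB : y ∈ Bset n E
    · -- x fixed, y a closer: need x < matched opener of y
      rw [gfun_fix hE hxA hxB]
      obtain ⟨j, rfl⟩ := exists_embB hE hyB
      rw [gfun_embB hE]
      by_contra hc
      push_neg at hc
      -- emb j ≤ x, so j < pc A x = pc B x, so embB j ≤ x < embB j, contra
      have hapos : ∀ z ∈ Aset n E, 1 ≤ z := by
        intro z hz; have := Aset_subset hE hz; simp only [mem_Icc] at this; omega
      have hbpos : ∀ z ∈ Bset n E, 1 ≤ z := by
        intro z hz; have := Bset_subset hE hz; simp only [mem_Icc] at this; omega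
      have h1 : (j : ℕ) < ((Aset n E).filter (· ≤ x)).card :=
        (rank_le_iff rfl j).mp hc
      have h2 : pc (Aset n E) x = pc (Bset n E) x :=
        fixed_count hE hx.1 hx.2 hxA hxB
      rw [pc_eq_filter hapos, pc_eq_filter hbpos] at h2
      have h3 : embB n E j ≤ x := by
        rw [embB_eq_rank hE]
        exact (rank_le_iff (card_B_eq hE) j).mpr (by omega)
      omega
    · rw [gfun_fix hE hxA hxB, gfun_fix hE hyA hyB]
      exact hxy

end CSB
end PART4
section PART5
open Finset
namespace CSB

variable {n : ℕ} {E : Finset ℕ}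

lemma gfun_mem' (hE : E ⊆ Icc 1 n) {x : ℕ} (h1 : 1 ≤ x) (h2 : x ≤ 2 * n) :
    1 ≤ gfun n E x ∧ gfun n E x ≤ 2 * n := by
  have := gfun_mem hE (mem_Icc.mpr ⟨h1, h2⟩)
  simpa [mem_Icc] using this

noncomputable def gperm (n : ℕ) (E : Finset ℕ) : Equiv.Perm (Fin (2 * n)) :=
  if hE : E ⊆ Icc 1 n then
    Function.Involutive.toPerm
      (fun x => ⟨gfun n E ((x : ℕ) + 1) - 1, by
        have hx : 1 ≤ (x : ℕ) + 1 ∧ (x : ℕ) + 1 ≤ 2 * n := ⟨by omega, by have := x.2; omega⟩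
        have := gfun_mem' hE hx.1 hx.2
        omega⟩)
      (by
        intro x
        apply Fin.ext
        have hx : 1 ≤ (x : ℕ) + 1 ∧ (x : ℕ) + 1 ≤ 2 * n := ⟨by omega, by have := x.2; omega⟩
        have h1 := gfun_mem' hE hx.1 hx.2
        simp only
        rw [Nat.sub_add_cancel h1.1, gfun_invol hE]
        omega)
  else 1

lemma gperm_pval (hE : E ⊆ Icc 1 n) {i : ℕ} (h1 : 1 ≤ i) (h2 : i ≤ 2 * n) :
    pval (gperm n E) i = gfun n E i := by
  rw [pval_eq _ h1 h2, gperm, dif_pos hE]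
  change (gfun n E (((⟨i - 1, by omega⟩ : Fin (2 * n)) : ℕ) + 1) - 1) + 1 = gfun n E i
  simp only
  have h3 : i - 1 + 1 = i := by omega
  rw [h3]
  have := gfun_mem' hE h1 h2
  omega

lemma gperm_involutive (hE : E ⊆ Icc 1 n) : Function.Involutive ⇑(gperm n E) := by
  rw [gperm, dif_pos hE]
  intro x
  change (⟨gfun n E (((⟨gfun n E ((x : ℕ) + 1) - 1, _⟩ : Fin (2 * n)) : ℕ) + 1) - 1, _⟩ : Fin (2 * n)) = x
  apply Fin.ext
  have hx : 1 ≤ (x : ℕ) + 1 ∧ (x : ℕ) + 1 ≤ 2 * n := ⟨by omega, by have := x.2; omega⟩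
  have h1 := gfun_mem' hE hx.1 hx.2
  simp only
  rw [Nat.sub_add_cancel h1.1, gfun_invol hE]
  omega

lemma gperm_centro (hE : E ⊆ Icc 1 n) : Centro (gperm n E) := by
  intro i hi
  rw [mem_Icc] at hi
  have hrv : 2 * n + 1 - i = rv n i := rfl
  have hrvb : 1 ≤ rv n i ∧ rv n i ≤ 2 * n := by unfold rv; omega
  rw [gperm_pval hE hi.1 hi.2, hrv, gperm_pval hE hrvb.1 hrvb.2]
  rw [gfun_rv hE hi.1 hi.2]
  have := gfun_mem' hE hi.1 hi.2
  unfold rv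
  omega

lemma mem_A_iff_gfun (hE : E ⊆ Icc 1 n) {x : ℕ} (h1 : 1 ≤ x) (h2 : x ≤ 2 * n) :
    x ∈ Aset n E ↔ x < gfun n E x := by
  constructor
  · exact gfun_lt_of_A hE
  · intro h
    by_contra hA
    by_cases hB : x ∈ Bset n E
    · have := gfun_lt_of_B hE hB; omega
    · rw [gfun_fix hE hA hB] at h; omega

lemma gperm_exc_iff (hE : E ⊆ Icc 1 n) {i : ℕ} (h1 : 1 ≤ i) (h2 : i ≤ 2 * n) :
    (i < pval (gperm n E) i ↔ i ∈ Aset n E) := by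
  rw [gperm_pval hE h1 h2, mem_A_iff_gfun hE h1 h2]

lemma gperm_Epi (hE : E ⊆ Icc 1 n) : Epi (gperm n E) = E := by
  ext i
  simp only [Epi, mem_filter, mem_Icc]
  constructor
  · rintro ⟨⟨hi1, hi2⟩, hlt⟩
    have := (gperm_exc_iff hE hi1 (by omega)).mp hlt
    exact (A_lower hE hi2).mp this
  · intro hi
    have hib := hE hi
    rw [mem_Icc] at hib
    refine ⟨⟨hib.1, hib.2⟩, ?_⟩
    exact (gperm_exc_iff hE hib.1 (by omega)).mpr ((A_lower hE hib.2).mpr hi)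

lemma gperm_avoids (hE : E ⊆ Icc 1 n) : Avoids321 (gperm n E) := by
  apply avoids_of_mono
  all_goals {
    intro x y hx hy hxy
    have hbx : 1 ≤ (x : ℕ) + 1 ∧ (x : ℕ) + 1 ≤ 2 * n := ⟨by omega, by have := x.2; omega⟩
    have hby : 1 ≤ (y : ℕ) + 1 ∧ (y : ℕ) + 1 ≤ 2 * n := ⟨by omega, by have := y.2; omega⟩
    have ex : pval (gperm n E) ((x : ℕ) + 1) = ((gperm n E) x : ℕ) + 1 := pval_fin _ x
    have ey : pval (gperm n E) ((y : ℕ) + 1) = ((gperm n E) y : ℕ) + 1 := pval_fin _ y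
    have gx := gperm_pval hE hbx.1 hbx.2
    have gy := gperm_pval hE hby.1 hby.2
    have hxval : ((gperm n E) x : ℕ) + 1 = gfun n E ((x : ℕ) + 1) := by rw [← ex, gx]
    have hyval : ((gperm n E) y : ℕ) + 1 = gfun n E ((y : ℕ) + 1) := by rw [← ey, gy]
    have hxy' : (x : ℕ) + 1 < (y : ℕ) + 1 := by
      have : (x : ℕ) < (y : ℕ) := hxy
      omega
    have goal : gfun n E ((x : ℕ) + 1) < gfun n E ((y : ℕ) + 1) → ((gperm n E) x : ℕ) < ((gperm n E) y : ℕ) := by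
      intro h; omega
    show (gperm n E) x < (gperm n E) y
    have hx' : (x : ℕ) < ((gperm n E) x : ℕ) ∨ ((gperm n E) x : ℕ) ≤ (x : ℕ) := by omega
    first
    | · -- excedance case
        have hxA : (x : ℕ) + 1 ∈ Aset n E := by
          rw [mem_A_iff_gfun hE hbx.1 hbx.2]
          have : (x : ℕ) < ((gperm n E) x : ℕ) := hx
          omega
        have hyA : (y : ℕ) + 1 ∈ Aset n E := by
          rw [mem_A_iff_gfun hE hby.1 hby.2]
          have : (y : ℕ) < ((gperm n E) y : ℕ) := hy
          omega
        exact goal (gfun_monoA hE hxA hyA hxy')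
    | · -- non-excedance case
        have hxA : (x : ℕ) + 1 ∉ Aset n E := by
          rw [mem_A_iff_gfun hE hbx.1 hbx.2]
          have : ((gperm n E) x : ℕ) ≤ (x : ℕ) := hx
          omega
        have hyA : (y : ℕ) + 1 ∉ Aset n E := by
          rw [mem_A_iff_gfun hE hby.1 hby.2]
          have : ((gperm n E) y : ℕ) ≤ (y : ℕ) := hy
          omega
        exact goal (gfun_monoC hE (mem_Icc.mpr hbx) (mem_Icc.mpr hby) hxA hyA hxy')
  }

end CSB
end PART5
section PART6
open Finset
namespace CSB

variable {n : ℕ} (π : Equiv.Perm (Fin (2 * n)))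

lemma Epi_subset : Epi π ⊆ Icc 1 n := filter_subset _ _

lemma XS_subset : XS π ⊆ Icc 1 (2 * n) := filter_subset _ _
lemma YS_subset : YS π ⊆ Icc 1 (2 * n) := filter_subset _ _

lemma mem_XS_iff {i : ℕ} (h1 : 1 ≤ i) (h2 : i ≤ 2 * n) :
    i ∈ XS π ↔ i < pval π i := by
  simp [XS, mem_filter, mem_Icc, h1, h2]

lemma mem_YS_iff {i : ℕ} (h1 : 1 ≤ i) (h2 : i ≤ 2 * n) :
    i ∈ YS π ↔ pval π i < i := by
  simp [YS, mem_filter, mem_Icc, h1, h2]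

lemma mem_Epi_iff {i : ℕ} (h1 : 1 ≤ i) (h2 : i ≤ n) :
    i ∈ Epi π ↔ i < pval π i := by
  simp [Epi, mem_filter, mem_Icc, h1, h2]

lemma centro_pval (hc : Centro π) {i : ℕ} (h1 : 1 ≤ i) (h2 : i ≤ 2 * n) :
    pval π (rv n i) = rv n (pval π i) := by
  have h := hc i (mem_Icc.mpr ⟨h1, h2⟩)
  have hb := pval_mem π h1 h2
  have hb2 : 1 ≤ 2 * n + 1 - i ∧ 2 * n + 1 - i ≤ 2 * n := by omega
  have hb3 := pval_mem π hb2.1 hb2.2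
  unfold rv
  omega

lemma XS_rv_YS (hc : Centro π) {i : ℕ} (h1 : 1 ≤ i) (h2 : i ≤ 2 * n) :
    i ∈ XS π ↔ rv n i ∈ YS π := by
  have hrb : 1 ≤ rv n i ∧ rv n i ≤ 2 * n := by unfold rv; omega
  rw [mem_XS_iff π h1 h2, mem_YS_iff π hrb.1 hrb.2, centro_pval π hc h1 h2]
  have hb := pval_mem π h1 h2
  unfold rv
  omega

lemma YS_rv_XS (hc : Centro π) {i : ℕ} (h1 : 1 ≤ i) (h2 : i ≤ 2 * n) :
    i ∈ YS π ↔ rv n i ∈ XS π := by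
  have hrb : 1 ≤ rv n i ∧ rv n i ≤ 2 * n := by unfold rv; omega
  have h := XS_rv_YS π hc hrb.1 hrb.2
  rw [rv_rv (by omega)] at h
  exact h.symm

/-- no fixed point strictly inside an arc, pval version -/
lemma no_fix_in_arc (hinv : Function.Involutive ⇑π) (ha : Avoids321 π)
    {a f : ℕ} (ha1 : 1 ≤ a) (hf2 : f ≤ 2 * n) (h1 : a < f) (h2 : f < pval π a)
    (h3 : pval π f = f) : False := by
  have hb : pval π a ≤ 2 * n := (pval_mem π ha1 (by omega)).2
  have hpa1 : 1 ≤ pval π a := (pval_mem π ha1 (by omega)).1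
  obtain ⟨x, hx⟩ : ∃ x : Fin (2 * n), (x : ℕ) = a - 1 := ⟨⟨a - 1, by omega⟩, rfl⟩
  obtain ⟨y, hy⟩ : ∃ y : Fin (2 * n), (y : ℕ) = f - 1 := ⟨⟨f - 1, by omega⟩, rfl⟩
  obtain ⟨z, hz⟩ : ∃ z : Fin (2 * n), (z : ℕ) = pval π a - 1 := ⟨⟨pval π a - 1, by omega⟩, rfl⟩
  have ea : pval π a = (π x : ℕ) + 1 := pval_val π ha1 (by omega) x hx
  have ef : pval π f = (π y : ℕ) + 1 := pval_val π (by omega) hf2 y hy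
  have epa : pval π (pval π a) = (π z : ℕ) + 1 := pval_val π hpa1 hb z hz
  have hpp : pval π (pval π a) = a := pval_pval π hinv ha1 (by omega)
  exact ha ⟨x, y, z, by rw [Fin.lt_def]; omega, by rw [Fin.lt_def]; omega,
    by rw [Fin.lt_def]; omega, by rw [Fin.lt_def]; omega⟩

/-- counting: lower-prefix deficiencies are matched with openers closing early -/
lemma YS_count (hinv : Function.Involutive ⇑π) {i : ℕ} (hi : i ≤ 2 * n) :
    pc (YS π) i = (((XS π) ∩ Icc 1 i).filter (fun a => pval π a ≤ i)).card := by
  apply card_bij (fun y _ => pval π y)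
  · intro y hy
    simp only [pc, mem_inter, mem_Icc] at hy ⊢
    obtain ⟨hy1, hy2, hy3⟩ := hy
    have hyb := (mem_Icc.mp (YS_subset π hy1))
    have hlt := (mem_YS_iff π hyb.1 hyb.2).mp hy1
    have hpb := pval_mem π hyb.1 hyb.2
    have hpp := pval_pval π hinv hyb.1 hyb.2
    rw [mem_filter, mem_inter, mem_Icc, mem_XS_iff π hpb.1 hpb.2]
    exact ⟨⟨by rw [hpp]; omega, hpb.1, by omega⟩, by rw [hpp]; omega⟩
  · intro y hy z hz h
    simp only [pc, mem_inter, mem_Icc] at hy hz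
    have hyb := (mem_Icc.mp (YS_subset π hy.1))
    have hzb := (mem_Icc.mp (YS_subset π hz.1))
    exact pval_injOn π hyb.1 hyb.2 hzb.1 hzb.2 h
  · intro b hb
    simp only [mem_filter, mem_inter, mem_Icc] at hb
    obtain ⟨⟨hb1, hb2, hb3⟩, hb4⟩ := hb
    have hbb := (mem_Icc.mp (XS_subset π hb1))
    have hlt := (mem_XS_iff π hbb.1 hbb.2).mp hb1
    have hpb := pval_mem π hbb.1 hbb.2
    have hpp := pval_pval π hinv hbb.1 hbb.2
    refine ⟨pval π b, ?_, hpp⟩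
    simp only [pc, mem_inter, mem_Icc]
    rw [mem_YS_iff π hpb.1 hpb.2]
    exact ⟨by rw [hpp]; omega, hpb.1, hb4⟩

end CSB
end PART6
section PART7
open Finset
namespace CSB

variable {n : ℕ} (π : Equiv.Perm (Fin (2 * n)))

lemma XS_YS_disj {i : ℕ} (hX : i ∈ XS π) (hY : i ∈ YS π) : False := by
  have h1 := (mem_filter.mp hX).2
  have h2 := (mem_filter.mp hY).2
  omega

lemma pval_mem_YS (hinv : Function.Involutive ⇑π) {x : ℕ} (hx : x ∈ XS π) :
    pval π x ∈ YS π := by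
  have hb := mem_Icc.mp (XS_subset π hx)
  have hlt := (mem_XS_iff π hb.1 hb.2).mp hx
  have hpb := pval_mem π hb.1 hb.2
  have hpp := pval_pval π hinv hb.1 hb.2
  rw [mem_YS_iff π hpb.1 hpb.2, hpp]
  exact hlt

lemma scan_det (hinv : Function.Involutive ⇑π) (ha : Avoids321 π) :
    ∀ i, i ≤ n → ((1 ≤ i → (i ∈ YS π ↔ i ∈ Dset n (Epi π))) ∧
      cnt (Epi π) i + pc (YS π) i = pc (XS π) i) := by
  intro i
  induction i with
  | zero => exact fun _ => ⟨fun h => absurd h (by omega), by simp [cnt, pc_zero]⟩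
  | succ i ih =>
    intro hi
    obtain ⟨_, ihc⟩ := ih (by omega)
    have hb1 : (1 : ℕ) ≤ i + 1 := by omega
    have hb2 : i + 1 ≤ 2 * n := by omega
    have hXE : i + 1 ∈ XS π ↔ i + 1 ∈ Epi π := by
      rw [mem_XS_iff π hb1 hb2, mem_Epi_iff π hb1 (by omega)]
    have hYc := YS_count π hinv (show i ≤ 2 * n by omega)
    by_cases hm : i + 1 ∈ Epi π
    · have hX : i + 1 ∈ XS π := hXE.mpr hm
      have hY : i + 1 ∉ YS π := fun h => XS_YS_disj π hX h
      have hD : i + 1 ∉ Dset n (Epi π) := fun h => Dset_not_mem_E h hm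
      constructor
      · exact fun _ => ⟨fun h => absurd h hY, fun h => absurd h hD⟩
      · rw [pc_succ, pc_succ, if_pos hX, if_neg hY]
        simp only [cnt, if_pos hm]
        omega
    · have hX : i + 1 ∉ XS π := fun h => hm (hXE.mp h)
      by_cases hcnt : 0 < cnt (Epi π) i
      · -- there is an unmatched opener a ≤ i
        have hex : ∃ a ∈ XS π ∩ Icc 1 i, ¬ pval π a ≤ i := by
          by_contra hno
          push_neg at hno
          have heq : ((XS π ∩ Icc 1 i).filter (fun a => pval π a ≤ i)) = XS π ∩ Icc 1 i :=
            filter_true_of_mem hno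
          rw [heq] at hYc
          have : pc (XS π) i = (XS π ∩ Icc 1 i).card := rfl
          omega
        obtain ⟨a, haX, hale⟩ := hex
        rw [mem_inter, mem_Icc] at haX
        obtain ⟨haXS, ha1, hai⟩ := haX
        push_neg at hale
        have hY : i + 1 ∈ YS π := by
          by_cases hpa : pval π a = i + 1
          · have hab := mem_Icc.mp (XS_subset π haXS)
            have hpp := pval_pval π hinv hab.1 hab.2
            rw [hpa] at hpp
            rw [mem_YS_iff π hb1 hb2, hpp]
            omega
          · -- i+1 is strictly inside the arc; it cannot be fixed
            have hfix : pval π (i + 1) ≠ i + 1 := by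
              intro hf
              exact no_fix_in_arc π hinv ha ha1 hb2 (by omega) (by omega) hf
            have hnX := hX
            rw [mem_XS_iff π hb1 hb2] at hnX
            rw [mem_YS_iff π hb1 hb2]
            omega
        have hD : i + 1 ∈ Dset n (Epi π) := by
          simp only [Dset, mem_filter, mem_Icc, Nat.add_sub_cancel]
          exact ⟨⟨by omega, by omega⟩, hm, hcnt⟩
        refine ⟨fun _ => ⟨fun _ => hD, fun _ => hY⟩, ?_⟩
        rw [pc_succ, pc_succ, if_neg hX, if_pos hY]
        simp only [cnt, if_neg hm]
        omega
      · -- all openers ≤ i are matched; i+1 is fixed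
        have hfil : ((XS π ∩ Icc 1 i).filter (fun a => pval π a ≤ i)) = XS π ∩ Icc 1 i := by
          apply eq_of_subset_of_card_le (filter_subset _ _)
          have : pc (XS π) i = (XS π ∩ Icc 1 i).card := rfl
          omega
        have hY : i + 1 ∉ YS π := by
          intro hY
          have hpb := pval_mem π hb1 hb2
          have hlt := (mem_YS_iff π hb1 hb2).mp hY
          set a := pval π (i + 1) with hadef
          have hpp := pval_pval π hinv hb1 hb2
          rw [← hadef] at hpp
          have haX : a ∈ XS π := by
            rw [mem_XS_iff π hpb.1 hpb.2, hpp]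
            omega
          have hmem : a ∈ XS π ∩ Icc 1 i := by
            rw [mem_inter, mem_Icc]
            exact ⟨haX, hpb.1, by omega⟩
          rw [← hfil, mem_filter] at hmem
          omega
        have hD : i + 1 ∉ Dset n (Epi π) := by
          simp only [Dset, mem_filter, mem_Icc, Nat.add_sub_cancel]
          intro h
          exact absurd h.2.2 hcnt
        refine ⟨fun _ => ⟨fun h => absurd h hY, fun h => absurd h hD⟩, ?_⟩
        rw [pc_succ, pc_succ, if_neg hX, if_neg hY]
        simp only [cnt, if_neg hm]
        omega

lemma A_upper' {E : Finset ℕ} (hE : E ⊆ Icc 1 n) {x : ℕ} (hx1 : n < x) :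
    x ∈ Aset n E ↔ rv n x ∈ Dset n E := by
  constructor
  · intro h
    rcases mem_union.mp h with h' | h'
    · have := hE h'; rw [mem_Icc] at this; omega
    · obtain ⟨d, hd, rfl⟩ := mem_image.mp h'
      have hdb := mem_Icc.mp (Dset_subset hd)
      rwa [rv_rv (by omega)]
  · intro h
    have hdb := mem_Icc.mp (Dset_subset h)
    have hx2 : x ≤ 2 * n := by unfold rv at hdb; omega
    exact mem_union_right _ (mem_image.mpr ⟨rv n x, h, rv_rv (by omega)⟩)

lemma XS_eq_Aset (hinv : Function.Involutive ⇑π) (hc : Centro π) (ha : Avoids321 π) :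
    XS π = Aset n (Epi π) := by
  have hE : Epi π ⊆ Icc 1 n := Epi_subset π
  ext x
  by_cases hb : 1 ≤ x ∧ x ≤ 2 * n
  · by_cases hx : x ≤ n
    · rw [A_lower hE hx, mem_XS_iff π hb.1 hb.2, mem_Epi_iff π hb.1 hx]
    · rw [A_upper' hE (by omega), XS_rv_YS π hc hb.1 hb.2]
      have hrb : 1 ≤ rv n x ∧ rv n x ≤ n := by unfold rv; omega
      exact (scan_det π hinv ha (rv n x) hrb.2).1 hrb.1
  · constructor
    · intro h; have := mem_Icc.mp (XS_subset π h); omega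
    · intro h; have := mem_Icc.mp (Aset_subset hE h); omega

lemma YS_eq_Bset (hinv : Function.Involutive ⇑π) (hc : Centro π) (ha : Avoids321 π) :
    YS π = Bset n (Epi π) := by
  have hE : Epi π ⊆ Icc 1 n := Epi_subset π
  ext y
  by_cases hb : 1 ≤ y ∧ y ≤ 2 * n
  · rw [mem_B_iff hE hb.2, ← XS_eq_Aset π hinv hc ha, YS_rv_XS π hc hb.1 hb.2]
  · constructor
    · intro h; have := mem_Icc.mp (YS_subset π h); omega
    · intro h; have := mem_Icc.mp (Bset_subset hE h); omega

lemma pval_monoXS (ha : Avoids321 π) {x y : ℕ} (hx : x ∈ XS π) (hy : y ∈ XS π)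
    (hxy : x < y) : pval π x < pval π y := by
  have hbx := mem_Icc.mp (XS_subset π hx)
  have hby := mem_Icc.mp (XS_subset π hy)
  obtain ⟨x0, hx0⟩ : ∃ x0 : Fin (2 * n), (x0 : ℕ) = x - 1 := ⟨⟨x - 1, by omega⟩, rfl⟩
  obtain ⟨y0, hy0⟩ : ∃ y0 : Fin (2 * n), (y0 : ℕ) = y - 1 := ⟨⟨y - 1, by omega⟩, rfl⟩
  have ex : pval π x = (π x0 : ℕ) + 1 := pval_val π hbx.1 hbx.2 x0 hx0
  have ey : pval π y = (π y0 : ℕ) + 1 := pval_val π hby.1 hby.2 y0 hy0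
  have hltx := (mem_XS_iff π hbx.1 hbx.2).mp hx
  have hlty := (mem_XS_iff π hby.1 hby.2).mp hy
  have := mono_exc π ha (x := x0) (y := y0) (by rw [Fin.lt_def]; omega)
    (by rw [Fin.lt_def]; omega) (by rw [Fin.lt_def]; omega)
  rw [Fin.lt_def] at this
  omega

theorem eq_gperm (hinv : Function.Involutive ⇑π) (hc : Centro π) (ha : Avoids321 π) :
    π = gperm n (Epi π) := by
  set E := Epi π with hEdef
  have hE : E ⊆ Icc 1 n := Epi_subset π
  have hXS := XS_eq_Aset π hinv hc ha
  have hYS := YS_eq_Bset π hinv hc ha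
  have hfmem : ∀ j, pval π (emb n E j) ∈ Bset n E := by
    intro j
    rw [← hYS]
    exact pval_mem_YS π hinv (by rw [hXS]; exact emb_mem j)
  have hfmono : StrictMono (fun j => pval π (emb n E j)) := by
    intro j j' hjj
    exact pval_monoXS π ha (by rw [hXS]; exact emb_mem j) (by rw [hXS]; exact emb_mem j')
      ((emb n E).strictMono hjj)
  have hkey : ∀ j, pval π (emb n E j) = embB n E j := by
    intro j
    have h1 := orderEmbOfFin_unique (card_B_eq hE) hfmem hfmono
    have h2 := congrFun h1 j
    rw [h2, embB_eq_rank hE]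
  have hpv : ∀ i, 1 ≤ i → i ≤ 2 * n → pval π i = pval (gperm n E) i := by
    intro i h1 h2
    rw [gperm_pval hE h1 h2]
    by_cases hiA : i ∈ Aset n E
    · obtain ⟨j, rfl⟩ := exists_emb hiA
      rw [gfun_emb]
      exact hkey j
    · by_cases hiB : i ∈ Bset n E
      · obtain ⟨j, rfl⟩ := exists_embB hE hiB
        rw [gfun_embB hE]
        have ha' := mem_Icc.mp (Aset_subset hE (emb_mem (n := n) (E := E) j))
        rw [← hkey j, pval_pval π hinv ha'.1 ha'.2]
      · have hiX : i ∉ XS π := by rw [hXS]; exact hiA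
        have hiY : i ∉ YS π := by rw [hYS]; exact hiB
        rw [gfun_fix hE hiA hiB]
        rw [mem_XS_iff π h1 h2] at hiX
        rw [mem_YS_iff π h1 h2] at hiY
        omega
  apply Equiv.ext
  intro x
  have hb : 1 ≤ (x : ℕ) + 1 ∧ (x : ℕ) + 1 ≤ 2 * n := ⟨by omega, by have := x.2; omega⟩
  have := hpv ((x : ℕ) + 1) hb.1 hb.2
  rw [pval_fin, pval_fin] at this
  exact Fin.ext (by omega)

end CSB
end PART7

/-- The map `π ↦ E_π` is a bijection from `I^C_{2n}(321)` onto the power set of `[n]`. -/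
theorem excedance_set_bijection (n : ℕ) :
    Set.BijOn (fun π => Epi π) ((ICset n : Finset (Equiv.Perm (Fin (2 * n)))) : Set (Equiv.Perm (Fin (2 * n)))) (((Finset.Icc 1 n).powerset : Finset (Finset ℕ)) : Set (Finset ℕ)) := by
  have hmem : ∀ π : Equiv.Perm (Fin (2 * n)), π ∈ ICset n ↔
      Function.Involutive ⇑π ∧ Centro π ∧ Avoids321 π := by
    intro π
    simp [ICset, Finset.mem_filter]
  refine ⟨?_, ?_, ?_⟩
  · intro π hπ
    simp only [Finset.coe_powerset, Set.mem_preimage, Set.mem_powerset_iff,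
      Finset.coe_subset]
    exact CSB.Epi_subset π
  · intro π hπ π' hπ' h
    simp only [Finset.mem_coe] at hπ hπ'
    obtain ⟨h1, h2, h3⟩ := (hmem π).mp hπ
    obtain ⟨h1', h2', h3'⟩ := (hmem π').mp hπ'
    simp only at h
    calc π = CSB.gperm n (Epi π) := CSB.eq_gperm π h1 h2 h3
      _ = CSB.gperm n (Epi π') := by rw [h]
      _ = π' := (CSB.eq_gperm π' h1' h2' h3').symm
  · intro E hEmem
    simp only [Finset.coe_powerset, Set.mem_preimage, Set.mem_powerset_iff,
      Finset.coe_subset] at hEmem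
    refine ⟨CSB.gperm n E, ?_, ?_⟩
    · simp only [Finset.mem_coe]
      rw [hmem]
      exact ⟨CSB.gperm_involutive hEmem, CSB.gperm_centro hEmem, CSB.gperm_avoids hEmem⟩
    · simp only
      exact CSB.gperm_Epi hEmem
end

section
/- For every 321-avoiding centrosymmetric involution π of S_{2n}, the set of descents of π among positions 1,...,n equals {i ∈ [n] : i ∈ E_π and i+1 ∉ E_π}, where E_π = {i ∈ [n] : π(i) > i}. (Here for i = n, note n+1 ∉ E_π by convention since E_π ⊆ [n].) -/
open Finset Polynomial
open scoped Classical

lemma keyA {m : ℕ} (π : Equiv.Perm (Fin m)) (hinv : Function.Involutive π)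
    (h321 : Avoids321 π) (a b : Fin m) (hab : (a : ℕ) + 1 = (b : ℕ)) :
    (π b : ℕ) < (π a : ℕ) ↔ ((a : ℕ) < (π a : ℕ) ∧ (π b : ℕ) ≤ (b : ℕ)) := by
  have hab' : a < b := Fin.lt_def.mpr (by omega)
  constructor
  · intro hd
    have hXa : (a : ℕ) < (π a : ℕ) := by
      by_contra hx
      push_neg at hx
      refine h321 ⟨π b, π a, b, Fin.lt_def.mpr hd, ?_, ?_, ?_⟩
      · exact Fin.lt_def.mpr (lt_of_le_of_lt hx (Fin.lt_def.mp hab'))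
      · rw [hinv a]
        exact Fin.lt_def.mpr (lt_of_lt_of_le hd hx)
      · rw [hinv a, hinv b]
        exact hab'
    have hXb : (π b : ℕ) ≤ (b : ℕ) := by
      by_contra hx
      push_neg at hx
      refine h321 ⟨a, b, π a, hab', ?_, ?_, Fin.lt_def.mpr hd⟩
      · exact Fin.lt_def.mpr (lt_trans hx hd)
      · rw [hinv a]
        exact Fin.lt_def.mpr (lt_of_le_of_lt (by omega) hx)
    exact ⟨hXa, hXb⟩
  · rintro ⟨h1, h2⟩
    by_contra hx
    push_neg at hx
    have heq : π a = π b := Fin.ext (by omega)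
    have := congrArg Fin.val (π.injective heq)
    omega

/-- For `π ∈ I^C_{2n}(321)`, `Des^+(π) = {i ∈ [n] : i ∈ E_π ∧ i+1 ∉ E_π}`. -/
theorem desPlus_eq_excedance_descents (n : ℕ) (π : Equiv.Perm (Fin (2 * n)))
    (hπ : π ∈ ICset n) :
    (DesSet π).filter (· ≤ n) =
      (Finset.Icc 1 n).filter (fun i => i ∈ Epi π ∧ i + 1 ∉ Epi π) := by
  simp only [ICset, Finset.mem_filter, Finset.mem_univ, true_and] at hπ
  obtain ⟨hinv, hcen, h321⟩ := hπ
  ext i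
  simp only [DesSet, Epi, Finset.mem_filter, Finset.mem_Ico, Finset.mem_Icc]
  by_cases hcond : 1 ≤ i ∧ i ≤ n
  · obtain ⟨hi1, hin⟩ := hcond
    have hn1 : 1 ≤ n := le_trans hi1 hin
    have hia : i - 1 < 2 * n := by omega
    have hib : i < 2 * n := by omega
    have hpa : pval π i = (π ⟨i - 1, hia⟩ : ℕ) + 1 := by rw [pval, dif_pos hia]
    have hpb : pval π (i + 1) = (π ⟨i, hib⟩ : ℕ) + 1 := by
      have h' : i + 1 - 1 < 2 * n := by omega
      have hmk : (⟨i + 1 - 1, h'⟩ : Fin (2 * n)) = ⟨i, hib⟩ := by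
        ext; simp
      rw [pval, dif_pos h', hmk]
    have hkey : ((π ⟨i, hib⟩ : ℕ) < (π ⟨i - 1, hia⟩ : ℕ)) ↔
        (i - 1 < (π ⟨i - 1, hia⟩ : ℕ) ∧ (π ⟨i, hib⟩ : ℕ) ≤ i) :=
      keyA π hinv h321 ⟨i - 1, hia⟩ ⟨i, hib⟩ (by show i - 1 + 1 = i; omega)
    by_cases hn : i = n
    · subst hn
      have hc := hcen i (by simp [Finset.mem_Icc]; omega)
      have h2 : 2 * i + 1 - i = i + 1 := by omega
      rw [h2, hpa, hpb] at hc
      rw [hpa, hpb]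
      omega
    · rw [hpa, hpb]
      omega
  · constructor
    · rintro ⟨⟨⟨h1, h2⟩, h3⟩, h4⟩
      omega
    · rintro ⟨⟨h1, h2⟩, _⟩
      omega
end

section
/- The generating polynomial of the statistic des^+ over 321-avoiding centrosymmetric involutions of S_{2n} satisfies ∑_{π ∈ I^C_{2n}(321)} q^{des^+(π)} = ∑_{k ≥ 0} C(n+1, 2k) q^k. -/
open Finset Polynomial
open scoped Classical

namespace ICProof

noncomputable def cnt (P : ℕ → Prop) (i : ℕ) : ℕ := ((Finset.Icc 1 i).filter P).card

lemma cnt_zero (P : ℕ → Prop) : cnt P 0 = 0 := by simp [cnt]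

lemma cnt_succ (P : ℕ → Prop) (i : ℕ) :
    cnt P (i+1) = cnt P i + if P (i+1) then 1 else 0 := by
  unfold cnt
  rw [show Finset.Icc 1 (i+1) = insert (i+1) (Finset.Icc 1 i) by
    ext x; simp [Finset.mem_Icc, Finset.mem_insert]; omega]
  rw [Finset.filter_insert]
  by_cases h : P (i+1)
  · simp [h, Finset.card_insert_of_notMem, Finset.mem_filter]
  · simp [h]

lemma cnt_mono (P : ℕ → Prop) {i j : ℕ} (h : i ≤ j) : cnt P i ≤ cnt P j := by
  induction j with
  | zero => simp_all
  | succ k ih =>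
    rcases Nat.lt_or_ge i (k+1) with h' | h'
    · exact le_trans (ih (by omega)) (by rw [cnt_succ]; omega)
    · have : i = k+1 := by omega
      subst this; rfl

lemma cnt_congr {P Q : ℕ → Prop} {i : ℕ} (h : ∀ j, 1 ≤ j → j ≤ i → (P j ↔ Q j)) :
    cnt P i = cnt Q i := by
  unfold cnt
  congr 1
  apply Finset.filter_congr
  intro x hx
  simp only [Finset.mem_Icc] at hx
  simp [h x hx.1 hx.2]

lemma cnt_step (P : ℕ → Prop) (i : ℕ) : cnt P (i+1) ≤ cnt P i + 1 := by
  rw [cnt_succ]; split <;> omega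

lemma cnt_succ_of (P : ℕ → Prop) {i : ℕ} (h : P (i+1)) :
    cnt P (i+1) = cnt P i + 1 := by rw [cnt_succ]; simp [h]

lemma cnt_succ_of_not (P : ℕ → Prop) {i : ℕ} (h : ¬ P (i+1)) :
    cnt P (i+1) = cnt P i := by rw [cnt_succ]; simp [h]

lemma cnt_stable {P : ℕ → Prop} {m : ℕ} (hm : ∀ j, P j → j ≤ m) {i : ℕ} (h : m ≤ i) :
    cnt P i = cnt P m := by
  unfold cnt
  congr 1
  ext x
  simp only [Finset.mem_filter, Finset.mem_Icc]
  constructor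
  · rintro ⟨⟨h1, h2⟩, h3⟩; exact ⟨⟨h1, hm x h3⟩, h3⟩
  · rintro ⟨⟨h1, h2⟩, h3⟩; exact ⟨⟨h1, le_trans h2 h⟩, h3⟩

lemma cnt_split (P : ℕ → Prop) {m i : ℕ} (h : m ≤ i) :
    cnt P i = cnt P m + ((Finset.Ioc m i).filter P).card := by
  unfold cnt
  rw [← Finset.card_union_of_disjoint, ← Finset.filter_union]
  · congr 2
    ext x; simp [Finset.mem_Icc, Finset.mem_Ioc, Finset.mem_union]; omega
  · apply Finset.disjoint_filter_filter
    rw [Finset.disjoint_left]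
    intro x hx hx'
    simp [Finset.mem_Icc, Finset.mem_Ioc] at hx hx'
    omega

/-- position of the `k`-th element satisfying `P` -/
noncomputable def pos (P : ℕ → Prop) (k : ℕ) : ℕ := sInf {j | k ≤ cnt P j}

lemma pos_le_iff {P : ℕ → Prop} {k : ℕ} (hne : ∃ j, k ≤ cnt P j) (i : ℕ) :
    pos P k ≤ i ↔ k ≤ cnt P i := by
  constructor
  · intro h
    have h1 : k ≤ cnt P (pos P k) := Nat.sInf_mem (s := {j | k ≤ cnt P j}) hne
    exact le_trans h1 (cnt_mono P h)
  · intro h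
    exact Nat.sInf_le h

lemma lt_pos_iff {P : ℕ → Prop} {k : ℕ} (hne : ∃ j, k ≤ cnt P j) (i : ℕ) :
    i < pos P k ↔ cnt P i < k := by
  rw [← not_le, ← not_le, pos_le_iff hne]

lemma pos_spec {P : ℕ → Prop} {k : ℕ} (hk : 1 ≤ k) (hne : ∃ j, k ≤ cnt P j) :
    P (pos P k) ∧ cnt P (pos P k) = k ∧ 1 ≤ pos P k := by
  set p := pos P k with hp
  have h1 : k ≤ cnt P p := Nat.sInf_mem (s := {j | k ≤ cnt P j}) hne
  have hp1 : 1 ≤ p := by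
    by_contra h
    have : p = 0 := by omega
    rw [this, cnt_zero] at h1; omega
  have h2 : cnt P (p - 1) < k := by
    rw [← lt_pos_iff hne]; omega
  have hpp : p - 1 + 1 = p := by omega
  have hstep : cnt P p ≤ cnt P (p-1) + 1 := by
    have := cnt_step P (p-1); rwa [hpp] at this
  have hcnt : cnt P p = k := by omega
  have hP : P p := by
    by_contra hnp
    have := cnt_succ_of_not P (i := p - 1) (by rwa [hpp])
    rw [hpp] at this
    omega
  exact ⟨hP, hcnt, hp1⟩

lemma pos_cnt {P : ℕ → Prop} {j : ℕ} (hj : 1 ≤ j) (hP : P j) : pos P (cnt P j) = j := by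
  have hjj : j - 1 + 1 = j := by omega
  have hstep : cnt P j = cnt P (j-1) + 1 := by
    have := cnt_succ_of P (i := j - 1) (by rwa [hjj])
    rwa [hjj] at this
  have hne : ∃ i, cnt P j ≤ cnt P i := ⟨j, le_refl _⟩
  have h1 : pos P (cnt P j) ≤ j := (pos_le_iff hne j).mpr (le_refl _)
  have h2 : ¬ (pos P (cnt P j) ≤ j - 1) := by
    rw [pos_le_iff hne]; omega
  omega



/-! ### The word construction -/

def lev (T : Finset ℕ) : ℕ → ℕ
  | 0 => 0
  | (i+1) => if (i+1) ∈ T then lev T i + 1 else lev T i - 1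

def isA (n : ℕ) (T : Finset ℕ) (i : ℕ) : Prop :=
  (1 ≤ i ∧ i ≤ n ∧ i ∈ T) ∨
  (n < i ∧ i ≤ 2*n ∧ (2*n+1-i) ∉ T ∧ 0 < lev T (2*n-i))

def isB (n : ℕ) (T : Finset ℕ) (i : ℕ) : Prop :=
  (1 ≤ i ∧ i ≤ n ∧ i ∉ T ∧ 0 < lev T (i-1)) ∨
  (n < i ∧ i ≤ 2*n ∧ (2*n+1-i) ∈ T)

variable {n : ℕ} {T : Finset ℕ}

lemma isA_bounds {i : ℕ} (h : isA n T i) : 1 ≤ i ∧ i ≤ 2*n := by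
  rcases h with ⟨h1,h2,_⟩|⟨h1,h2,_⟩ <;> omega

lemma isB_bounds {i : ℕ} (h : isB n T i) : 1 ≤ i ∧ i ≤ 2*n := by
  rcases h with ⟨h1,h2,_⟩|⟨h1,h2,_⟩ <;> omega

lemma isA_isB_disjoint {i : ℕ} (hA : isA n T i) (hB : isB n T i) : False := by
  rcases hA with ⟨a1,a2,a3⟩|⟨a1,a2,a3,a4⟩ <;> rcases hB with ⟨b1,b2,b3,b4⟩|⟨b1,b2,b3⟩
  · exact b3 a3
  · omega
  · omega
  · exact a3 b3

lemma isA_iff_mem {i : ℕ} (h1 : 1 ≤ i) (h2 : i ≤ n) : isA n T i ↔ i ∈ T := by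
  unfold isA
  constructor
  · rintro (⟨_,_,h⟩|⟨h,_⟩)
    · exact h
    · omega
  · intro h; exact Or.inl ⟨h1, h2, h⟩

lemma isB_iff_low {i : ℕ} (h1 : 1 ≤ i) (h2 : i ≤ n) :
    isB n T i ↔ (i ∉ T ∧ 0 < lev T (i-1)) := by
  unfold isB
  constructor
  · rintro (⟨_,_,h,h'⟩|⟨h,_⟩)
    · exact ⟨h,h'⟩
    · omega
  · rintro ⟨h,h'⟩; exact Or.inl ⟨h1, h2, h, h'⟩

lemma isA_mirror {i : ℕ} (h1 : 1 ≤ i) (h2 : i ≤ 2*n) :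
    isA n T i ↔ isB n T (2*n+1-i) := by
  rcases le_or_gt i n with h | h
  · rw [isA_iff_mem h1 h]
    unfold isB
    constructor
    · intro hm
      right
      refine ⟨by omega, by omega, ?_⟩
      rwa [show 2*n+1-(2*n+1-i) = i by omega]
    · rintro (⟨c1,c2,_⟩|⟨c1,c2,c3⟩)
      · omega
      · rwa [show 2*n+1-(2*n+1-i) = i by omega] at c3
  · unfold isA isB
    constructor
    · rintro (⟨a1,a2,_⟩|⟨a1,a2,a3,a4⟩)
      · omega
      · left
        refine ⟨by omega, by omega, a3, ?_⟩
        rwa [show 2*n+1-i-1 = 2*n-i by omega]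
    · rintro (⟨c1,c2,c3,c4⟩|⟨c1,c2,_⟩)
      · right
        refine ⟨h, h2, c3, ?_⟩
        rwa [show 2*n+1-i-1 = 2*n-i by omega] at c4
      · omega

lemma isB_mirror {i : ℕ} (h1 : 1 ≤ i) (h2 : i ≤ 2*n) :
    isB n T i ↔ isA n T (2*n+1-i) := by
  have := isA_mirror (n := n) (T := T) (i := 2*n+1-i) (by omega) (by omega)
  rw [show 2*n+1-(2*n+1-i) = i by omega] at this
  exact this.symm

lemma lev_count {i : ℕ} (h : i ≤ n) :
    cnt (isA n T) i = cnt (isB n T) i + lev T i := by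
  induction i with
  | zero => simp [cnt_zero, lev]
  | succ j ih =>
    have hj : j ≤ n := by omega
    have ihj := ih hj
    by_cases hm : (j+1) ∈ T
    · have hA : isA n T (j+1) := Or.inl ⟨by omega, h, hm⟩
      have hB : ¬ isB n T (j+1) := fun hB => isA_isB_disjoint hA hB
      rw [cnt_succ_of _ hA, cnt_succ_of_not _ hB]
      simp only [lev, if_pos hm]
      omega
    · have hA : ¬ isA n T (j+1) := by
        rintro (⟨_,_,h3⟩|⟨h3,_⟩)
        · exact hm h3
        · omega
      by_cases hl : 0 < lev T j
      · have hB : isB n T (j+1) := Or.inl ⟨by omega, h, hm, by simpa using hl⟩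
        rw [cnt_succ_of_not _ hA, cnt_succ_of _ hB]
        simp only [lev, if_neg hm]
        omega
      · have hB : ¬ isB n T (j+1) := by
          rintro (⟨_,_,_,h4⟩|⟨h3,_⟩)
          · simp only [Nat.add_sub_cancel] at h4; omega
          · omega
        rw [cnt_succ_of_not _ hA, cnt_succ_of_not _ hB]
        simp only [lev, if_neg hm]
        omega

lemma mirror_count {P Q : ℕ → Prop} (hm : ∀ i, 1 ≤ i → i ≤ 2*n → (P i ↔ Q (2*n+1-i)))
    {j : ℕ} (hj : j ≤ 2*n) :
    ((Finset.Ioc (2*n-j) (2*n)).filter P).card = ((Finset.Icc 1 j).filter Q).card := by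
  apply Finset.card_bij (fun x _ => 2*n+1-x)
  · intro x hx
    simp only [Finset.mem_filter, Finset.mem_Ioc] at hx
    simp only [Finset.mem_filter, Finset.mem_Icc]
    refine ⟨⟨by omega, by omega⟩, ?_⟩
    exact (hm x (by omega) (by omega)).mp hx.2
  · intro x hx y hy hxy
    simp only [Finset.mem_filter, Finset.mem_Ioc] at hx hy
    omega
  · intro y hy
    simp only [Finset.mem_filter, Finset.mem_Icc] at hy
    refine ⟨2*n+1-y, ?_, by omega⟩
    simp only [Finset.mem_filter, Finset.mem_Ioc]
    refine ⟨⟨by omega, by omega⟩, ?_⟩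
    rw [hm (2*n+1-y) (by omega) (by omega), show 2*n+1-(2*n+1-y) = y by omega]
    exact hy.2

lemma flipA {j : ℕ} (hj : j ≤ 2*n) :
    cnt (isA n T) (2*n) = cnt (isA n T) (2*n-j) + cnt (isB n T) j := by
  rw [cnt_split (isA n T) (show 2*n-j ≤ 2*n by omega)]
  congr 1
  exact mirror_count (fun i h1 h2 => isA_mirror h1 h2) hj

lemma flipB {j : ℕ} (hj : j ≤ 2*n) :
    cnt (isB n T) (2*n) = cnt (isB n T) (2*n-j) + cnt (isA n T) j := by
  rw [cnt_split (isB n T) (show 2*n-j ≤ 2*n by omega)]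
  congr 1
  exact mirror_count (fun i h1 h2 => isB_mirror h1 h2) hj

lemma totalB : cnt (isB n T) (2*n) = cnt (isA n T) (2*n) := by
  have := flipB (n := n) (T := T) (j := 2*n) (le_refl _)
  simpa [cnt_zero] using this

lemma ballot {i : ℕ} (h : i ≤ 2*n) : cnt (isB n T) i ≤ cnt (isA n T) i := by
  rcases le_or_gt i n with h' | h'
  · have := lev_count (n := n) (T := T) (i := i) h'
    omega
  · have f1 := flipA (n := n) (T := T) (j := i) h
    have f2 := flipB (n := n) (T := T) (j := i) h
    have f3 : 2*n - i ≤ n := by omega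
    have := lev_count (n := n) (T := T) (i := 2*n-i) f3
    have := totalB (n := n) (T := T)
    omega

/-! ### The matching function -/

noncomputable def ff (n : ℕ) (T : Finset ℕ) (i : ℕ) : ℕ :=
  if isA n T i then pos (isB n T) (cnt (isA n T) i)
  else if isB n T i then pos (isA n T) (cnt (isB n T) i)
  else i

lemma cnt_isA_le : ∀ {i : ℕ}, cnt (isA n T) i ≤ cnt (isA n T) (2*n) := by
  intro i
  rcases le_or_gt i (2*n) with h | h
  · exact cnt_mono _ h
  · rw [cnt_stable (fun j hj => (isA_bounds hj).2) (le_of_lt h)]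

lemma cnt_isB_le : ∀ {i : ℕ}, cnt (isB n T) i ≤ cnt (isB n T) (2*n) := by
  intro i
  rcases le_or_gt i (2*n) with h | h
  · exact cnt_mono _ h
  · rw [cnt_stable (fun j hj => (isB_bounds hj).2) (le_of_lt h)]

lemma cnt_succ_A {i : ℕ} (h : isA n T i) :
    cnt (isA n T) i = cnt (isA n T) (i-1) + 1 := by
  have h1 : 1 ≤ i := (isA_bounds h).1
  have := cnt_succ_of (isA n T) (i := i-1) (by rwa [show i-1+1 = i by omega])
  rwa [show i-1+1 = i by omega] at this

lemma cnt_succ_B {i : ℕ} (h : isB n T i) :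
    cnt (isB n T) i = cnt (isB n T) (i-1) + 1 := by
  have h1 : 1 ≤ i := (isB_bounds h).1
  have := cnt_succ_of (isB n T) (i := i-1) (by rwa [show i-1+1 = i by omega])
  rwa [show i-1+1 = i by omega] at this

lemma hne_A {k : ℕ} (hk : k ≤ cnt (isA n T) (2*n)) : ∃ j, k ≤ cnt (isA n T) j := ⟨2*n, hk⟩

lemma hne_B {k : ℕ} (hk : k ≤ cnt (isA n T) (2*n)) : ∃ j, k ≤ cnt (isB n T) j :=
  ⟨2*n, by rw [totalB]; exact hk⟩

lemma pa_spec {k : ℕ} (hk1 : 1 ≤ k) (hk2 : k ≤ cnt (isA n T) (2*n)) :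
    isA n T (pos (isA n T) k) ∧ cnt (isA n T) (pos (isA n T) k) = k := by
  have := pos_spec hk1 (hne_A hk2)
  exact ⟨this.1, this.2.1⟩

lemma pb_spec {k : ℕ} (hk1 : 1 ≤ k) (hk2 : k ≤ cnt (isA n T) (2*n)) :
    isB n T (pos (isB n T) k) ∧ cnt (isB n T) (pos (isB n T) k) = k := by
  have := pos_spec hk1 (hne_B hk2)
  exact ⟨this.1, this.2.1⟩

lemma pa_cnt {j : ℕ} (h : isA n T j) : pos (isA n T) (cnt (isA n T) j) = j :=
  pos_cnt (isA_bounds h).1 h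

lemma pb_cnt {j : ℕ} (h : isB n T j) : pos (isB n T) (cnt (isB n T) j) = j :=
  pos_cnt (isB_bounds h).1 h

lemma cnt_A_pos {i : ℕ} (h : isA n T i) :
    1 ≤ cnt (isA n T) i ∧ cnt (isA n T) i ≤ cnt (isA n T) (2*n) := by
  have := cnt_succ_A h
  exact ⟨by omega, cnt_isA_le⟩

lemma cnt_B_pos {i : ℕ} (h : isB n T i) :
    1 ≤ cnt (isB n T) i ∧ cnt (isB n T) i ≤ cnt (isA n T) (2*n) := by
  have := cnt_succ_B h
  have h2 := cnt_isB_le (n := n) (T := T) (i := i)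
  rw [totalB] at h2
  exact ⟨by omega, h2⟩

lemma pa_lt_pb {k : ℕ} (hk1 : 1 ≤ k) (hk2 : k ≤ cnt (isA n T) (2*n)) :
    pos (isA n T) k < pos (isB n T) k := by
  obtain ⟨hb, hcb⟩ := pb_spec hk1 hk2
  have hble : pos (isB n T) k ≤ 2*n := (isB_bounds hb).2
  have h1 : k ≤ cnt (isA n T) (pos (isB n T) k) :=
    hcb.symm.le.trans (ballot (n := n) (T := T) hble)
  have h2 : pos (isA n T) k ≤ pos (isB n T) k := (pos_le_iff (hne_A hk2) _).mpr h1
  rcases lt_or_eq_of_le h2 with h | h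
  · exact h
  · exfalso
    obtain ⟨ha, _⟩ := pa_spec hk1 hk2
    rw [h] at ha
    exact isA_isB_disjoint ha hb

lemma pa_mono {k k' : ℕ} (hk1 : 1 ≤ k) (hkk : k < k') (hk2 : k' ≤ cnt (isA n T) (2*n)) :
    pos (isA n T) k < pos (isA n T) k' := by
  by_contra h
  push_neg at h
  have h1 : k' ≤ cnt (isA n T) (pos (isA n T) k) :=
    le_trans ((pos_le_iff (hne_A hk2) _).mp h) (le_refl _)
  obtain ⟨_, hc⟩ := pa_spec (n := n) (T := T) (k := k) hk1 (by omega)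
  omega

lemma pb_mono {k k' : ℕ} (hk1 : 1 ≤ k) (hkk : k < k') (hk2 : k' ≤ cnt (isA n T) (2*n)) :
    pos (isB n T) k < pos (isB n T) k' := by
  by_contra h
  push_neg at h
  have h1 : k' ≤ cnt (isB n T) (pos (isB n T) k) :=
    le_trans ((pos_le_iff (hne_B hk2) _).mp h) (le_refl _)
  obtain ⟨_, hc⟩ := pb_spec (n := n) (T := T) (k := k) hk1 (by omega)
  omega

lemma ff_A {i : ℕ} (h : isA n T i) : ff n T i = pos (isB n T) (cnt (isA n T) i) := by
  simp [ff, h]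

lemma ff_B {i : ℕ} (h : isB n T i) : ff n T i = pos (isA n T) (cnt (isB n T) i) := by
  have : ¬ isA n T i := fun h' => isA_isB_disjoint h' h
  simp [ff, h, this]

lemma ff_F {i : ℕ} (h1 : ¬ isA n T i) (h2 : ¬ isB n T i) : ff n T i = i := by
  simp [ff, h1, h2]

lemma ff_gt_A {i : ℕ} (h : isA n T i) : i < ff n T i := by
  rw [ff_A h]
  have ⟨hk1, hk2⟩ := cnt_A_pos h
  have := pa_lt_pb hk1 hk2
  rwa [pa_cnt h] at this

lemma ff_lt_B {i : ℕ} (h : isB n T i) : ff n T i < i := by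
  rw [ff_B h]
  have ⟨hk1, hk2⟩ := cnt_B_pos h
  have := pa_lt_pb hk1 hk2
  rwa [pb_cnt h] at this

lemma ff_isB_of_A {i : ℕ} (h : isA n T i) : isB n T (ff n T i) ∧
    cnt (isB n T) (ff n T i) = cnt (isA n T) i := by
  rw [ff_A h]
  have ⟨hk1, hk2⟩ := cnt_A_pos h
  exact pb_spec hk1 hk2

lemma ff_isA_of_B {i : ℕ} (h : isB n T i) : isA n T (ff n T i) ∧
    cnt (isA n T) (ff n T i) = cnt (isB n T) i := by
  rw [ff_B h]
  have ⟨hk1, hk2⟩ := cnt_B_pos h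
  exact pa_spec hk1 hk2

lemma ff_invol (i : ℕ) : ff n T (ff n T i) = i := by
  by_cases hA : isA n T i
  · obtain ⟨hb, hc⟩ := ff_isB_of_A hA
    rw [ff_B hb, hc, pa_cnt hA]
  · by_cases hB : isB n T i
    · obtain ⟨ha, hc⟩ := ff_isA_of_B hB
      rw [ff_A ha, hc, pb_cnt hB]
    · rw [ff_F hA hB, ff_F hA hB]

lemma ff_bounds {i : ℕ} (h1 : 1 ≤ i) (h2 : i ≤ 2*n) : 1 ≤ ff n T i ∧ ff n T i ≤ 2*n := by
  by_cases hA : isA n T i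
  · exact isB_bounds (ff_isB_of_A hA).1
  · by_cases hB : isB n T i
    · exact isA_bounds (ff_isA_of_B hB).1
    · rw [ff_F hA hB]; exact ⟨h1, h2⟩

lemma ff_le_self {i : ℕ} (h : ¬ isA n T i) : ff n T i ≤ i := by
  by_cases hB : isB n T i
  · exact le_of_lt (ff_lt_B hB)
  · rw [ff_F h hB]

lemma F_level {i : ℕ} (h1 : 1 ≤ i) (h2 : i ≤ 2*n) (hA : ¬ isA n T i) (hB : ¬ isB n T i) :
    cnt (isA n T) i = cnt (isB n T) i := by
  rcases le_or_gt i n with h | h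
  · have hm : i ∉ T := fun hm => hA ((isA_iff_mem h1 h).mpr hm)
    have hl : ¬ (0 < lev T (i-1)) := fun hl => hB ((isB_iff_low h1 h).mpr ⟨hm, hl⟩)
    have hlev : lev T i = 0 := by
      have : lev T (i-1+1) = if (i-1+1) ∈ T then lev T (i-1) + 1 else lev T (i-1) - 1 := rfl
      rw [show i-1+1 = i by omega] at this
      rw [this, if_neg hm]
      omega
    have := lev_count (n := n) (T := T) (i := i) h
    omega
  · have hj1 : 1 ≤ 2*n+1-i := by omega
    have hj2 : 2*n+1-i ≤ n := by omega
    have hmi : 2*n+1-(2*n+1-i) = i := by omega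
    have hAj : ¬ isA n T (2*n+1-i) := by
      intro hc
      have := (isA_mirror hj1 (by omega)).mp hc
      rw [hmi] at this
      exact hB this
    have hBj : ¬ isB n T (2*n+1-i) := by
      intro hc
      have := (isB_mirror hj1 (by omega)).mp hc
      rw [hmi] at this
      exact hA this
    have hm : (2*n+1-i) ∉ T := fun hc => hAj ((isA_iff_mem hj1 hj2).mpr hc)
    have hl : ¬ (0 < lev T (2*n+1-i-1)) := fun hc => hBj ((isB_iff_low hj1 hj2).mpr ⟨hm, hc⟩)
    have hlev : lev T (2*n-i) = 0 := by
      rw [show 2*n-i = 2*n+1-i-1 by omega]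
      omega
    have hlc := lev_count (n := n) (T := T) (i := 2*n-i) (by omega)
    have f1 := flipA (n := n) (T := T) (j := i) h2
    have f2 := flipB (n := n) (T := T) (j := i) h2
    have ht := totalB (n := n) (T := T)
    omega

lemma incrA {i j : ℕ} (hi : isA n T i) (hj : isA n T j) (hij : i < j) :
    ff n T i < ff n T j := by
  rw [ff_A hi, ff_A hj]
  have h1 : cnt (isA n T) i < cnt (isA n T) j := by
    have hs := cnt_succ_A hj
    have : cnt (isA n T) i ≤ cnt (isA n T) (j-1) := cnt_mono _ (by omega)
    omega
  exact pb_mono (cnt_A_pos hi).1 h1 (cnt_A_pos hj).2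

lemma incr_nonA {i j : ℕ} (h1 : 1 ≤ i) (hij : i < j) (h2 : j ≤ 2*n)
    (hi : ¬ isA n T i) (hj : ¬ isA n T j) : ff n T i < ff n T j := by
  by_cases hBj : isB n T j
  · have hcj : cnt (isB n T) (i) < cnt (isB n T) j := by
      have hs := cnt_succ_B hBj
      have : cnt (isB n T) i ≤ cnt (isB n T) (j-1) := cnt_mono _ (by omega)
      omega
    by_cases hBi : isB n T i
    · rw [ff_B hBi, ff_B hBj]
      exact pa_mono (cnt_B_pos hBi).1 hcj (cnt_B_pos hBj).2
    · rw [ff_F hi hBi, ff_B hBj]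
      have hFl := F_level h1 (by omega) hi hBi
      rw [lt_pos_iff (hne_A (cnt_B_pos hBj).2)]
      omega
  · rw [ff_F hj hBj]
    calc ff n T i ≤ i := ff_le_self hi
    _ < j := hij

lemma mirror_ff_A {i : ℕ} (h2 : i ≤ 2*n) (hA : isA n T i) :
    ff n T (2*n+1-i) = 2*n+1 - ff n T i := by
  have h1 : 1 ≤ i := (isA_bounds hA).1
  have hBj : isB n T (2*n+1-i) := (isA_mirror h1 h2).mp hA
  have hk := cnt_A_pos hA
  have hsA := cnt_succ_A hA
  -- cnt B at mirror
  have f1 := flipA (n := n) (T := T) (j := 2*n+1-i) (by omega)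
  rw [show 2*n-(2*n+1-i) = i-1 by omega] at f1
  have hcBj : cnt (isB n T) (2*n+1-i) + cnt (isA n T) i
      = cnt (isA n T) (2*n) + 1 := by omega
  -- the partner
  obtain ⟨hbq, hcq⟩ := ff_isB_of_A hA
  have hq1 : 1 ≤ ff n T i := (isB_bounds hbq).1
  have hq2 : ff n T i ≤ 2*n := (isB_bounds hbq).2
  have haq' : isA n T (2*n+1-ff n T i) := (isB_mirror hq1 hq2).mp hbq
  have hsB := cnt_succ_B hbq
  have f2 := flipB (n := n) (T := T) (j := 2*n+1-ff n T i) (by omega)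
  rw [show 2*n-(2*n+1-ff n T i) = ff n T i - 1 by omega] at f2
  have ht := totalB (n := n) (T := T)
  have hcq' : cnt (isA n T) (2*n+1-ff n T i) = cnt (isB n T) (2*n+1-i) := by omega
  rw [ff_B hBj, ← hcq', pa_cnt haq']

lemma mirror_ff {i : ℕ} (h1 : 1 ≤ i) (h2 : i ≤ 2*n) :
    ff n T (2*n+1-i) = 2*n+1 - ff n T i := by
  by_cases hA : isA n T i
  · exact mirror_ff_A h2 hA
  · by_cases hB : isB n T i
    · have hA' : isA n T (2*n+1-i) := (isB_mirror h1 h2).mp hB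
      have := mirror_ff_A (n := n) (T := T) (i := 2*n+1-i) (by omega) hA'
      rw [show 2*n+1-(2*n+1-i) = i by omega] at this
      have hb1 := ff_bounds (n := n) (T := T) h1 h2
      have hb2 := ff_bounds (n := n) (T := T) (i := 2*n+1-i) (by omega) (by omega)
      omega
    · have hAj : ¬ isA n T (2*n+1-i) := by
        intro hc
        have := (isA_mirror (i := 2*n+1-i) (by omega) (by omega)).mp hc
        rw [show 2*n+1-(2*n+1-i) = i by omega] at this
        exact hB this
      have hBj : ¬ isB n T (2*n+1-i) := by
        intro hc
        have := (isB_mirror (i := 2*n+1-i) (by omega) (by omega)).mp hc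
        rw [show 2*n+1-(2*n+1-i) = i by omega] at this
        exact hA this
      rw [ff_F hAj hBj, ff_F hA hB]

lemma no321 {p q r : ℕ} (hp : 1 ≤ p) (hpq : p < q) (hqr : q < r) (hr : r ≤ 2*n)
    (hd1 : ff n T r < ff n T q) (hd2 : ff n T q < ff n T p) : False := by
  by_cases hA : isA n T p <;> by_cases hB : isA n T q <;> by_cases hC : isA n T r
  · exact absurd (incrA hA hB hpq) (by omega)
  · exact absurd (incrA hA hB hpq) (by omega)
  · exact absurd (incrA hA hC (by omega)) (by omega)
  · exact absurd (incr_nonA (by omega) hqr hr hB hC) (by omega)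
  · exact absurd (incrA hB hC hqr) (by omega)
  · exact absurd (incr_nonA hp (by omega) hr hA hC) (by omega)
  · exact absurd (incr_nonA hp hpq (by omega) hA hB) (by omega)
  · exact absurd (incr_nonA hp hpq (by omega) hA hB) (by omega)

section WithHT
variable (hT : T ⊆ Finset.Icc 1 n)
include hT

lemma mem_T_bounds {i : ℕ} (h : i ∈ T) : 1 ≤ i ∧ i ≤ n := by
  have := hT h
  simpa [Finset.mem_Icc] using this

omit hT in
lemma exc_iff {i : ℕ} (h1 : 1 ≤ i) (h2 : i ≤ n) : i < ff n T i ↔ i ∈ T := by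
  constructor
  · intro h
    by_contra hm
    have hA : ¬ isA n T i := fun hc => hm ((isA_iff_mem h1 h2).mp hc)
    have := ff_le_self hA
    omega
  · intro hm
    exact ff_gt_A ((isA_iff_mem h1 h2).mpr hm)

lemma desc_iff {i : ℕ} (h1 : 1 ≤ i) (h2 : i ≤ n) :
    ff n T (i+1) < ff n T i ↔ (i ∈ T ∧ (i+1) ∉ T) := by
  have hn1 : 1 ≤ n := by omega
  by_cases hmi : i ∈ T
  · have hA : isA n T i := (isA_iff_mem h1 h2).mpr hmi
    by_cases hmi1 : (i+1) ∈ T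
    · -- no descent, both in T
      have h2' : i + 1 ≤ n := (mem_T_bounds hT hmi1).2
      have hA1 : isA n T (i+1) := (isA_iff_mem (by omega) h2').mpr hmi1
      have := incrA hA hA1 (by omega)
      constructor
      · omega
      · rintro ⟨_, hc⟩; exact absurd hmi1 hc
    · -- descent
      have hB1 : isB n T (i+1) := by
        rcases Nat.lt_or_ge i n with h | h
        · apply (isB_iff_low (by omega) (by omega)).mpr
          refine ⟨hmi1, ?_⟩
          have : lev T (i-1+1) = if (i-1+1) ∈ T then lev T (i-1) + 1 else lev T (i-1) - 1 := rfl
          rw [show i-1+1 = i by omega] at this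
          rw [show i+1-1 = i by omega, this, if_pos hmi]
          omega
        · refine Or.inr ⟨by omega, by omega, ?_⟩
          rwa [show 2*n+1-(i+1) = i by omega]
      have hd1 := ff_lt_B hB1
      have hd2 := ff_gt_A hA
      exact ⟨fun _ => ⟨hmi, hmi1⟩, fun _ => by omega⟩
  · -- i ∉ T : no descent
    have hA : ¬ isA n T i := fun hc => hmi ((isA_iff_mem h1 h2).mp hc)
    have hnd : ff n T i < ff n T (i+1) := by
      by_cases hA1 : isA n T (i+1)
      · have := ff_gt_A hA1
        have := ff_le_self hA
        omega
      · exact incr_nonA h1 (by omega) (by omega) hA hA1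
    constructor
    · intro hc; omega
    · rintro ⟨hc, _⟩; exact absurd hc hmi

end WithHT

/-! ### The permutation attached to `T` -/

lemma ff_plus_bound {n : ℕ} {T : Finset ℕ} (x : Fin (2*n)) : ff n T (x.1+1) - 1 < 2*n := by
  have hb := ff_bounds (n := n) (T := T) (i := x.1+1) (by omega) (by have := x.2; omega)
  omega

noncomputable def permFun (n : ℕ) (T : Finset ℕ) (x : Fin (2*n)) : Fin (2*n) :=
  ⟨ff n T (x.1+1) - 1, ff_plus_bound x⟩

lemma permFun_invol (n : ℕ) (T : Finset ℕ) : Function.Involutive (permFun n T) := by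
  intro x
  have hb := ff_bounds (n := n) (T := T) (i := x.1+1) (by omega) (by have := x.2; omega)
  apply Fin.ext
  show ff n T (ff n T (x.1+1) - 1 + 1) - 1 = x.1
  rw [show ff n T (x.1+1) - 1 + 1 = ff n T (x.1+1) by omega, ff_invol]
  omega

noncomputable def permOf (n : ℕ) (T : Finset ℕ) : Equiv.Perm (Fin (2*n)) :=
  (permFun_invol n T).toPerm _

lemma permOf_coe {n : ℕ} {T : Finset ℕ} : ⇑(permOf n T) = permFun n T := rfl

lemma permOf_involutive {n : ℕ} {T : Finset ℕ} : Function.Involutive ⇑(permOf n T) := by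
  rw [permOf_coe]; exact permFun_invol n T

lemma permOf_apply {n : ℕ} {T : Finset ℕ} (x : Fin (2*n)) :
    (permOf n T x : ℕ) = ff n T (x.1+1) - 1 := rfl

lemma pval_eq {n : ℕ} (π : Equiv.Perm (Fin (2*n))) {i : ℕ} (h1 : 1 ≤ i) (h2 : i ≤ 2*n) :
    pval π i = (π ⟨i-1, by omega⟩ : ℕ) + 1 := by
  unfold pval
  rw [dif_pos (show i - 1 < 2*n by omega)]

lemma pval_permOf {n : ℕ} {T : Finset ℕ} {i : ℕ} (h1 : 1 ≤ i) (h2 : i ≤ 2*n) :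
    pval (permOf n T) i = ff n T i := by
  rw [pval_eq _ h1 h2, permOf_apply]
  have hb := ff_bounds (n := n) (T := T) (i := (i-1)+1) (by omega) (by omega)
  rw [show i-1+1 = i by omega] at hb ⊢
  omega

lemma pval_bounds {n : ℕ} (π : Equiv.Perm (Fin (2*n))) {i : ℕ} (h1 : 1 ≤ i) (h2 : i ≤ 2*n) :
    1 ≤ pval π i ∧ pval π i ≤ 2*n := by
  rw [pval_eq π h1 h2]
  have := (π ⟨i-1, by omega⟩).2
  omega

lemma permOf_centro {n : ℕ} {T : Finset ℕ} : Centro (permOf n T) := by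
  intro i hi
  simp only [Finset.mem_Icc] at hi
  rw [pval_permOf hi.1 hi.2, pval_permOf (by omega) (by omega)]
  have hb := ff_bounds (n := n) (T := T) (i := i) hi.1 hi.2
  have := mirror_ff (n := n) (T := T) (i := i) hi.1 hi.2
  omega

lemma permOf_avoids {n : ℕ} {T : Finset ℕ} : Avoids321 (permOf n T) := by
  rintro ⟨i, j, k, hij, hjk, h1, h2⟩
  have hbi := ff_bounds (n := n) (T := T) (i := i.1+1) (by omega) (by have := i.2; omega)
  have hbj := ff_bounds (n := n) (T := T) (i := j.1+1) (by omega) (by have := j.2; omega)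
  have hbk := ff_bounds (n := n) (T := T) (i := k.1+1) (by omega) (by have := k.2; omega)
  have hv1 : ff n T (k.1+1) < ff n T (j.1+1) := by
    have := h1
    rw [Fin.lt_iff_val_lt_val] at this
    rw [permOf_apply, permOf_apply] at this
    omega
  have hv2 : ff n T (j.1+1) < ff n T (i.1+1) := by
    have := h2
    rw [Fin.lt_iff_val_lt_val] at this
    rw [permOf_apply, permOf_apply] at this
    omega
  exact no321 (p := i.1+1) (q := j.1+1) (r := k.1+1) (by omega)
    (by have := Fin.lt_iff_val_lt_val.mp hij; omega)
    (by have := Fin.lt_iff_val_lt_val.mp hjk; omega)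
    (by have := k.2; omega) hv1 hv2

lemma permOf_mem {n : ℕ} {T : Finset ℕ} : permOf n T ∈ ICset n := by
  rw [ICset, Finset.mem_filter]
  exact ⟨Finset.mem_univ _, permOf_involutive, permOf_centro, permOf_avoids⟩

/-- recover `T` from the permutation -/
noncomputable def recover (n : ℕ) (π : Equiv.Perm (Fin (2*n))) : Finset ℕ :=
  (Finset.Icc 1 n).filter (fun i => i < pval π i)

lemma recover_permOf {n : ℕ} {T : Finset ℕ} (hT : T ⊆ Finset.Icc 1 n) :
    recover n (permOf n T) = T := by
  ext i
  rw [recover, Finset.mem_filter, Finset.mem_Icc]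
  constructor
  · rintro ⟨⟨h1, h2⟩, h3⟩
    rw [pval_permOf h1 (by omega)] at h3
    exact (exc_iff h1 h2).mp h3
  · intro hi
    obtain ⟨h1, h2⟩ := mem_T_bounds hT hi
    refine ⟨⟨h1, h2⟩, ?_⟩
    rw [pval_permOf h1 (by omega)]
    exact (exc_iff h1 h2).mpr hi

lemma desSet_permOf {n : ℕ} {T : Finset ℕ} (hT : T ⊆ Finset.Icc 1 n) :
    (DesSet (permOf n T)).filter (· ≤ n) = T.filter (fun i => (i+1) ∉ T) := by
  ext i
  rw [DesSet, Finset.mem_filter, Finset.mem_filter, Finset.mem_filter, Finset.mem_Ico]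
  constructor
  · rintro ⟨⟨⟨h1, h2⟩, h3⟩, h4⟩
    rw [pval_permOf h1 (by omega), pval_permOf (by omega) (by omega)] at h3
    exact (desc_iff hT h1 h4).mp h3
  · rintro ⟨hi, hi1⟩
    obtain ⟨h1, h2⟩ := mem_T_bounds hT hi
    have hd := (desc_iff hT h1 h2).mpr ⟨hi, hi1⟩
    refine ⟨⟨⟨h1, by omega⟩, ?_⟩, h2⟩
    rw [pval_permOf h1 (by omega), pval_permOf (by omega) (by omega)]
    exact hd

/-! ### Surjectivity: every element of `ICset` arises from the construction -/

section Surj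

variable {n : ℕ} {π : Equiv.Perm (Fin (2*n))}

lemma pval_eq' {n : ℕ} (π : Equiv.Perm (Fin (2*n))) {i : ℕ} (h : i - 1 < 2*n) :
    pval π i = (π ⟨i-1, h⟩ : ℕ) + 1 := dif_pos h

lemma g_invol (hInv : Function.Involutive ⇑π) {i : ℕ} (h1 : 1 ≤ i) (h2 : i ≤ 2*n) :
    pval π (pval π i) = i := by
  have hm : i - 1 < 2*n := by omega
  have hb := (π ⟨i-1, hm⟩).2
  have hm2 : (π ⟨i-1, hm⟩ : ℕ) + 1 - 1 < 2*n := by omega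
  rw [pval_eq' π hm, pval_eq' π hm2]
  have he : (⟨(π ⟨i-1, hm⟩ : ℕ) + 1 - 1, hm2⟩ : Fin (2*n)) = π ⟨i-1, hm⟩ := by
    apply Fin.ext; simp
  rw [he, hInv ⟨i-1, hm⟩]
  show i - 1 + 1 = i
  omega

lemma g_inj (hInv : Function.Involutive ⇑π) {i j : ℕ} (h1 : 1 ≤ i) (h2 : i ≤ 2*n)
    (h3 : 1 ≤ j) (h4 : j ≤ 2*n) (h : pval π i = pval π j) : i = j := by
  have := g_invol hInv h1 h2
  rw [h, g_invol hInv h3 h4] at this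
  omega

lemma g_no321 (hAv : Avoids321 π) {p q r : ℕ} (h1 : 1 ≤ p) (h2 : p < q) (h3 : q < r)
    (h4 : r ≤ 2*n) (h5 : pval π r < pval π q) (h6 : pval π q < pval π p) : False := by
  apply hAv
  have hp : p - 1 < 2*n := by omega
  have hq : q - 1 < 2*n := by omega
  have hr : r - 1 < 2*n := by omega
  rw [pval_eq' π hp] at h6
  rw [pval_eq' π hq] at h5 h6
  rw [pval_eq' π hr] at h5
  refine ⟨⟨p-1, hp⟩, ⟨q-1, hq⟩, ⟨r-1, hr⟩, ?_, ?_, ?_, ?_⟩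
  · rw [Fin.lt_iff_val_lt_val]; show p - 1 < q - 1; omega
  · rw [Fin.lt_iff_val_lt_val]; show q - 1 < r - 1; omega
  · rw [Fin.lt_iff_val_lt_val]; omega
  · rw [Fin.lt_iff_val_lt_val]; omega

lemma g_centro (hC : Centro π) {i : ℕ} (h1 : 1 ≤ i) (h2 : i ≤ 2*n) :
    pval π i + pval π (2*n+1-i) = 2*n+1 := by
  have := hC i (by rw [Finset.mem_Icc]; omega)
  convert this using 3 <;> omega

variable (hInv : Function.Involutive ⇑π) (hC : Centro π) (hAv : Avoids321 π)

lemma cnt_Ag {i : ℕ} (h : i ≤ n) :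
    cnt (fun j => j < pval π j) i = cnt (isA n (recover n π)) i := by
  apply cnt_congr
  intro j hj1 hj2
  rw [isA_iff_mem hj1 (by omega)]
  rw [recover, Finset.mem_filter, Finset.mem_Icc]
  constructor
  · intro h'; exact ⟨⟨hj1, by omega⟩, h'⟩
  · rintro ⟨_, h'⟩; exact h'

include hInv hAv in
lemma claim_fix {i : ℕ} (h1 : 1 ≤ i) (h2 : i ≤ 2*n) (hfix : pval π i = i) :
    cnt (fun j => j < pval π j) (i-1) = cnt (fun j => pval π j < j) (i-1) := by
  unfold cnt
  apply Finset.card_bij (fun x _ => pval π x)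
  · intro x hx
    simp only [Finset.mem_filter, Finset.mem_Icc] at hx ⊢
    obtain ⟨⟨hx1, hx2⟩, hx3⟩ := hx
    have hxb := pval_bounds π hx1 (by omega)
    have hinvx := g_invol hInv hx1 (by omega)
    have hne : pval π x ≠ i := by
      intro hc
      rw [hc, hfix] at hinvx
      omega
    have hlt : pval π x < i := by
      by_contra hge
      push_neg at hge
      have hgt : i < pval π x := by omega
      exact g_no321 hAv hx1 (by omega) hgt hxb.2
        (by rw [hinvx, hfix]; omega) (by rw [hfix]; omega)
    refine ⟨⟨by omega, by omega⟩, by omega⟩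
  · intro x hx y hy hxy
    simp only [Finset.mem_filter, Finset.mem_Icc] at hx hy
    exact g_inj hInv hx.1.1 (by omega) hy.1.1 (by omega) hxy
  · intro y hy
    simp only [Finset.mem_filter, Finset.mem_Icc] at hy
    obtain ⟨⟨hy1, hy2⟩, hy3⟩ := hy
    have hyb := pval_bounds π hy1 (by omega)
    refine ⟨pval π y, ?_, g_invol hInv hy1 (by omega)⟩
    simp only [Finset.mem_filter, Finset.mem_Icc]
    have := g_invol hInv hy1 (by omega)
    refine ⟨⟨by omega, by omega⟩, by omega⟩

include hInv in
lemma claim_def {i : ℕ} (h1 : 1 ≤ i) (h2 : i ≤ 2*n) (hdef : pval π i < i) :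
    cnt (fun j => pval π j < j) (i-1) < cnt (fun j => j < pval π j) (i-1) := by
  have hstep : cnt (fun j => pval π j < j) i
      = cnt (fun j => pval π j < j) (i-1) + 1 := by
    have := cnt_succ_of (fun j => pval π j < j) (i := i-1)
      (by rw [show i-1+1 = i by omega]; exact hdef)
    rwa [show i-1+1 = i by omega] at this
  have hle : cnt (fun j => pval π j < j) i ≤ cnt (fun j => j < pval π j) (i-1) := by
    unfold cnt
    apply Finset.card_le_card_of_injOn (fun y => pval π y)
    · intro y hy
      simp only [Finset.coe_filter, Finset.mem_coe, Set.mem_setOf_eq, Finset.mem_filter, Finset.mem_Icc] at hy ⊢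
      obtain ⟨⟨hy1, hy2⟩, hy3⟩ := hy
      have hyb := pval_bounds π hy1 (by omega)
      have := g_invol hInv hy1 (by omega)
      refine ⟨⟨by omega, by omega⟩, by omega⟩
    · intro x hx y hy hxy
      simp only [Finset.coe_filter, Set.mem_setOf_eq, Finset.mem_Icc] at hx hy
      exact g_inj hInv hx.1.1 (by omega) hy.1.1 (by omega) hxy
  omega

include hInv hC hAv in
lemma letters : ∀ i, 1 ≤ i → i ≤ 2*n →
    ((i < pval π i ↔ isA n (recover n π) i) ∧ (pval π i < i ↔ isB n (recover n π) i)) := by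
  intro i
  induction i using Nat.strong_induction_on with
  | _ i IH =>
  intro h1 h2
  rcases le_or_gt i n with hn | hn
  · -- lower half
    have hA_iff : (i < pval π i) ↔ isA n (recover n π) i := by
      rw [isA_iff_mem h1 hn, recover, Finset.mem_filter, Finset.mem_Icc]
      constructor
      · intro h'; exact ⟨⟨h1, hn⟩, h'⟩
      · rintro ⟨_, h'⟩; exact h'
    refine ⟨hA_iff, ?_⟩
    by_cases hm : i < pval π i
    · have hisA := hA_iff.mp hm
      constructor
      · intro h'; omega
      · intro h'; exact absurd (isA_isB_disjoint hisA h') id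
    · have hnA : ¬ isA n (recover n π) i := fun hc => hm (hA_iff.mpr hc)
      have hmem : i ∉ recover n π := by
        intro hc
        rw [recover, Finset.mem_filter] at hc
        exact hm hc.2
      have hBcnt : cnt (fun j => pval π j < j) (i-1) = cnt (isB n (recover n π)) (i-1) := by
        apply cnt_congr
        intro j hj1 hj2
        exact (IH j (by omega) hj1 (by omega)).2
      have hAcnt := cnt_Ag (n := n) (π := π) (i := i-1) (by omega)
      have hisB_iff : isB n (recover n π) i ↔
          cnt (isB n (recover n π)) (i-1) < cnt (isA n (recover n π)) (i-1) := by
        rw [isB_iff_low h1 hn]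
        have := lev_count (n := n) (T := recover n π) (i := i-1) (by omega)
        constructor
        · rintro ⟨_, hl⟩; omega
        · intro h'; exact ⟨hmem, by omega⟩
      constructor
      · intro hd
        rw [hisB_iff, ← hBcnt, ← hAcnt]
        exact claim_def hInv h1 h2 hd
      · intro hb
        by_contra hd
        push_neg at hd
        have hfix : pval π i = i := by omega
        have := claim_fix hInv hAv h1 h2 hfix
        rw [hisB_iff, ← hBcnt, ← hAcnt] at hb
        omega
  · -- upper half, use the mirror
    have hi' : 1 ≤ 2*n+1-i ∧ 2*n+1-i ≤ n := by omega
    have hcen := g_centro hC (i := 2*n+1-i) (by omega) (by omega)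
    rw [show 2*n+1-(2*n+1-i) = i by omega] at hcen
    have hb1 := pval_bounds π (i := 2*n+1-i) (by omega) (by omega)
    have hb2 := pval_bounds π h1 h2
    have hIH := IH (2*n+1-i) (by omega) hi'.1 (by omega)
    constructor
    · rw [show isA n (recover n π) i ↔ isB n (recover n π) (2*n+1-i) from isA_mirror h1 h2]
      rw [← hIH.2]
      omega
    · rw [show isB n (recover n π) i ↔ isA n (recover n π) (2*n+1-i) from isB_mirror h1 h2]
      rw [← hIH.1]
      omega

include hInv hC hAv in
lemma g_eq_ff_A {i : ℕ} (h1 : 1 ≤ i) (h2 : i ≤ 2*n) (hAg : i < pval π i) :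
    pval π i = ff n (recover n π) i := by
  set T := recover n π with hTdef
  have hisA : isA n T i := ((letters hInv hC hAv i h1 h2).1).mp hAg
  set j := pval π i with hj
  have hjb := pval_bounds π h1 h2
  have hinv := g_invol hInv h1 h2
  have hBgj : pval π j < j := by rw [← hj] at hinv; omega
  have hisBj : isB n T j := ((letters hInv hC hAv j (by omega) (by omega)).2).mp hBgj
  -- rank equality
  have hrank : cnt (fun y => pval π y < y) j = cnt (fun x => x < pval π x) i := by
    unfold cnt
    symm
    apply Finset.card_bij (fun x _ => pval π x)
    · intro x hx
      simp only [Finset.mem_filter, Finset.mem_Icc] at hx ⊢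
      obtain ⟨⟨hx1, hx2⟩, hx3⟩ := hx
      have hxb := pval_bounds π hx1 (by omega)
      have hinvx := g_invol hInv hx1 (by omega)
      have hle : pval π x ≤ j := by
        rcases eq_or_lt_of_le hx2 with he | hlt
        · rw [he]
        · by_contra hgt
          push_neg at hgt
          exact g_no321 hAv hx1 hlt (by omega) hxb.2
            (by rw [hinvx, ← hj]; omega) (by rw [← hj]; omega)
      exact ⟨⟨by omega, hle⟩, by omega⟩
    · intro x hx y hy hxy
      simp only [Finset.mem_filter, Finset.mem_Icc] at hx hy
      exact g_inj hInv hx.1.1 (by omega) hy.1.1 (by omega) hxy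
    · intro y hy
      simp only [Finset.mem_filter, Finset.mem_Icc] at hy
      obtain ⟨⟨hy1, hy2⟩, hy3⟩ := hy
      have hyb := pval_bounds π hy1 (by omega)
      have hinvy := g_invol hInv hy1 (by omega)
      refine ⟨pval π y, ?_, hinvy⟩
      simp only [Finset.mem_filter, Finset.mem_Icc]
      have hle : pval π y ≤ i := by
        rcases eq_or_lt_of_le hy2 with he | hlt
        · rw [he]; exact le_of_eq hinv
        · by_contra hgt
          push_neg at hgt
          exact g_no321 hAv h1 hgt hy3 (by omega)
            (by rw [hinvy]; omega) (by rw [← hj]; omega)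
      refine ⟨⟨by omega, hle⟩, by omega⟩
  -- translate counts to the abstract word
  have hcB : cnt (isB n T) j = cnt (fun y => pval π y < y) j := by
    symm; apply cnt_congr
    intro y hy1 hy2
    exact (letters hInv hC hAv y hy1 (by omega)).2
  have hcA : cnt (isA n T) i = cnt (fun x => x < pval π x) i := by
    symm; apply cnt_congr
    intro x hx1 hx2
    exact (letters hInv hC hAv x hx1 (by omega)).1
  have : cnt (isB n T) j = cnt (isA n T) i := by rw [hcB, hcA, hrank]
  rw [ff_A hisA, ← this, pb_cnt hisBj]

include hInv hC hAv in
lemma g_eq_ff {i : ℕ} (h1 : 1 ≤ i) (h2 : i ≤ 2*n) :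
    pval π i = ff n (recover n π) i := by
  rcases lt_trichotomy i (pval π i) with h | h | h
  · exact g_eq_ff_A hInv hC hAv h1 h2 h
  · rw [← h]
    have hnA : ¬ isA n (recover n π) i := fun hc =>
      by have := ((letters hInv hC hAv i h1 h2).1).mpr hc; omega
    have hnB : ¬ isB n (recover n π) i := fun hc =>
      by have := ((letters hInv hC hAv i h1 h2).2).mpr hc; omega
    rw [ff_F hnA hnB]
  · have hb := pval_bounds π h1 h2
    have hinv := g_invol hInv h1 h2
    have hA' : pval π i < pval π (pval π i) := by rw [hinv]; omega
    have := g_eq_ff_A hInv hC hAv (i := pval π i) (by omega) (by omega) hA'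
    rw [hinv] at this
    have hgoal : ff n (recover n π) i = pval π i := by
      conv_lhs => rw [this]
      exact ff_invol _
    exact hgoal.symm

include hInv hC hAv in
lemma surj_eq : π = permOf n (recover n π) := by
  apply Equiv.ext
  intro x
  apply Fin.ext
  have hx := x.2
  have h1 : (1 : ℕ) ≤ x.1 + 1 := by omega
  have h2 : x.1 + 1 ≤ 2*n := by omega
  have hm : x.1 + 1 - 1 < 2*n := by omega
  have he : (⟨x.1+1-1, hm⟩ : Fin (2*n)) = x := Fin.ext (by simp)
  have hg : pval π (x.1+1) = (π x : ℕ) + 1 := by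
    rw [pval_eq' π hm, he]
  have := g_eq_ff hInv hC hAv h1 h2
  rw [hg] at this
  show (π x : ℕ) = ff n (recover n π) (x.1+1) - 1
  omega

end Surj

/-! ### ICset as an image -/

lemma ICset_eq (n : ℕ) :
    ICset n = ((Finset.Icc 1 n).powerset).image (fun T => permOf n T) := by
  ext π
  rw [ICset, Finset.mem_filter, Finset.mem_image]
  constructor
  · rintro ⟨-, hInv, hC, hAv⟩
    exact ⟨recover n π, Finset.mem_powerset.mpr (Finset.filter_subset _ _),
      (surj_eq hInv hC hAv).symm⟩
  · rintro ⟨T, -, rfl⟩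
    have := permOf_mem (n := n) (T := T)
    rw [ICset, Finset.mem_filter] at this
    exact this

lemma runs_eq {n : ℕ} {T : Finset ℕ} (hT : T ⊆ Finset.Icc 1 n) :
    ((DesSet (permOf n T)).filter (· ≤ n)).card = (T.filter (fun i => (i+1) ∉ T)).card := by
  rw [desSet_permOf hT]

lemma sum_ICset {R : Type*} [CommRing R] (q : R) (n : ℕ) :
    ∑ π ∈ ICset n, q ^ ((DesSet π).filter (· ≤ n)).card
      = ∑ T ∈ (Finset.Icc 1 n).powerset, q ^ (T.filter (fun i => (i+1) ∉ T)).card := by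
  rw [ICset_eq, Finset.sum_image]
  · apply Finset.sum_congr rfl
    intro T hT
    rw [runs_eq (Finset.mem_powerset.mp hT)]
  · intro T hT T' hT' h
    have e1 := recover_permOf (Finset.mem_powerset.mp hT)
    have e2 := recover_permOf (Finset.mem_powerset.mp hT')
    rw [← e1, ← e2, show permOf n T = permOf n T' from h]

/-! ### Counting subsets by number of runs -/

noncomputable def runs (T : Finset ℕ) : ℕ := (T.filter (fun i => (i+1) ∉ T)).card

section Count
variable {R : Type*} [CommRing R]

noncomputable def Spoly (q : R) (n : ℕ) : R :=
  ∑ T ∈ (Finset.Icc 1 n).powerset, q ^ runs T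

noncomputable def Upoly (q : R) (n : ℕ) : R :=
  ∑ T ∈ (Finset.Icc 1 n).powerset, (if n ∈ T then q ^ runs T else 0)

lemma Icc_succ_insert (n : ℕ) : Finset.Icc 1 (n+1) = insert (n+1) (Finset.Icc 1 n) := by
  ext x; simp only [Finset.mem_Icc, Finset.mem_insert]; omega

lemma not_mem_succ {n : ℕ} {T : Finset ℕ} (hT : T ⊆ Finset.Icc 1 n) : (n+1) ∉ T := by
  intro hc
  have := hT hc
  rw [Finset.mem_Icc] at this
  omega

lemma runs_insert {n : ℕ} {T : Finset ℕ} (hT : T ⊆ Finset.Icc 1 n) :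
    runs (insert (n+1) T) = if n ∈ T then runs T else runs T + 1 := by
  have hbd : ∀ x ∈ T, 1 ≤ x ∧ x ≤ n := by
    intro x hx; have := hT hx; rwa [Finset.mem_Icc] at this
  unfold runs
  have h1 : (insert (n+1) T).filter (fun i => (i+1) ∉ insert (n+1) T)
      = insert (n+1) (T.filter (fun i => (i+1) ∉ T ∧ i ≠ n)) := by
    ext x
    simp only [Finset.mem_filter, Finset.mem_insert, not_or]
    constructor
    · rintro ⟨hx | hx, hP1, hP2⟩
      · exact Or.inl hx
      · exact Or.inr ⟨hx, hP2, by omega⟩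
    · rintro (rfl | ⟨hx, hP, hne⟩)
      · refine ⟨Or.inl rfl, by omega, fun hc => ?_⟩
        have := hbd _ hc; omega
      · exact ⟨Or.inr hx, by omega, hP⟩
  rw [h1, Finset.card_insert_of_notMem (by
    intro hc
    rw [Finset.mem_filter] at hc
    exact not_mem_succ hT hc.1)]
  by_cases hn : n ∈ T
  · rw [if_pos hn]
    have h2 : T.filter (fun i => (i+1) ∉ T ∧ i ≠ n)
        = (T.filter (fun i => (i+1) ∉ T)).erase n := by
      ext x
      simp only [Finset.mem_erase, Finset.mem_filter]
      tauto
    have hmem : n ∈ T.filter (fun i => (i+1) ∉ T) := by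
      rw [Finset.mem_filter]
      exact ⟨hn, fun hc => by have := hbd _ hc; omega⟩
    rw [h2, Finset.card_erase_of_mem hmem]
    have := Finset.card_pos.mpr ⟨n, hmem⟩
    omega
  · rw [if_neg hn]
    congr 2
    apply Finset.filter_congr
    intro x hx
    have := hbd _ hx
    simp only [ne_eq, and_iff_left_iff_imp]
    intro _ hc
    exact hn (hc ▸ hx)

lemma powerset_split (n : ℕ) :
    ((Finset.Icc 1 (n+1)).powerset) =
      (Finset.Icc 1 n).powerset ∪ ((Finset.Icc 1 n).powerset).image (insert (n+1)) := by
  rw [Icc_succ_insert, Finset.powerset_insert]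

lemma powerset_disj (n : ℕ) :
    Disjoint ((Finset.Icc 1 n).powerset)
      (((Finset.Icc 1 n).powerset).image (insert (n+1))) := by
  rw [Finset.disjoint_left]
  intro S hS hS'
  rw [Finset.mem_image] at hS'
  obtain ⟨T, hT, rfl⟩ := hS'
  exact not_mem_succ (Finset.mem_powerset.mp hS) (Finset.mem_insert_self _ _)

lemma insert_injOn (n : ℕ) : ∀ x ∈ (Finset.Icc 1 n).powerset, ∀ y ∈ (Finset.Icc 1 n).powerset,
    insert (n+1) x = insert (n+1) y → x = y := by
  intro x hx y hy h
  have hx' := not_mem_succ (Finset.mem_powerset.mp hx)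
  have hy' := not_mem_succ (Finset.mem_powerset.mp hy)
  rw [← Finset.erase_insert hx', ← Finset.erase_insert hy', h]

lemma Upoly_succ (q : R) (n : ℕ) :
    Upoly q (n+1) = Upoly q n + q * (Spoly q n - Upoly q n) := by
  unfold Upoly Spoly
  rw [powerset_split, Finset.sum_union (powerset_disj n), Finset.sum_image (insert_injOn n)]
  have hz : ∑ T ∈ (Finset.Icc 1 n).powerset, (if n+1 ∈ T then q ^ runs T else 0) = 0 := by
    apply Finset.sum_eq_zero
    intro T hT
    rw [if_neg (not_mem_succ (Finset.mem_powerset.mp hT))]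
  rw [hz, zero_add]
  have hstep : ∀ T ∈ (Finset.Icc 1 n).powerset,
      (if n+1 ∈ insert (n+1) T then q ^ runs (insert (n+1) T) else 0)
        = (if n ∈ T then q ^ runs T else 0) + q * (q ^ runs T - (if n ∈ T then q ^ runs T else 0)) := by
    intro T hT
    rw [if_pos (Finset.mem_insert_self _ _), runs_insert (Finset.mem_powerset.mp hT)]
    by_cases hn : n ∈ T
    · rw [if_pos hn, if_pos hn]
      ring
    · rw [if_neg hn, if_neg hn, pow_succ]
      ring
  rw [Finset.sum_congr rfl hstep]
  rw [Finset.sum_add_distrib]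
  congr 1
  rw [← Finset.mul_sum]
  congr 1
  rw [Finset.sum_sub_distrib]

lemma Spoly_succ (q : R) (n : ℕ) :
    Spoly q (n+1) = Spoly q n + Upoly q (n+1) := by
  have hU : Upoly q (n+1)
      = ∑ T ∈ (Finset.Icc 1 n).powerset, q ^ runs (insert (n+1) T) := by
    unfold Upoly
    rw [powerset_split, Finset.sum_union (powerset_disj n), Finset.sum_image (insert_injOn n)]
    have hz : ∑ T ∈ (Finset.Icc 1 n).powerset, (if n+1 ∈ T then q ^ runs T else 0) = 0 := by
      apply Finset.sum_eq_zero
      intro T hT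
      rw [if_neg (not_mem_succ (Finset.mem_powerset.mp hT))]
    rw [hz, zero_add]
    apply Finset.sum_congr rfl
    intro T hT
    rw [if_pos (Finset.mem_insert_self _ _)]
  rw [hU]
  unfold Spoly
  rw [powerset_split, Finset.sum_union (powerset_disj n), Finset.sum_image (insert_injOn n)]

noncomputable def Apoly (q : R) (n : ℕ) : R :=
  ∑ k ∈ Finset.range (n+2), ((n+1).choose (2*k) : R) * q^k

noncomputable def Bpoly (q : R) (n : ℕ) : R :=
  ∑ k ∈ Finset.range (n+2), (n.choose (2*k+1) : R) * q^(k+1)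

lemma sum_range_drop (f : ℕ → R) (m : ℕ) (hf : f m = 0) :
    ∑ k ∈ Finset.range (m+1), f k = ∑ k ∈ Finset.range m, f k := by
  rw [Finset.sum_range_succ, hf, add_zero]

lemma Apoly_succ (q : R) (n : ℕ) : Apoly q (n+1) = Apoly q n + Bpoly q (n+1) := by
  unfold Apoly Bpoly
  have hnn : n + 1 + 2 = (n+2)+1 := by norm_num
  have hA : ∑ k ∈ Finset.range (n+2), ((n+1).choose (2*k) : R) * q^k
      = ∑ k ∈ Finset.range ((n+2)+1), ((n+1).choose (2*k) : R) * q^k := by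
    rw [sum_range_drop _ (n+2) (by
      rw [Nat.choose_eq_zero_of_lt (by omega)]
      push_cast; ring)]
  have hB : ∑ k ∈ Finset.range (n+1+2), ((n+1).choose (2*k+1) : R) * q^(k+1)
      = ∑ k ∈ Finset.range (n+2), ((n+1).choose (2*k+1) : R) * q^(k+1) := by
    rw [hnn]
    rw [sum_range_drop _ (n+2) (by
      rw [Nat.choose_eq_zero_of_lt (by omega)]
      push_cast; ring)]
  rw [hA, hB, hnn]
  rw [Finset.sum_range_succ' (fun k => ((n+1+1).choose (2*k) : R) * q^k) (n+2)]
  rw [Finset.sum_range_succ' (fun k => ((n+1).choose (2*k) : R) * q^k) (n+2)]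
  simp only [Nat.mul_zero, Nat.choose_zero_right, Nat.cast_one, pow_zero, mul_one]
  have hpt : ∑ k ∈ Finset.range (n+2), ((n+1+1).choose (2*(k+1)) : R) * q^(k+1)
      = ∑ k ∈ Finset.range (n+2), (((n+1).choose (2*k+1) : R) * q^(k+1)
          + ((n+1).choose (2*(k+1)) : R) * q^(k+1)) := by
    apply Finset.sum_congr rfl
    intro k _
    have hp : (n+1+1).choose (2*(k+1)) = (n+1).choose (2*k+1) + (n+1).choose (2*(k+1)) := by
      rw [show 2*(k+1) = (2*k+1)+1 by ring]
      exact Nat.choose_succ_succ (n+1) (2*k+1)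
    rw [hp]
    push_cast
    ring
  rw [hpt, Finset.sum_add_distrib]
  ring

lemma Bpoly_succ (q : R) (n : ℕ) : Bpoly q (n+1) = Bpoly q n + q * (Apoly q n - Bpoly q n) := by
  have key : Bpoly q (n+1) + q * Bpoly q n = Bpoly q n + q * Apoly q n := by
    unfold Apoly Bpoly
    rw [show n+1+2 = (n+2)+1 by norm_num]
    rw [Finset.sum_range_succ' (fun k => ((n+1).choose (2*k+1) : R) * q^(k+1)) (n+2)]
    rw [Finset.mul_sum, Finset.mul_sum]
    have hBn : ∑ k ∈ Finset.range (n+2), (n.choose (2*k+1) : R) * q^(k+1)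
        = (∑ k ∈ Finset.range (n+1), (n.choose (2*(k+1)+1) : R) * q^(k+1+1))
            + (n.choose (2*0+1) : R) * q^(0+1) := by
      rw [Finset.sum_range_succ' (fun k => (n.choose (2*k+1) : R) * q^(k+1)) (n+1)]
    have hAn : ∑ k ∈ Finset.range (n+2), q * (((n+1).choose (2*k) : R) * q^k)
        = (∑ k ∈ Finset.range (n+1), q * (((n+1).choose (2*(k+1)) : R) * q^(k+1)))
            + q * (((n+1).choose (2*0) : R) * q^0) := by
      rw [Finset.sum_range_succ' (fun k => q * (((n+1).choose (2*k) : R) * q^k)) (n+1)]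
    rw [hBn, hAn]
    have e1 : ∑ k ∈ Finset.range (n+1), (n.choose (2*(k+1)+1) : R) * q^(k+1+1)
        = ∑ k ∈ Finset.range (n+2), (n.choose (2*(k+1)+1) : R) * q^(k+1+1) := by
      rw [sum_range_drop _ (n+1) (by
        rw [Nat.choose_eq_zero_of_lt (by omega)]
        push_cast; ring)]
    have e2 : ∑ k ∈ Finset.range (n+1), q * (((n+1).choose (2*(k+1)) : R) * q^(k+1))
        = ∑ k ∈ Finset.range (n+2), q * (((n+1).choose (2*(k+1)) : R) * q^(k+1)) := by
      rw [sum_range_drop _ (n+1) (by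
        rw [Nat.choose_eq_zero_of_lt (by omega)]
        push_cast; ring)]
    rw [e1, e2]
    -- combine LHS two sums pointwise and redistribute
    have hS : ∑ k ∈ Finset.range (n+2), (((n+1).choose (2*(k+1)+1) : R) * q^(k+1+1)
          + q * ((n.choose (2*k+1) : R) * q^(k+1)))
        = ∑ k ∈ Finset.range (n+2), ((n.choose (2*(k+1)+1) : R) * q^(k+1+1)
          + q * (((n+1).choose (2*(k+1)) : R) * q^(k+1))) := by
      apply Finset.sum_congr rfl
      intro k _
      have p1 : (n+1).choose (2*(k+1)+1) = n.choose (2*(k+1)) + n.choose (2*(k+1)+1) := by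
        rw [show 2*(k+1)+1 = (2*(k+1))+1 by ring]
        exact Nat.choose_succ_succ n (2*(k+1))
      have p2 : (n+1).choose (2*(k+1)) = n.choose (2*k+1) + n.choose (2*(k+1)) := by
        rw [show 2*(k+1) = (2*k+1)+1 by ring]
        exact Nat.choose_succ_succ n (2*k+1)
      rw [p1, p2]
      push_cast
      ring
    have lhs_eq : ∑ k ∈ Finset.range (n+2), ((n+1).choose (2*(k+1)+1) : R) * q^(k+1+1)
          + ∑ i ∈ Finset.range (n+2), q * ((n.choose (2*i+1) : R) * q^(i+1))
        = ∑ k ∈ Finset.range (n+2), ((n.choose (2*(k+1)+1) : R) * q^(k+1+1))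
          + ∑ k ∈ Finset.range (n+2), q * (((n+1).choose (2*(k+1)) : R) * q^(k+1)) := by
      rw [← Finset.sum_add_distrib, hS, Finset.sum_add_distrib]
    have hc1 : ((n+1).choose (2*0+1) : R) = (n : R) + 1 := by
      norm_num
    have hc2 : ((n).choose (2*0+1) : R) = (n : R) := by
      norm_num
    have hc3 : (((n+1).choose (2*0)) : R) = 1 := by
      norm_num
    rw [hc1, hc2, hc3]
    -- now pure ring manipulation with sums as atoms
    linear_combination lhs_eq
  linear_combination key

end Count


section Final
variable {R : Type*} [CommRing R]

lemma Spoly_zero (q : R) : Spoly q 0 = 1 := by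
  unfold Spoly
  rw [show Finset.Icc 1 0 = (∅ : Finset ℕ) by simp]
  rw [Finset.powerset_empty, Finset.sum_singleton]
  simp [runs]

lemma Upoly_zero (q : R) : Upoly q 0 = 0 := by
  unfold Upoly
  rw [show Finset.Icc 1 0 = (∅ : Finset ℕ) by simp]
  rw [Finset.powerset_empty, Finset.sum_singleton]
  simp

lemma Apoly_zero (q : R) : Apoly q 0 = 1 := by
  unfold Apoly
  rw [Finset.sum_range_succ, Finset.sum_range_succ]
  norm_num

lemma Bpoly_zero (q : R) : Bpoly q 0 = 0 := by
  unfold Bpoly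
  apply Finset.sum_eq_zero
  intro k _
  rw [Nat.choose_eq_zero_of_lt (by omega)]
  push_cast
  ring

lemma SU_eq (q : R) : ∀ n, Spoly q n = Apoly q n ∧ Upoly q n = Bpoly q n := by
  intro n
  induction n with
  | zero => rw [Spoly_zero, Upoly_zero, Apoly_zero, Bpoly_zero]; exact ⟨rfl, rfl⟩
  | succ m ih =>
    obtain ⟨hS, hU⟩ := ih
    have hU' : Upoly q (m+1) = Bpoly q (m+1) := by
      rw [Upoly_succ, Bpoly_succ, hS, hU]
    refine ⟨?_, hU'⟩
    rw [Spoly_succ, Apoly_succ, hS, hU']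

end Final

end ICProof

/-- `∑_{π ∈ I^C_{2n}(321)} q^{des^+(π)} = ∑_{k ≥ 0} C(n+1, 2k) q^k`. -/
theorem desPlus_generating_polynomial (n : ℕ) (R : Type*) [CommRing R] (q : R) :
    ∑ π ∈ ICset n, q ^ ((DesSet π).filter (· ≤ n)).card =
      ∑ k ∈ Finset.range (n + 2), ((n + 1).choose (2 * k) : R) * q ^ k := by
  rw [ICProof.sum_ICset q n]
  have h1 := (ICProof.SU_eq q n).1
  rw [ICProof.Spoly, ICProof.Apoly] at h1
  exact h1
end
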